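/- arXiv:1612.07623 — 5 statements merged into one kernel-verified Lean document; each statement's English description precedes it below -/
import Mathlib

section
/- Let K ∈ ℝ, N ∈ (1,∞), and let h be a CD(K,N) density on an interval I ⊂ ℝ which is not identically zero (hence h is strictly positive on the interior of I). Set g := h^{1/(N−1)}. If x is an interior point of I at which g has a second Peano derivative q, then q ≤ −(K/(N−1))·g(x); equivalently, at any interior point x where h is twice differentiable, (log h)″(x) + ((log h)′(x))²/(N−1) ≤ −K. -/
/-- The distortion coefficients `σ^{(t)}_{K,𝒩}(θ)`, valued in `[0,∞]`
(the value is `+∞` when `K > 0` and `θ·√(K/𝒩) ≥ π`). -/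
noncomputable def sigmaCoeff (K Np t θ : ℝ) : ENNReal :=
  if θ = 0 then ENNReal.ofReal t
  else if 0 < K then
    if θ * Real.sqrt (K / Np) < Real.pi then
      ENNReal.ofReal (Real.sin (t * (θ * Real.sqrt (K / Np))) / Real.sin (θ * Real.sqrt (K / Np)))
    else ⊤
  else if K = 0 then ENNReal.ofReal t
  else
    ENNReal.ofReal
      (Real.sinh (t * (θ * Real.sqrt (-K / Np))) / Real.sinh (θ * Real.sqrt (-K / Np)))

/-- `h` is a `CD(K,N)` density on the (interval) `I ⊆ ℝ`: it is nonnegative on `I` and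
`h(t·x₁+(1-t)·x₀)^{1/(N-1)} ≥ σ^{(t)}_{K,N-1}(|x₁-x₀|)·h(x₁)^{1/(N-1)}
  + σ^{(1-t)}_{K,N-1}(|x₁-x₀|)·h(x₀)^{1/(N-1)}` for all `x₀,x₁ ∈ I`, `t ∈ [0,1]`. -/
def IsCDDensity (K N : ℝ) (h : ℝ → ℝ) (I : Set ℝ) : Prop :=
  (∀ x ∈ I, 0 ≤ h x) ∧
  ∀ x₀ ∈ I, ∀ x₁ ∈ I, ∀ t ∈ Set.Icc (0:ℝ) 1,
    sigmaCoeff K (N - 1) t |x₁ - x₀| * ENNReal.ofReal (h x₁ ^ (1 / (N - 1)))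
        + sigmaCoeff K (N - 1) (1 - t) |x₁ - x₀| * ENNReal.ofReal (h x₀ ^ (1 / (N - 1)))
      ≤ ENNReal.ofReal (h (t * x₁ + (1 - t) * x₀) ^ (1 / (N - 1)))

/-- `g` has a second Peano derivative `q` at `τ₀`: it is differentiable at `τ₀` (with some
derivative `d`) and `g(τ₀+ε) = g(τ₀) + d·ε + q·ε²/2 + o(ε²)` as `ε → 0`. -/
def HasSecondPeanoDerivAt (g : ℝ → ℝ) (q : ℝ) (τ₀ : ℝ) : Prop :=
  ∃ d : ℝ, HasDerivAt g d τ₀ ∧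
    Asymptotics.IsLittleO (nhds (0 : ℝ))
      (fun ε : ℝ => g (τ₀ + ε) - g τ₀ - d * ε - q * ε ^ 2 / 2)
      (fun ε : ℝ => ε ^ 2)

open Real Filter Set Topology Asymptotics MeasureTheory

/-! ### Auxiliary limit lemmas -/

lemma s15_half_tendsto : Tendsto (fun t : ℝ => t/2) (nhdsWithin 0 {x | x ≠ 0}) (nhdsWithin 0 {x | x ≠ 0}) := by
  apply Filter.Tendsto.inf
  · have : Tendsto (fun t : ℝ => t/2) (nhds 0) (nhds (0/2)) := (tendsto_id (α := ℝ)).div_const 2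
    simpa using this
  · exact tendsto_principal_principal.mpr (fun t ht => by
      simp only [mem_setOf_eq] at *
      intro h; exact ht (by linarith [h]))

lemma s15_sin_div : Tendsto (fun t : ℝ => Real.sin t / t) (nhdsWithin 0 {x | x ≠ 0}) (nhds 1) := by
  have := hasDerivAt_iff_tendsto_slope.mp (Real.hasDerivAt_sin 0)
  rw [Real.cos_zero] at this
  refine this.congr' ?_
  filter_upwards [self_mem_nhdsWithin] with t ht
  simp [slope_def_field, Real.sin_zero]

lemma s15_sinh_div : Tendsto (fun t : ℝ => Real.sinh t / t) (nhdsWithin 0 {x | x ≠ 0}) (nhds 1) := by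
  have := hasDerivAt_iff_tendsto_slope.mp (Real.hasDerivAt_sinh 0)
  rw [Real.cosh_zero] at this
  refine this.congr' ?_
  filter_upwards [self_mem_nhdsWithin] with t ht
  simp [slope_def_field, Real.sinh_zero]

lemma s15_cos_lim : Tendsto (fun t : ℝ => (Real.cos t - 1)/t^2) (nhdsWithin 0 {x | x ≠ 0}) (nhds (-(1/2))) := by
  have h1 : Tendsto (fun t : ℝ => Real.sin (t/2) / (t/2)) (nhdsWithin 0 {x | x ≠ 0}) (nhds 1) :=
    s15_sin_div.comp s15_half_tendsto
  have h2 : Tendsto (fun t : ℝ => -(1/2) * (Real.sin (t/2)/(t/2))^2) (nhdsWithin 0 {x | x ≠ 0})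
      (nhds (-(1/2) * 1^2)) := (h1.pow 2).const_mul _
  rw [show (-(1/2) * 1^2 : ℝ) = -(1/2) by ring] at h2
  refine h2.congr' ?_
  filter_upwards [self_mem_nhdsWithin] with t (ht : t ≠ 0)
  have hc : Real.cos t - 1 = -2 * Real.sin (t/2)^2 := by
    have h1 : Real.cos (2 * (t/2)) = Real.cos (t/2)^2 - Real.sin (t/2)^2 := Real.cos_two_mul' _
    have h2 := Real.sin_sq_add_cos_sq (t/2)
    have h3 : (2:ℝ) * (t/2) = t := by ring
    rw [h3] at h1; nlinarith
  rw [hc]; field_simp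

lemma s15_cosh_lim : Tendsto (fun t : ℝ => (Real.cosh t - 1)/t^2) (nhdsWithin 0 {x | x ≠ 0}) (nhds (1/2)) := by
  have h1 : Tendsto (fun t : ℝ => Real.sinh (t/2) / (t/2)) (nhdsWithin 0 {x | x ≠ 0}) (nhds 1) :=
    s15_sinh_div.comp s15_half_tendsto
  have h2 : Tendsto (fun t : ℝ => (1/2) * (Real.sinh (t/2)/(t/2))^2) (nhdsWithin 0 {x | x ≠ 0})
      (nhds ((1/2) * 1^2)) := (h1.pow 2).const_mul _
  rw [show ((1/2) * 1^2 : ℝ) = 1/2 by ring] at h2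
  refine h2.congr' ?_
  filter_upwards [self_mem_nhdsWithin] with t (ht : t ≠ 0)
  have hc : Real.cosh t - 1 = 2 * Real.sinh (t/2)^2 := by
    have h1 : Real.cosh (2 * (t/2)) = Real.cosh (t/2)^2 + Real.sinh (t/2)^2 := Real.cosh_two_mul _
    have h2 := Real.cosh_sq (t/2)
    have h3 : (2:ℝ) * (t/2) = t := by ring
    rw [h3] at h1; nlinarith
  rw [hc]; field_simp

/-- The "cosine-type" profile governing the midpoint inequality. -/
noncomputable def s15c (K N ε : ℝ) : ℝ :=
  if 0 < K then Real.cos (ε * Real.sqrt (K/(N-1)))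
  else if K = 0 then 1 else Real.cosh (ε * Real.sqrt (-K/(N-1)))

lemma s15_mul_tendsto {l : ℝ} (hl : 0 < l) :
    Tendsto (fun ε : ℝ => ε * l) (nhdsWithin 0 (Set.Ioi 0)) (nhdsWithin 0 {x | x ≠ 0}) := by
  apply Filter.Tendsto.inf
  · have : Tendsto (fun ε : ℝ => ε * l) (nhds 0) (nhds (0 * l)) := (tendsto_id (α := ℝ)).mul_const l
    simpa using this
  · refine tendsto_principal_principal.mpr ?_
    intro ε (hε : 0 < ε)
    simp only [mem_setOf_eq]
    positivity

lemma s15_ccoef_tendsto {K N : ℝ} (hN : 1 < N) :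
    Tendsto (fun ε => (2 * s15c K N ε - 2)/ε^2) (nhdsWithin 0 (Set.Ioi 0)) (nhds (-(K/(N-1)))) := by
  have hN1 : (0:ℝ) < N - 1 := by linarith
  rcases lt_trichotomy 0 K with hK | hK | hK
  · set l := Real.sqrt (K/(N-1)) with hl
    have hl0 : 0 < l := Real.sqrt_pos.mpr (by positivity)
    have hlsq : l^2 = K/(N-1) := Real.sq_sqrt (by positivity)
    have h1 : Tendsto (fun ε : ℝ => 2*l^2 * ((Real.cos (ε*l) - 1)/(ε*l)^2)) (nhdsWithin 0 (Set.Ioi 0))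
        (nhds (2*l^2 * (-(1/2)))) := (s15_cos_lim.comp (s15_mul_tendsto hl0)).const_mul _
    have h2 : (2*l^2 * (-(1/2)) : ℝ) = -(K/(N-1)) := by rw [hlsq]; ring
    rw [h2] at h1
    refine h1.congr' ?_
    filter_upwards [self_mem_nhdsWithin] with ε (hε : 0 < ε)
    have : s15c K N ε = Real.cos (ε*l) := by simp [s15c, hK, hl]
    rw [this]; field_simp
  · have h0 : ∀ ε : ℝ, (2 * s15c K N ε - 2)/ε^2 = 0 := by
      intro ε; simp [s15c, ← hK]
    rw [show (-(K/(N-1)) : ℝ) = 0 by rw [← hK]; ring]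
    simp only [h0]
    exact tendsto_const_nhds
  · set l := Real.sqrt (-K/(N-1)) with hl
    have hl0 : 0 < l := Real.sqrt_pos.mpr (div_pos (by linarith) hN1)
    have hlsq : l^2 = -K/(N-1) := Real.sq_sqrt (le_of_lt (div_pos (by linarith) hN1))
    have h1 : Tendsto (fun ε : ℝ => 2*l^2 * ((Real.cosh (ε*l) - 1)/(ε*l)^2)) (nhdsWithin 0 (Set.Ioi 0))
        (nhds (2*l^2 * (1/2))) := (s15_cosh_lim.comp (s15_mul_tendsto hl0)).const_mul _
    have h2 : (2*l^2 * (1/2) : ℝ) = -(K/(N-1)) := by rw [hlsq]; ring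
    rw [h2] at h1
    refine h1.congr' ?_
    filter_upwards [self_mem_nhdsWithin] with ε (hε : 0 < ε)
    have : s15c K N ε = Real.cosh (ε*l) := by
      simp [s15c, hl, not_lt.mpr hK.le, hK.ne]
    rw [this]; field_simp

/-! ### The midpoint inequality -/

lemma s15_sigma_half {K N : ℝ} (hN : 1 < N) {ε : ℝ} (hε : 0 < ε)
    (hsm : 0 < K → ε * Real.sqrt (K/(N-1)) < Real.pi/2) :
    sigmaCoeff K (N-1) (1/2) (2*ε) = ENNReal.ofReal (1/(2 * s15c K N ε))
      ∧ 0 < s15c K N ε := by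
  have hθ : (2*ε : ℝ) ≠ 0 := by positivity
  rcases lt_trichotomy 0 K with hK | hK | hK
  · set l := Real.sqrt (K/(N-1)) with hl
    have hl0 : 0 < l := Real.sqrt_pos.mpr (div_pos hK (by linarith))
    have hεl : 0 < ε * l := by positivity
    have hεl2 : ε * l < Real.pi/2 := hsm hK
    have hcos : 0 < Real.cos (ε*l) :=
      Real.cos_pos_of_mem_Ioo ⟨by linarith [Real.pi_pos], hεl2⟩
    have hsin : 0 < Real.sin (ε*l) :=
      Real.sin_pos_of_pos_of_lt_pi hεl (by linarith [Real.pi_pos])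
    have harg : (2*ε) * l < Real.pi := by nlinarith
    have hc : s15c K N ε = Real.cos (ε*l) := by simp [s15c, hK, hl]
    constructor
    · rw [sigmaCoeff, if_neg hθ, if_pos hK, if_pos harg, hc]
      congr 1
      have h1 : (1/2 : ℝ) * (2*ε*l) = ε*l := by ring
      have h2 : (2*ε*l : ℝ) = 2*(ε*l) := by ring
      rw [h1, h2, Real.sin_two_mul]
      field_simp
    · rw [hc]; exact hcos
  · have hc : s15c K N ε = 1 := by simp [s15c, ← hK]
    refine ⟨?_, by rw [hc]; norm_num⟩
    rw [sigmaCoeff, if_neg hθ, if_neg (by rw [← hK]; exact lt_irrefl 0), if_pos hK.symm, hc]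
    norm_num
  · set l := Real.sqrt (-K/(N-1)) with hl
    have hl0 : 0 < l := Real.sqrt_pos.mpr (div_pos (by linarith) (by linarith))
    have hεl : 0 < ε * l := by positivity
    have hsinh : 0 < Real.sinh (ε*l) := by positivity
    have hcosh : 0 < Real.cosh (ε*l) := Real.cosh_pos _
    have hc : s15c K N ε = Real.cosh (ε*l) := by
      simp [s15c, hl, not_lt.mpr hK.le, hK.ne]
    constructor
    · rw [sigmaCoeff, if_neg hθ, if_neg (not_lt.mpr hK.le), if_neg hK.ne, hc]
      congr 1
      have h1 : (1/2 : ℝ) * (2*ε*l) = ε*l := by ring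
      have h2 : (2*ε*l : ℝ) = 2*(ε*l) := by ring
      rw [h1, h2, Real.sinh_two_mul]
      field_simp
    · rw [hc]; exact hcosh

lemma s15_extract {s s' a b e : ℝ} (hs : 0 ≤ s) (hs' : 0 ≤ s') (ha : 0 ≤ a) (hb : 0 ≤ b)
    (he : 0 ≤ e)
    (H : ENNReal.ofReal s * ENNReal.ofReal a + ENNReal.ofReal s' * ENNReal.ofReal b
      ≤ ENNReal.ofReal e) :
    s * a + s' * b ≤ e := by
  rw [← ENNReal.ofReal_mul hs, ← ENNReal.ofReal_mul hs',
    ← ENNReal.ofReal_add (by positivity) (by positivity)] at H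
  exact (ENNReal.ofReal_le_ofReal_iff he).mp H

lemma s15_interior {I : Set ℝ} {x : ℝ} (hx : x ∈ interior I) :
    ∃ r > 0, Set.Ioo (x-r) (x+r) ⊆ I := by
  have := mem_interior_iff_mem_nhds.mp hx
  rcases Metric.mem_nhds_iff.mp this with ⟨r, hr, hball⟩
  exact ⟨r, hr, by rw [← Real.ball_eq_Ioo]; exact hball⟩

lemma s15_midpoint {K N : ℝ} (hN : 1 < N) {I : Set ℝ} {h : ℝ → ℝ}
    (hCD : IsCDDensity K N h I) {x : ℝ} (hx : x ∈ interior I) :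
    ∀ᶠ ε in nhdsWithin (0:ℝ) (Set.Ioi 0),
      h (x+ε) ^ (1/(N-1)) + h (x-ε) ^ (1/(N-1)) ≤ 2 * s15c K N ε * h x ^ (1/(N-1)) := by
  obtain ⟨r, hr, hIoo⟩ := s15_interior hx
  set r2 : ℝ := if 0 < K then min r (Real.pi/(4 * Real.sqrt (K/(N-1)))) else r with hr2
  have hl0 : 0 < K → 0 < Real.sqrt (K/(N-1)) :=
    fun hK => Real.sqrt_pos.mpr (div_pos hK (by linarith))
  have hr2pos : 0 < r2 := by
    rw [hr2]; split_ifs with hK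
    · have := hl0 hK
      exact lt_min hr (div_pos Real.pi_pos (by positivity))
    · exact hr
  filter_upwards [Ioo_mem_nhdsGT_of_mem (Set.left_mem_Ico.mpr hr2pos)] with ε hε
  obtain ⟨hε0, hεr2⟩ := hε
  have hεr : ε < r := by
    rw [hr2] at hεr2; split_ifs at hεr2 with hK
    · exact lt_of_lt_of_le hεr2 (min_le_left _ _)
    · exact hεr2
  have hsm : 0 < K → ε * Real.sqrt (K/(N-1)) < Real.pi/2 := by
    intro hK
    have h1 : ε < Real.pi/(4 * Real.sqrt (K/(N-1))) := by
      rw [hr2] at hεr2; rw [if_pos hK] at hεr2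
      exact lt_of_lt_of_le hεr2 (min_le_right _ _)
    have h2 := hl0 hK
    have h2' : 0 < 4 * Real.sqrt (K/(N-1)) := by positivity
    rw [lt_div_iff₀ h2'] at h1
    rw [lt_div_iff₀ (by norm_num : (0:ℝ) < 2)]
    nlinarith
  have hxp : x + ε ∈ I := hIoo ⟨by linarith, by linarith⟩
  have hxm : x - ε ∈ I := hIoo ⟨by linarith, by linarith⟩
  have hxI : x ∈ I := interior_subset hx
  obtain ⟨hσ, hcpos⟩ := s15_sigma_half hN hε0 hsm
  have hcd := hCD.2 (x-ε) hxm (x+ε) hxp (1/2) ⟨by norm_num, by norm_num⟩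
  have habs : |x + ε - (x - ε)| = 2*ε := by
    rw [abs_of_pos (by linarith : (0:ℝ) < x + ε - (x - ε))]; ring
  rw [habs] at hcd
  have hmid : (1/2 : ℝ) * (x+ε) + (1 - 1/2) * (x-ε) = x := by ring
  rw [hmid] at hcd
  rw [show (1 - 1/2 : ℝ) = 1/2 by norm_num] at hcd
  rw [hσ] at hcd
  have hnn := hCD.1
  have key := s15_extract (by positivity) (by positivity)
    (Real.rpow_nonneg (hnn _ hxp) _) (Real.rpow_nonneg (hnn _ hxm) _)
    (Real.rpow_nonneg (hnn _ hxI) _) hcd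
  set a := h (x+ε) ^ (1/(N-1))
  set b := h (x-ε) ^ (1/(N-1))
  set e := h x ^ (1/(N-1))
  calc a + b = (2 * s15c K N ε) * (1/(2 * s15c K N ε) * a + 1/(2 * s15c K N ε) * b) := by
        field_simp
    _ ≤ (2 * s15c K N ε) * e := mul_le_mul_of_nonneg_left key (by positivity)
    _ = 2 * s15c K N ε * e := by ring

/-! ### Part 1: the Peano second-derivative inequality -/

lemma s15_peano_tendsto {g : ℝ → ℝ} {q x : ℝ} (hp : HasSecondPeanoDerivAt g q x) :
    Tendsto (fun ε => (g (x+ε) + g (x-ε) - 2 * g x)/ε^2) (nhdsWithin (0:ℝ) (Set.Ioi 0))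
      (nhds q) := by
  obtain ⟨d, _, ho⟩ := hp
  have t1 : Tendsto (fun ε : ℝ => (g (x+ε) - g x - d*ε - q*ε^2/2)/ε^2) (nhds 0) (nhds 0) :=
    ho.tendsto_div_nhds_zero
  have hneg : Tendsto (fun ε : ℝ => -ε) (nhds (0:ℝ)) (nhds (0:ℝ)) := by
    simpa using (tendsto_id (α := ℝ) (x := nhds (0:ℝ))).neg
  have t2 : Tendsto (fun ε : ℝ => (g (x + -ε) - g x - d*(-ε) - q*(-ε)^2/2)/(-ε)^2)
      (nhds 0) (nhds 0) := t1.comp hneg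
  have t3 : Tendsto (fun ε : ℝ =>
      (g (x+ε) - g x - d*ε - q*ε^2/2)/ε^2 +
      (g (x + -ε) - g x - d*(-ε) - q*(-ε)^2/2)/(-ε)^2 + q) (nhds 0) (nhds (0 + 0 + q)) :=
    (t1.add t2).add_const q
  rw [zero_add, zero_add] at t3
  refine (t3.mono_left nhdsWithin_le_nhds).congr' ?_
  filter_upwards [self_mem_nhdsWithin] with ε (hε : 0 < ε)
  have hx' : x + -ε = x - ε := by ring
  rw [hx']
  have hε2 : (ε:ℝ)^2 ≠ 0 := by positivity
  have hεn : ((-ε):ℝ)^2 = ε^2 := by ring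
  rw [hεn]
  field_simp
  ring

lemma s15_part1 {K N : ℝ} (hN : 1 < N) {I : Set ℝ} {h : ℝ → ℝ}
    (hCD : IsCDDensity K N h I) {x : ℝ} (hx : x ∈ interior I) {q : ℝ}
    (hp : HasSecondPeanoDerivAt (fun y => h y ^ (1/(N-1))) q x) :
    q ≤ -(K/(N-1)) * h x ^ (1/(N-1)) := by
  have hA := s15_peano_tendsto hp
  have hB : Tendsto (fun ε => ((2 * s15c K N ε - 2)/ε^2) * (h x ^ (1/(N-1))))
      (nhdsWithin (0:ℝ) (Set.Ioi 0)) (nhds (-(K/(N-1)) * h x ^ (1/(N-1)))) :=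
    (s15_ccoef_tendsto hN).mul_const _
  refine le_of_tendsto_of_tendsto hA hB ?_
  filter_upwards [s15_midpoint hN hCD hx, self_mem_nhdsWithin] with ε hmid (hε : (0:ℝ) < ε)
  have hε2 : (0:ℝ) < ε^2 := by positivity
  have h1 : h (x+ε) ^ (1/(N-1)) + h (x-ε) ^ (1/(N-1)) - 2 * h x ^ (1/(N-1))
      ≤ (2 * s15c K N ε - 2) * h x ^ (1/(N-1)) := by linarith
  calc (h (x+ε) ^ (1/(N-1)) + h (x-ε) ^ (1/(N-1)) - 2 * h x ^ (1/(N-1)))/ε^2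
      ≤ ((2 * s15c K N ε - 2) * h x ^ (1/(N-1)))/ε^2 := by
        gcongr
    _ = ((2 * s15c K N ε - 2)/ε^2) * (h x ^ (1/(N-1))) := by ring

/-! ### Positivity on the interior -/

lemma s15_sigma_ne_zero (K : ℝ) {Np : ℝ} (hNp : 0 < Np) {t θ : ℝ} (ht : 0 < t) (ht1 : t ≤ 1)
    (hθ : 0 < θ) : sigmaCoeff K Np t θ ≠ 0 := by
  rw [sigmaCoeff, if_neg hθ.ne']
  rcases lt_trichotomy 0 K with hK | hK | hK
  · rw [if_pos hK]
    split_ifs with hπ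
    · have hl : 0 < Real.sqrt (K/Np) := Real.sqrt_pos.mpr (div_pos hK hNp)
      have h1 : 0 < θ * Real.sqrt (K/Np) := by positivity
      have ht' : 0 < t * (θ * Real.sqrt (K/Np)) := by positivity
      have h2 : t * (θ * Real.sqrt (K/Np)) ≤ θ * Real.sqrt (K/Np) := by nlinarith
      have hsin1 : 0 < Real.sin (t*(θ * Real.sqrt (K/Np))) :=
        Real.sin_pos_of_pos_of_lt_pi ht' (lt_of_le_of_lt h2 hπ)
      have hsin2 : 0 < Real.sin (θ * Real.sqrt (K/Np)) := Real.sin_pos_of_pos_of_lt_pi h1 hπ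
      exact (ENNReal.ofReal_pos.mpr (div_pos hsin1 hsin2)).ne'
    · simp
  · rw [if_neg (by rw [← hK]; exact lt_irrefl 0), if_pos hK.symm]
    exact (ENNReal.ofReal_pos.mpr ht).ne'
  · rw [if_neg (not_lt.mpr hK.le), if_neg hK.ne]
    have hl : 0 < Real.sqrt (-K/Np) := Real.sqrt_pos.mpr (div_pos (by linarith) hNp)
    have h1 : 0 < θ * Real.sqrt (-K/Np) := by positivity
    have ht' : 0 < t * (θ * Real.sqrt (-K/Np)) := by positivity
    have hs1 : 0 < Real.sinh (t*(θ * Real.sqrt (-K/Np))) := by positivity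
    have hs2 : 0 < Real.sinh (θ * Real.sqrt (-K/Np)) := by positivity
    exact (ENNReal.ofReal_pos.mpr (div_pos hs1 hs2)).ne'

lemma s15_pos {K N : ℝ} (hN : 1 < N) {I : Set ℝ} {h : ℝ → ℝ}
    (hCD : IsCDDensity K N h I) (hne : ∃ y ∈ I, h y ≠ 0) {x : ℝ} (hx : x ∈ interior I) :
    0 < h x := by
  obtain ⟨z, hzI, hz⟩ := hne
  have hz0 : 0 < h z := lt_of_le_of_ne (hCD.1 z hzI) (Ne.symm hz)
  have hxI : x ∈ I := interior_subset hx
  rcases eq_or_ne x z with rfl | hxz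
  · exact hz0
  by_contra h0
  have hx0 : h x = 0 := le_antisymm (not_lt.mp h0) (hCD.1 x hxI)
  obtain ⟨r, hr, hIoo⟩ := s15_interior hx
  have hd0 : x - z ≠ 0 := sub_ne_zero.mpr hxz
  have habs : 0 < |x - z| := abs_pos.mpr hd0
  set μ : ℝ := min (r/(2*|x - z|)) 1 with hμ
  have hμ0 : 0 < μ := lt_min (by positivity) one_pos
  have hμ1 : μ ≤ 1 := min_le_right _ _
  set x₁ : ℝ := x + μ*(x - z) with hx₁
  have hx₁I : x₁ ∈ I := by
    apply hIoo
    have hb : |μ*(x-z)| ≤ r/2 := by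
      rw [abs_mul, abs_of_pos hμ0]
      calc μ * |x - z| ≤ (r/(2*|x - z|)) * |x - z| :=
            mul_le_mul_of_nonneg_right (min_le_left _ _) (abs_nonneg _)
        _ = r/2 := by field_simp
    have := abs_le.mp hb
    constructor <;> simp only [hx₁] <;> linarith [this.1, this.2]
  set t : ℝ := 1/(1+μ) with hts
  have hμ1' : (0:ℝ) < 1 + μ := by linarith
  have ht0 : 0 < t := by positivity
  have ht1 : t ≤ 1 := by rw [hts, div_le_one hμ1']; linarith
  have hcomb : t * x₁ + (1 - t) * z = x := by
    rw [hts, hx₁]; field_simp; ring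
  have hcd := hCD.2 z hzI x₁ hx₁I t ⟨ht0.le, ht1⟩
  rw [hcomb] at hcd
  have hm : (1/(N-1) : ℝ) ≠ 0 := one_div_ne_zero (by linarith)
  rw [hx0, Real.zero_rpow hm, ENNReal.ofReal_zero] at hcd
  have hθ : 0 < |x₁ - z| := by
    have : x₁ - z = (1+μ)*(x-z) := by rw [hx₁]; ring
    rw [this, abs_mul, abs_of_pos hμ1']
    positivity
  have h1t0 : 0 < 1 - t := by
    rw [hts]
    have : 1/(1+μ) < 1 := by rw [div_lt_one hμ1']; linarith
    linarith
  have h1t1 : 1 - t ≤ 1 := by linarith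
  have hσ := s15_sigma_ne_zero K (show (0:ℝ) < N-1 by linarith) h1t0 h1t1 hθ
  have hgz : ENNReal.ofReal (h z ^ (1/(N-1))) ≠ 0 :=
    (ENNReal.ofReal_pos.mpr (Real.rpow_pos_of_pos hz0 _)).ne'
  have hterm : sigmaCoeff K (N-1) (1-t) |x₁ - z| * ENNReal.ofReal (h z ^ (1/(N-1))) = 0 :=
    le_antisymm (le_trans (self_le_add_left _ _) hcd) zero_le
  rcases mul_eq_zero.mp hterm with h' | h'
  · exact hσ h'
  · exact hgz h'

/-! ### Concavity for nonnegative K -/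

lemma s15_concave {K N : ℝ} (hN : 1 < N) (hK : 0 ≤ K) {I : Set ℝ} (hI : Convex ℝ I)
    {h : ℝ → ℝ} (hCD : IsCDDensity K N h I) :
    ConcaveOn ℝ I (fun y => h y ^ (1/(N-1))) := by
  refine ⟨hI, ?_⟩
  intro a ha b hb ta tb hta htb hsum
  simp only [smul_eq_mul]
  have hmidI : ta*a + tb*b ∈ I := by
    have := hI ha hb hta htb hsum
    simpa using this
  have hgA : 0 ≤ h a ^ (1/(N-1)) := Real.rpow_nonneg (hCD.1 a ha) _
  have hgB : 0 ≤ h b ^ (1/(N-1)) := Real.rpow_nonneg (hCD.1 b hb) _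
  have hgM : 0 ≤ h (ta*a + tb*b) ^ (1/(N-1)) := Real.rpow_nonneg (hCD.1 _ hmidI) _
  rcases eq_or_ne b a with hba | hba
  · rw [hba]
    have harg : ta*a + tb*a = a := by rw [← add_mul, hsum, one_mul]
    rw [harg, ← add_mul, hsum, one_mul]
  · have hcd := hCD.2 a ha b hb tb ⟨htb, by linarith⟩
    rw [show (1 - tb : ℝ) = ta by linarith] at hcd
    rw [show (tb * b + ta * a : ℝ) = ta*a + tb*b by ring] at hcd
    have hθ' : (0:ℝ) < |b - a| := abs_pos.mpr (sub_ne_zero.mpr hba)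
    rcases lt_or_eq_of_le hK with hK' | hK0
    · set l := Real.sqrt (K/(N-1)) with hl
      have hl0 : 0 < l := Real.sqrt_pos.mpr (div_pos hK' (by linarith))
      set u := |b - a| * l with hu
      have hu0 : 0 < u := by positivity
      by_cases hπ : u < Real.pi
      · simp only [sigmaCoeff, if_neg hθ'.ne', if_pos hK', ← hl, ← hu, if_pos hπ] at hcd
        have hsinu : 0 < Real.sin u := Real.sin_pos_of_pos_of_lt_pi hu0 hπ
        have hsconc := strictConcaveOn_sin_Icc.concaveOn
        have hkey : ∀ s s' : ℝ, 0 ≤ s → 0 ≤ s' → s + s' = 1 →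
            s ≤ Real.sin (s * u) / Real.sin u := by
          intro s s' hs hs' hss
          have hmem : u ∈ Set.Icc (0:ℝ) Real.pi := ⟨hu0.le, hπ.le⟩
          have hmem0 : (0:ℝ) ∈ Set.Icc (0:ℝ) Real.pi := ⟨le_refl _, Real.pi_pos.le⟩
          have := hsconc.2 hmem hmem0 hs hs' hss
          simp only [smul_eq_mul, Real.sin_zero, mul_zero, add_zero] at this
          rw [le_div_iff₀ hsinu]
          linarith
        have hsA : 0 ≤ Real.sin (ta * u) / Real.sin u := by
          apply div_nonneg _ hsinu.le
          apply Real.sin_nonneg_of_nonneg_of_le_pi (by positivity)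
          nlinarith [hπ.le]
        have hsB : 0 ≤ Real.sin (tb * u) / Real.sin u := by
          apply div_nonneg _ hsinu.le
          apply Real.sin_nonneg_of_nonneg_of_le_pi (by positivity)
          nlinarith [hπ.le]
        have hext := s15_extract hsB hsA hgB hgA hgM hcd
        have h1 := hkey ta tb hta htb hsum
        have h2 := hkey tb ta htb hta (by linarith)
        nlinarith [mul_le_mul_of_nonneg_right h1 hgA, mul_le_mul_of_nonneg_right h2 hgB]
      · simp only [sigmaCoeff, if_neg hθ'.ne', if_pos hK', ← hl, ← hu, if_neg hπ] at hcd
        by_cases hB0 : h b ^ (1/(N-1)) = 0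
        · by_cases hA0 : h a ^ (1/(N-1)) = 0
          · rw [hA0, hB0]; simpa using hgM
          · exfalso
            have hAne : ENNReal.ofReal (h a ^ (1/(N-1))) ≠ 0 :=
              (ENNReal.ofReal_pos.mpr (lt_of_le_of_ne hgA (Ne.symm hA0))).ne'
            have htop : (⊤ : ENNReal) ≤ ENNReal.ofReal (h (ta*a+tb*b) ^ (1/(N-1))) := by
              refine le_trans ?_ hcd
              rw [ENNReal.top_mul hAne]
              exact le_add_self
            exact absurd (eq_top_iff.mpr htop) ENNReal.ofReal_ne_top
        · exfalso
          have hBne : ENNReal.ofReal (h b ^ (1/(N-1))) ≠ 0 :=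
            (ENNReal.ofReal_pos.mpr (lt_of_le_of_ne hgB (Ne.symm hB0))).ne'
          have htop : (⊤ : ENNReal) ≤ ENNReal.ofReal (h (ta*a+tb*b) ^ (1/(N-1))) := by
            refine le_trans ?_ hcd
            rw [ENNReal.top_mul hBne]
            exact le_self_add
          exact absurd (eq_top_iff.mpr htop) ENNReal.ofReal_ne_top
    · simp only [sigmaCoeff, if_neg hθ'.ne',
        if_neg (show ¬ (0 < K) by rw [← hK0]; exact lt_irrefl 0), if_pos hK0.symm] at hcd
      have hext := s15_extract htb hta hgB hgA hgM hcd
      linarith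

/-! ### Taylor expansion with Peano remainder -/

lemma s15_taylor {f f' : ℝ → ℝ} {q x : ℝ}
    (hd : ∀ᶠ y in nhds x, HasDerivAt f (f' y) y) (hq : HasDerivAt f' q x) :
    HasSecondPeanoDerivAt f q x := by
  refine ⟨f' x, hd.self_of_nhds, ?_⟩
  rw [Asymptotics.isLittleO_iff]
  intro c hc
  have hb : ∀ᶠ y in nhds x, ‖f' y - f' x - (y - x) • q‖ ≤ c * ‖y - x‖ :=
    (hasDerivAt_iff_isLittleO.mp hq).def hc
  obtain ⟨δ, hδ0, hδ⟩ := Metric.eventually_nhds_iff.mp (hd.and hb)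
  rw [Metric.eventually_nhds_iff]
  refine ⟨δ, hδ0, ?_⟩
  intro ε hε
  rw [Real.dist_eq, sub_zero] at hε
  set φ : ℝ → ℝ := fun s => f (x + s) - f x - f' x * s - q * s^2/2 with hφ
  have hmem : ∀ s ∈ Set.uIcc (0:ℝ) ε, |s| ≤ |ε| := by
    intro s hs
    rcases Set.mem_uIcc.mp hs with ⟨h1, h2⟩ | ⟨h1, h2⟩
    · rw [abs_of_nonneg h1]; exact le_trans h2 (le_abs_self _)
    · rw [abs_of_nonpos h2]; exact le_trans (by linarith) (neg_le_abs _)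
  have hder : ∀ s ∈ Set.uIcc (0:ℝ) ε,
      HasDerivWithinAt φ (f' (x+s) - f' x - q*s) (Set.uIcc 0 ε) s := by
    intro s hs
    have hds : dist (x+s) x < δ := by
      rw [Real.dist_eq, add_sub_cancel_left]
      exact lt_of_le_of_lt (hmem s hs) hε
    obtain ⟨hD, _⟩ := hδ hds
    have h1 : HasDerivAt (fun u => f (x + u)) (f' (x+s)) s := by
      have := hD.comp s ((hasDerivAt_id s).const_add x)
      simpa [Function.comp_def] using this
    have h2 : HasDerivAt (fun _ : ℝ => f x) 0 s := hasDerivAt_const _ _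
    have h3 : HasDerivAt (fun u : ℝ => f' x * u) (f' x) s := by
      simpa using (hasDerivAt_id s).const_mul (f' x)
    have h4 : HasDerivAt (fun u : ℝ => q * u^2/2) (q * s) s := by
      have h4' : HasDerivAt (fun u : ℝ => q/2 * u^2) (q/2 * (2 * s^1)) s :=
        (hasDerivAt_pow 2 s).const_mul (q/2)
      have e1 : (fun u : ℝ => q * u^2/2) = (fun u : ℝ => q/2 * u^2) := by
        funext u; ring
      have e2 : (q/2 * (2 * s^1) : ℝ) = q * s := by ring
      rw [e1]; rw [e2] at h4'; exact h4'
    have := ((h1.sub h2).sub h3).sub h4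
    have e3 : (f' (x+s) - 0 - f' x - q * s : ℝ) = f' (x+s) - f' x - q*s := by ring
    rw [e3] at this
    exact this.hasDerivWithinAt
  have hbound : ∀ s ∈ Set.uIcc (0:ℝ) ε, ‖f' (x+s) - f' x - q*s‖ ≤ c * |ε| := by
    intro s hs
    have hds : dist (x+s) x < δ := by
      rw [Real.dist_eq, add_sub_cancel_left]
      exact lt_of_le_of_lt (hmem s hs) hε
    obtain ⟨_, hB⟩ := hδ hds
    have e1 : (x + s - x : ℝ) = s := by ring
    rw [e1] at hB
    have e2 : (s • q : ℝ) = q * s := by rw [smul_eq_mul]; ring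
    rw [e2] at hB
    calc ‖f' (x+s) - f' x - q*s‖ ≤ c * ‖s‖ := hB
      _ ≤ c * |ε| := by
          rw [Real.norm_eq_abs]
          exact mul_le_mul_of_nonneg_left (hmem s hs) hc.le
  have hkey := (convex_uIcc (0:ℝ) ε).norm_image_sub_le_of_norm_hasDerivWithin_le
    hder hbound Set.left_mem_uIcc Set.right_mem_uIcc
  have hφ0 : φ 0 = 0 := by simp [hφ]
  rw [hφ0, sub_zero, sub_zero] at hkey
  calc ‖f (x + ε) - f x - f' x * ε - q * ε^2/2‖ = ‖φ ε‖ := rfl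
    _ ≤ c * |ε| * ‖ε‖ := hkey
    _ = c * ‖ε^2‖ := by
        rw [Real.norm_eq_abs, Real.norm_eq_abs, abs_pow]
        ring

/-! ### The pathological case: `h'(x) = 0`, junk second derivative `0`, and `K ≥ 0` -/

set_option maxHeartbeats 1600000 in
lemma s15_patho {K N : ℝ} (hN : 1 < N) (hK : 0 ≤ K) {I : Set ℝ} (hI : Convex ℝ I)
    {h : ℝ → ℝ} (hCD : IsCDDensity K N h I) {x : ℝ} (hx : x ∈ interior I)
    (hx0 : 0 < h x) (hdiff : DifferentiableAt ℝ h x) (hd0 : deriv h x = 0)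
    (hq0 : HasDerivAt (deriv h) 0 x) :
    HasSecondPeanoDerivAt (fun y => h y ^ (1/(N-1))) 0 x := by
  have hN1 : (0:ℝ) < N - 1 := by linarith
  set m : ℝ := 1/(N-1) with hm
  have hm0 : 0 < m := by positivity
  set g : ℝ → ℝ := fun y => h y ^ m with hg
  have hgd : HasDerivAt g 0 x := by
    have := hdiff.hasDerivAt.rpow_const (p := m) (Or.inl hx0.ne')
    rw [hd0] at this
    simpa using this
  have hIe : ∀ᶠ y in nhds x, y ∈ I := mem_interior_iff_mem_nhds.mp hx
  have hbnd : ∀ᶠ y in nhds x, h y ∈ Set.Ioo (h x/2) (2*h x) :=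
    hdiff.continuousAt.eventually_mem (Ioo_mem_nhds (by linarith) (by linarith))
  obtain ⟨r0, hr00, hr0⟩ := Metric.eventually_nhds_iff.mp (hIe.and hbnd)
  have hmemJ : ∀ y ∈ Set.Ioo (x - r0) (x + r0), dist y x < r0 := by
    intro y hy
    rw [Real.dist_eq, abs_lt]
    exact ⟨by linarith [hy.1], by linarith [hy.2]⟩
  have hJI : Set.Ioo (x - r0) (x + r0) ⊆ I := fun y hy => (hr0 (hmemJ y hy)).1
  have hxJ : x ∈ Set.Ioo (x - r0) (x + r0) := ⟨by linarith, by linarith⟩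
  have hconc : ConcaveOn ℝ (Set.Ioo (x - r0) (x + r0)) g :=
    (s15_concave hN hK hI hCD).subset hJI (convex_Ioo _ _)
  have hhb : ∀ y ∈ Set.Ioo (x - r0) (x + r0), h x/2 < h y ∧ h y < 2*h x := fun y hy =>
    ⟨((hr0 (hmemJ y hy)).2).1, ((hr0 (hmemJ y hy)).2).2⟩
  have hgpos : ∀ y ∈ Set.Ioo (x - r0) (x + r0), 0 < h y :=
    fun y hy => lt_trans (by linarith) (hhb y hy).1
  obtain ⟨B, hBdef⟩ : ∃ B : ℝ, B = max ((h x/2) ^ (m-1)) ((2*h x) ^ (m-1)) := ⟨_, rfl⟩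
  have hB0 : 0 < B := by
    rw [hBdef]
    exact lt_max_of_lt_left (Real.rpow_pos_of_pos (by linarith) _)
  have hBy : ∀ y ∈ Set.Ioo (x - r0) (x + r0), h y ^ (m-1) ≤ B := by
    intro y hy
    rw [hBdef]
    rcases le_or_gt 0 (m-1) with hs | hs
    · exact le_max_of_le_right
        (Real.rpow_le_rpow (le_of_lt (hgpos y hy)) (le_of_lt (hhb y hy).2) hs)
    · exact le_max_of_le_left
        (Real.rpow_le_rpow_of_nonpos (by linarith) (le_of_lt (hhb y hy).1) hs.le)
  obtain ⟨r1, hr1⟩ : ∃ r1 : ℝ, r1 = r0/2 := ⟨_, rfl⟩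
  have hr1pos : 0 < r1 := by rw [hr1]; positivity
  have hr1r0 : r1 < r0 := by rw [hr1]; linarith
  obtain ⟨p, hp⟩ : ∃ p : ℝ, p = x + 3*r0/4 := ⟨_, rfl⟩
  have hpJ : p ∈ Set.Ioo (x - r0) (x + r0) := ⟨by rw [hp]; linarith, by rw [hp]; linarith⟩
  obtain ⟨C, hCdef⟩ : ∃ C : ℝ, C = (2*h x)^m := ⟨_, rfl⟩
  have hC0 : 0 < C := by rw [hCdef]; exact Real.rpow_pos_of_pos (by linarith) _
  have hgub : ∀ y ∈ Set.Ioo (x - r0) (x + r0), g y ≤ C := by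
    intro y hy
    rw [hCdef]
    exact Real.rpow_le_rpow (le_of_lt (hgpos y hy)) (le_of_lt (hhb y hy).2) hm0.le
  have hgnn : ∀ y ∈ Set.Ioo (x - r0) (x + r0), 0 ≤ g y :=
    fun y hy => Real.rpow_nonneg (le_of_lt (hgpos y hy)) _
  obtain ⟨mlow, hmlowdef⟩ : ∃ q : ℝ, q = -(4*C/r0) := ⟨_, rfl⟩
  have hmlow0 : mlow ≤ 0 := by
    have : 0 < 4*C/r0 := by positivity
    rw [hmlowdef]; linarith
  have hIccJ : Set.Icc (x-r1) (x+r1) ⊆ Set.Ioo (x - r0) (x + r0) := by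
    intro y hy
    exact ⟨by linarith [hy.1], by linarith [hy.2]⟩
  have hslope_lb : ∀ u ∈ Set.Icc (x-r1) (x+r1), ∀ v ∈ Set.Icc (x-r1) (x+r1), u < v →
      mlow * (v - u) ≤ g v - g u := by
    intro u hu v hv huv
    have huJ := hIccJ hu
    have hvJ := hIccJ hv
    have hvp : v < p := by
      have := hv.2; rw [hp]; rw [hr1] at this; linarith
    have h1 := hconc.slope_anti_adjacent huJ hpJ huv hvp
    have h2 : mlow ≤ (g p - g v)/(p - v) := by
      have hden : 0 < p - v := by linarith
      rw [le_div_iff₀ hden]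
      have hnum : -C ≤ g p - g v := by linarith [hgub v hvJ, hgnn p hpJ]
      have hpv : r0/4 ≤ p - v := by
        have := hv.2; rw [hp]; rw [hr1] at this; linarith
      calc mlow * (p - v) ≤ mlow * (r0/4) := mul_le_mul_of_nonpos_left hpv hmlow0
        _ = -C := by rw [hmlowdef]; field_simp
        _ ≤ g p - g v := hnum
    have h3 := le_trans h2 h1
    rw [le_div_iff₀ (by linarith : (0:ℝ) < v - u)] at h3
    linarith
  obtain ⟨clamp, hclamp⟩ : ∃ f : ℝ → ℝ, f = fun y => max (x-r1) (min y (x+r1)) := ⟨_, rfl⟩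
  have hclamp_mem : ∀ y, clamp y ∈ Set.Icc (x-r1) (x+r1) := by
    intro y
    rw [hclamp]
    exact ⟨le_max_left _ _, max_le (by linarith) (min_le_right _ _)⟩
  have hclamp_id : ∀ y ∈ Set.Icc (x-r1) (x+r1), clamp y = y := by
    intro y hy
    rw [hclamp]
    simp only
    rw [min_eq_left hy.2, max_eq_right hy.1]
  have hclamp_mono : Monotone clamp := by
    rw [hclamp]
    exact monotone_const.max (monotone_id.min monotone_const)
  obtain ⟨F, hF⟩ : ∃ F : ℝ → ℝ, F = fun y => g (clamp y) - mlow * clamp y := ⟨_, rfl⟩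
  have hFmono : Monotone F := by
    intro u v huv
    have h1 := hclamp_mono huv
    rcases eq_or_lt_of_le h1 with he | hlt
    · rw [hF]; simp only; rw [he]
    · have := hslope_lb (clamp u) (hclamp_mem u) (clamp v) (hclamp_mem v) hlt
      rw [hF]; simp only; linarith
  have hae := hFmono.ae_differentiableAt
  have hdense : ∀ a b : ℝ, a < b → Set.Ioo a b ⊆ Set.Ioo (x-r1) (x+r1) →
      ∃ y ∈ Set.Ioo a b, DifferentiableAt ℝ g y ∧ y ∈ Set.Ioo (x - r0) (x + r0) := by
    intro a b hab hsub
    have hbad : volume {y : ℝ | ¬ DifferentiableAt ℝ F y} = 0 := MeasureTheory.ae_iff.mp hae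
    have hne : ¬ (Set.Ioo a b ⊆ {y : ℝ | ¬ DifferentiableAt ℝ F y}) := by
      intro hss
      have h1 := measure_mono (μ := volume) hss
      have h2 : volume (Set.Ioo a b) = 0 := le_antisymm (hbad ▸ h1) zero_le
      rw [Real.volume_Ioo] at h2
      have := ENNReal.ofReal_eq_zero.mp h2
      linarith
    obtain ⟨y, hyIoo, hyd⟩ := Set.not_subset.mp hne
    simp only [mem_setOf_eq, not_not] at hyd
    have hyIcc : y ∈ Set.Ioo (x-r1) (x+r1) := hsub hyIoo
    have hyJ : y ∈ Set.Ioo (x - r0) (x + r0) := hIccJ (Set.Ioo_subset_Icc_self hyIcc)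
    have heq : (fun z => F z + mlow * z) =ᶠ[nhds y] g := by
      filter_upwards [isOpen_Ioo.mem_nhds hyIcc] with z hz
      rw [hF]
      simp only
      rw [hclamp_id z (Set.Ioo_subset_Icc_self hz)]
      ring
    have hdF : DifferentiableAt ℝ (fun z => F z + mlow * z) y :=
      hyd.add (differentiableAt_id.const_mul mlow)
    exact ⟨y, hyIoo, hdF.congr_of_eventuallyEq heq.symm, hyJ⟩
  refine ⟨0, hgd, ?_⟩
  rw [Asymptotics.isLittleO_iff]
  intro c hc
  have hδ'0 : 0 < c/(2*m*B) := by positivity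
  have hodb := (hasDerivAt_iff_isLittleO.mp hq0).def hδ'0
  obtain ⟨rδ, hrδ0, hrδ⟩ := Metric.eventually_nhds_iff.mp hodb
  have hderb : ∀ y ∈ Set.Ioo (x - r0) (x + r0), DifferentiableAt ℝ g y → dist y x < rδ →
      |deriv g y| ≤ (c/2) * |y - x| := by
    intro y hyJ hyg hydist
    have hy0 : 0 < h y := hgpos y hyJ
    have hgy0 : 0 < g y := Real.rpow_pos_of_pos hy0 _
    have heqh : (fun z => g z ^ (N-1)) =ᶠ[nhds y] h := by
      filter_upwards [isOpen_Ioo.mem_nhds hyJ] with z hz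
      rw [hg]
      simp only
      rw [← Real.rpow_mul (le_of_lt (hgpos z hz)),
        show m*(N-1) = 1 from by rw [hm]; exact one_div_mul_cancel (ne_of_gt hN1)]
      exact Real.rpow_one _
    have hdh : DifferentiableAt ℝ h y :=
      ((hyg.rpow_const (p := N-1) (Or.inl hgy0.ne')).congr_of_eventuallyEq heqh.symm)
    have hgder : HasDerivAt g (deriv h y * m * h y ^ (m-1)) y := by
      have := hdh.hasDerivAt.rpow_const (p := m) (Or.inl hy0.ne')
      rw [hg]
      exact this
    rw [hgder.deriv]
    have hdb2 := hrδ hydist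
    simp only [hd0, smul_zero, sub_zero, Real.norm_eq_abs] at hdb2
    have hrp : 0 < h y ^ (m-1) := Real.rpow_pos_of_pos hy0 _
    have h1 : |deriv h y * m * h y^(m-1)| = |deriv h y| * m * h y ^(m-1) := by
      rw [abs_mul, abs_mul, abs_of_pos hm0, abs_of_pos hrp]
    rw [h1]
    have h2 : h y ^ (m-1) ≤ B := hBy y hyJ
    have h3 : |deriv h y| ≤ c/(2*m*B) * |y - x| := hdb2
    have h4 : (c/(2*m*B) * |y-x|) * m * B = (c/2) * |y - x| := by field_simp
    calc |deriv h y| * m * h y ^ (m-1) ≤ (c/(2*m*B) * |y-x|) * m * B := by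
          have e1 : |deriv h y| * m ≤ (c/(2*m*B) * |y-x|) * m :=
            mul_le_mul_of_nonneg_right h3 hm0.le
          have e2 : |deriv h y| * m * h y ^ (m-1) ≤ |deriv h y| * m * B :=
            mul_le_mul_of_nonneg_left h2 (by positivity)
          have e3 : |deriv h y| * m * B ≤ (c/(2*m*B) * |y-x|) * m * B :=
            mul_le_mul_of_nonneg_right e1 hB0.le
          linarith
      _ = (c/2) * |y - x| := h4
  rw [Metric.eventually_nhds_iff]
  obtain ⟨ρ, hρ⟩ : ∃ ρ : ℝ, ρ = min r1 rδ / 2 := ⟨_, rfl⟩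
  have hρ0 : 0 < ρ := by rw [hρ]; exact div_pos (lt_min hr1pos hrδ0) (by norm_num)
  refine ⟨ρ, hρ0, ?_⟩
  intro ε hdistε
  rw [Real.dist_eq, sub_zero] at hdistε
  have core : ∀ e : ℝ, 0 < e → e < ρ →
      |g (x+e) - g x| ≤ c * e^2 ∧ |g (x-e) - g x| ≤ c * e^2 := by
    intro e he0 heρ
    have hmin1 : ρ ≤ r1/2 := by
      rw [hρ]
      have := min_le_left r1 rδ
      linarith
    have hmin2 : ρ ≤ rδ/2 := by
      rw [hρ]
      have := min_le_right r1 rδ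
      linarith
    have h2e1 : 2*e < r1 := by linarith
    have h2eδ : 2*e < rδ := by linarith
    have her0 : e < r0 := by rw [hr1] at h2e1; linarith
    constructor
    · -- right side
      obtain ⟨y, hyIoo, hyg, hyJ⟩ := hdense (x+e) (x+2*e) (by linarith) (by
        intro z hz
        exact ⟨by linarith [hz.1, hr1pos], by linarith [hz.2]⟩)
      have hy1 : x + e < y := hyIoo.1
      have hy2 : y < x + 2*e := hyIoo.2
      have hydist : dist y x < rδ := by
        rw [Real.dist_eq, abs_lt]; constructor <;> linarith
      have hd1 := hderb y hyJ hyg hydist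
      have hyabs : |y - x| ≤ 2*e := by rw [abs_le]; constructor <;> linarith
      have hd1'' : |deriv g y| ≤ c*e := by
        calc |deriv g y| ≤ (c/2) * |y - x| := hd1
          _ ≤ (c/2) * (2*e) := mul_le_mul_of_nonneg_left hyabs (by positivity)
          _ = c*e := by ring
      have hd1' : -(c*e) ≤ deriv g y := by
        have := (abs_le.mp hd1'').1; linarith
      have hslope := hconc.deriv_le_slope hxJ hyJ (by linarith) hyg
      rw [slope_def_field] at hslope
      have hyx0 : 0 < y - x := by linarith
      obtain ⟨tt, htt⟩ : ∃ tt : ℝ, tt = e/(y - x) := ⟨_, rfl⟩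
      have htt0 : 0 ≤ tt := by rw [htt]; positivity
      have htt1 : tt ≤ 1 := by rw [htt, div_le_one hyx0]; linarith
      have hcomb := hconc.2 hxJ hyJ (by linarith : (0:ℝ) ≤ 1 - tt) htt0 (by ring)
      simp only [smul_eq_mul] at hcomb
      rw [show (1-tt) * x + tt * y = x + e from by rw [htt]; field_simp; ring] at hcomb
      have hs2 : tt * (g y - g x) = e * ((g y - g x)/(y-x)) := by
        rw [htt]; field_simp
      have hslb : -(c*e) ≤ (g y - g x)/(y-x) := le_trans hd1' hslope
      have hlower : g x - c*e^2 ≤ g (x+e) := by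
        have h5 : e * (-(c*e)) ≤ e * ((g y - g x)/(y-x)) :=
          mul_le_mul_of_nonneg_left hslb he0.le
        nlinarith [hcomb, hs2]
      have hupper : g (x+e) ≤ g x := by
        have hx2 : x + e ∈ Set.Ioo (x - r0) (x + r0) := ⟨by linarith, by linarith⟩
        have h6 := hconc.slope_le_of_hasDerivAt hxJ hx2 (by linarith) hgd
        rw [slope_def_field, show x+e-x = e from by ring, div_le_iff₀ he0] at h6
        linarith
      rw [abs_le]; constructor <;> nlinarith
    · -- left side
      obtain ⟨y, hyIoo, hyg, hyJ⟩ := hdense (x-2*e) (x-e) (by linarith) (by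
        intro z hz
        exact ⟨by linarith [hz.1], by linarith [hz.2, hr1pos]⟩)
      have hy1 : x - 2*e < y := hyIoo.1
      have hy2 : y < x - e := hyIoo.2
      have hydist : dist y x < rδ := by
        rw [Real.dist_eq, abs_lt]; constructor <;> linarith
      have hd1 := hderb y hyJ hyg hydist
      have hyabs : |y - x| ≤ 2*e := by rw [abs_le]; constructor <;> linarith
      have hd1'' : |deriv g y| ≤ c*e := by
        calc |deriv g y| ≤ (c/2) * |y - x| := hd1
          _ ≤ (c/2) * (2*e) := mul_le_mul_of_nonneg_left hyabs (by positivity)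
          _ = c*e := by ring
      have hd1' : deriv g y ≤ c*e := (abs_le.mp hd1'').2
      have hslope := hconc.slope_le_of_hasDerivAt hyJ hxJ (by linarith) hyg.hasDerivAt
      rw [slope_def_field] at hslope
      have hyx0 : 0 < x - y := by linarith
      obtain ⟨tt, htt⟩ : ∃ tt : ℝ, tt = e/(x - y) := ⟨_, rfl⟩
      have htt0 : 0 ≤ tt := by rw [htt]; positivity
      have htt1 : tt ≤ 1 := by rw [htt, div_le_one hyx0]; linarith
      have hcomb := hconc.2 hyJ hxJ htt0 (by linarith : (0:ℝ) ≤ 1 - tt) (by ring)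
      simp only [smul_eq_mul] at hcomb
      rw [show tt * y + (1-tt) * x = x - e from by rw [htt]; field_simp; ring] at hcomb
      have hs2 : tt * (g y - g x) = -(e * ((g x - g y)/(x-y))) := by
        rw [htt]; field_simp; ring
      have hsub : (g x - g y)/(x - y) ≤ c*e := le_trans hslope hd1'
      have hlower : g x - c*e^2 ≤ g (x-e) := by
        have h5 : e * ((g x - g y)/(x-y)) ≤ e * (c*e) :=
          mul_le_mul_of_nonneg_left hsub he0.le
        nlinarith [hcomb, hs2]
      have hupper : g (x-e) ≤ g x := by
        have hx2 : x - e ∈ Set.Ioo (x - r0) (x + r0) := ⟨by linarith, by linarith⟩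
        have h6 := hconc.le_slope_of_hasDerivAt hx2 hxJ (by linarith) hgd
        rw [slope_def_field, show x - (x-e) = e from by ring, le_div_iff₀ he0] at h6
        linarith
      rw [abs_le]; constructor <;> nlinarith
  rcases lt_trichotomy ε 0 with hsgn | hsgn | hsgn
  · have hcore := (core (-ε) (by linarith) (by rw [abs_of_neg hsgn] at hdistε; linarith)).2
    rw [show x - (-ε) = x + ε from by ring] at hcore
    calc ‖g (x+ε) - g x - 0*ε - 0*ε^2/2‖ = |g (x+ε) - g x| := by
          rw [Real.norm_eq_abs]; ring_nf
      _ ≤ c * (-ε)^2 := hcore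
      _ = c * ‖ε^2‖ := by rw [Real.norm_eq_abs, abs_of_nonneg (sq_nonneg ε)]; ring
  · subst hsgn
    simp
  · have hcore := (core ε hsgn (by rw [abs_of_pos hsgn] at hdistε; linarith)).1
    calc ‖g (x+ε) - g x - 0*ε - 0*ε^2/2‖ = |g (x+ε) - g x| := by
          rw [Real.norm_eq_abs]; ring_nf
      _ ≤ c * ε^2 := hcore
      _ = c * ‖ε^2‖ := by rw [Real.norm_eq_abs, abs_of_nonneg (sq_nonneg ε)]

/-- Pointwise differential inequality for `CD(K,N)` densities: if `h` is a `CD(K,N)`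
density on an interval `I`, not identically zero, and `g := h^{1/(N-1)}` has a second
Peano derivative `q` at an interior point `x`, then `q ≤ -(K/(N-1))·g(x)`; equivalently,
at any interior point where `h` is twice differentiable,
`(log h)''(x) + ((log h)'(x))²/(N-1) ≤ -K`. -/
theorem statement15 (K N : ℝ) (hN : 1 < N) (I : Set ℝ) (hI : Convex ℝ I)
    (h : ℝ → ℝ) (hCD : IsCDDensity K N h I) (hne : ∃ x ∈ I, h x ≠ 0) :
    (∀ x ∈ interior I, ∀ q : ℝ,
        HasSecondPeanoDerivAt (fun y => h y ^ (1 / (N - 1))) q x →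
        q ≤ -(K / (N - 1)) * h x ^ (1 / (N - 1))) ∧
      (∀ x ∈ interior I, ∀ h'' : ℝ,
        DifferentiableAt ℝ h x → HasDerivAt (deriv h) h'' x →
        h'' / h x - (deriv h x / h x) ^ 2 + (deriv h x / h x) ^ 2 / (N - 1) ≤ -K) := by
  have hN1 : (0:ℝ) < N - 1 := by linarith
  constructor
  · intro x hx q hp
    exact s15_part1 hN hCD hx hp
  · intro x hx h'' hdiff hh''
    have hx0 : 0 < h x := s15_pos hN hCD hne hx
    have hhx : h x ≠ 0 := hx0.ne'
    by_cases hev : ∀ᶠ y in nhds x, DifferentiableAt ℝ h y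
    · -- h is differentiable in a neighbourhood of x
      have hpos : ∀ᶠ y in nhds x, 0 < h y :=
        hdiff.continuousAt.eventually_mem (isOpen_Ioi.mem_nhds hx0)
      have hg' : ∀ᶠ y in nhds x,
          HasDerivAt (fun z => h z ^ (1/(N-1)))
            (deriv h y * (1/(N-1)) * h y ^ (1/(N-1) - 1)) y := by
        filter_upwards [hev, hpos] with y h1 h2
        exact h1.hasDerivAt.rpow_const (p := 1/(N-1)) (Or.inl h2.ne')
      have hu : HasDerivAt (fun y => deriv h y * (1/(N-1))) (h'' * (1/(N-1))) x :=
        hh''.mul_const _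
      have hv : HasDerivAt (fun y => h y ^ (1/(N-1) - 1))
          (deriv h x * (1/(N-1) - 1) * h x ^ (1/(N-1) - 1 - 1)) x :=
        hdiff.hasDerivAt.rpow_const (p := 1/(N-1) - 1) (Or.inl hhx)
      have hG' : HasDerivAt (fun y => deriv h y * (1/(N-1)) * h y ^ (1/(N-1) - 1))
          (h'' * (1/(N-1)) * h x ^ (1/(N-1) - 1) +
            (deriv h x * (1/(N-1))) * (deriv h x * (1/(N-1) - 1) * h x ^ (1/(N-1) - 1 - 1))) x :=
        hu.mul hv
      have hpeano := s15_taylor hg' hG'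
      have hkey := s15_part1 hN hCD hx hpeano
      set d := deriv h x with hd
      set P := h x ^ (1/(N-1)) with hP
      have hP0 : 0 < P := Real.rpow_pos_of_pos hx0 _
      have e1 : h x ^ (1/(N-1) - 1) = P / h x := by
        rw [Real.rpow_sub hx0, Real.rpow_one, hP]
      have e2 : h x ^ (1/(N-1) - 1 - 1) = P / h x / h x := by
        rw [Real.rpow_sub hx0, Real.rpow_sub hx0, Real.rpow_one, hP]
      rw [e1, e2] at hkey
      have key2 : (1/(N-1)) * P * (h''/h x + (1/(N-1) - 1)*d^2/(h x)^2)
          ≤ (1/(N-1)) * P * (-K) := by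
        calc (1/(N-1)) * P * (h''/h x + (1/(N-1) - 1)*d^2/(h x)^2)
            = h'' * (1/(N-1)) * (P / h x) + (d * (1/(N-1))) * (d * (1/(N-1) - 1) * (P / h x / h x)) := by
              field_simp
          _ ≤ -(K/(N-1)) * P := hkey
          _ = (1/(N-1)) * P * (-K) := by ring
      have key3 : h''/h x + (1/(N-1) - 1)*d^2/(h x)^2 ≤ -K :=
        le_of_mul_le_mul_left key2 (by positivity)
      have efin : h'' / h x - (d / h x) ^ 2 + (d / h x) ^ 2 / (N - 1)
          = h''/h x + (1/(N-1) - 1)*d^2/(h x)^2 := by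
        field_simp
        ring
      rw [efin]
      exact key3
    · -- pathological case
      have hd0 : deriv h x = 0 := by
        by_contra hd
        apply hev
        have : ∀ᶠ y in nhds x, deriv h y ≠ 0 := hh''.continuousAt.eventually_ne hd
        filter_upwards [this] with y hy
        by_contra hyd
        exact hy (deriv_zero_of_not_differentiableAt hyd)
      have hq0 : h'' = 0 := by
        by_contra hq
        apply hev
        have hlo := (hasDerivAt_iff_isLittleO.mp hh'').def
          (show (0:ℝ) < |h''|/2 by positivity)
        filter_upwards [hlo] with y hy
        by_cases hyx : y = x
        · rw [hyx]; exact hdiff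
        · by_contra hyd
          have hz : deriv h y = 0 := deriv_zero_of_not_differentiableAt hyd
          rw [hz, hd0, smul_eq_mul] at hy
          have hy2 : |y - x| * |h''| ≤ |h''|/2 * |y - x| := by
            simpa [Real.norm_eq_abs] using hy
          have h1 : 0 < |y - x| := abs_pos.mpr (sub_ne_zero.mpr hyx)
          have h2 : 0 < |h''| := abs_pos.mpr hq
          nlinarith
      have hKle : K ≤ 0 := by
        by_contra hKpos
        push_neg at hKpos
        have hp := s15_patho hN (le_of_lt hKpos) hI hCD hx hx0 hdiff hd0
          (by rw [hq0] at hh''; exact hh'')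
        have hcon := s15_part1 hN hCD hx hp
        have hP0 : 0 < h x ^ (1/(N-1)) := Real.rpow_pos_of_pos hx0 _
        have : 0 < K/(N-1) := div_pos hKpos hN1
        nlinarith
      rw [hd0, hq0]
      simp only [zero_div, zero_pow, ne_eq, OfNat.ofNat_ne_zero, not_false_eq_true,
        sub_zero, add_zero]
      norm_num
      linarith
end

section
/- Let I ⊂ ℝ be an open interval, K ∈ ℝ, N ∈ (1,∞), and let h : I → ℝ be a positive differentiable function whose derivative is locally absolutely continuous on I (so that h″ exists a.e. on I). If for Lebesgue-a.e. x ∈ I: (log h)″(x) + ((log h)′(x))²/(N−1) ≤ −K, then: (i) if K > 0 the length of I is at most π·√((N−1)/K); and (ii) h is a CD(K,N) density on I. -/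
open MeasureTheory Set intervalIntegral Real


private lemma my_parts (F F' D : ℝ → ℝ) (a b : ℝ) (hab : a ≤ b)
    (hF : ∀ u ∈ Set.Icc a b, HasDerivAt F (F' u) u)
    (hF' : ContinuousOn F' (Set.Icc a b))
    (hD : IntervalIntegrable D volume a b) :
    F b * (∫ r in a..b, D r) =
      ∫ u in a..b, (F' u * (∫ r in a..u, D r) + F u * D u) := by
  have hicc : uIcc a b = Icc a b := uIcc_of_le hab
  have hFc : ContinuousOn F (Icc a b) := fun u hu => (hF u hu).continuousAt.continuousWithinAt
  have hDm : IntegrableOn D (Ioc a b) volume :=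
    (intervalIntegrable_iff_integrableOn_Ioc_of_le hab).mp hD
  have hF'm : IntegrableOn F' (Ioc a b) volume :=
    ((hF'.integrableOn_compact isCompact_Icc).mono_set Ioc_subset_Icc_self)
  set μ := volume.restrict (Ioc a b) with hμ
  have hμint1 : Integrable F' μ := hF'm
  have hμint2 : Integrable D μ := hDm
  have hFD : IntervalIntegrable (fun x => F x * D x) volume a b := by
    have := hD.continuousOn_mul (g := F) (by rwa [hicc])
    exact this
  have hFDm : Integrable (fun x => F x * D x) μ :=
    (intervalIntegrable_iff_integrableOn_Ioc_of_le hab).mp hFD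
  -- integrability on the product
  have hprod : Integrable (fun p : ℝ × ℝ => F' p.1 * D p.2) (μ.prod μ) :=
    hμint1.mul_prod hμint2
  have hset : MeasurableSet {p : ℝ × ℝ | p.2 ≤ p.1} :=
    measurableSet_le measurable_snd measurable_fst
  have hf_int : Integrable (Function.uncurry fun u r => if r ≤ u then F' u * D r else 0)
      (μ.prod μ) := by
    have := hprod.indicator hset
    refine this.congr ?_
    filter_upwards with p
    simp [Function.uncurry, Set.indicator_apply]
  have hswap := MeasureTheory.integral_integral_swap hf_int
  -- left side of hswap
  have hL : (∫ u, ∫ r, (if r ≤ u then F' u * D r else 0) ∂μ ∂μ)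
      = ∫ u, F' u * (∫ r in a..u, D r) ∂μ := by
    refine setIntegral_congr_fun measurableSet_Ioc (fun u hu => ?_)
    have h1 : (fun r => if r ≤ u then F' u * D r else 0)
        = Set.indicator (Iic u) (fun r => F' u * D r) := by
      ext r; simp [Set.indicator_apply, Set.mem_Iic]
    rw [h1, MeasureTheory.integral_indicator measurableSet_Iic, hμ,
      Measure.restrict_restrict measurableSet_Iic]
    have h2 : Iic u ∩ Ioc a b = Ioc a u := by
      ext r
      simp only [mem_inter_iff, mem_Iic, mem_Ioc]
      constructor
      · rintro ⟨h3, h4, h5⟩; exact ⟨h4, h3⟩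
      · rintro ⟨h3, h4⟩; exact ⟨h4, h3, h4.trans hu.2⟩
    rw [h2, MeasureTheory.integral_const_mul, intervalIntegral.integral_of_le hu.1.le]
  -- right side of hswap
  have hR : (∫ r, ∫ u, (if r ≤ u then F' u * D r else 0) ∂μ ∂μ)
      = ∫ r, (F b - F r) * D r ∂μ := by
    refine setIntegral_congr_fun measurableSet_Ioc (fun r hr => ?_)
    have h1 : (fun u => if r ≤ u then F' u * D r else 0)
        = Set.indicator (Ici r) (fun u => F' u * D r) := by
      ext u; simp [Set.indicator_apply, Set.mem_Ici]
    rw [h1, MeasureTheory.integral_indicator measurableSet_Ici, hμ,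
      Measure.restrict_restrict measurableSet_Ici]
    have h2 : Ici r ∩ Ioc a b = Icc r b := by
      ext u
      simp only [mem_inter_iff, mem_Ici, mem_Ioc, mem_Icc]
      constructor
      · rintro ⟨h3, _, h5⟩; exact ⟨h3, h5⟩
      · rintro ⟨h3, h4⟩; exact ⟨h3, hr.1.trans_le h3, h4⟩
    rw [h2, MeasureTheory.integral_mul_const, integral_Icc_eq_integral_Ioc,
      ← intervalIntegral.integral_of_le hr.2]
    congr 1
    refine integral_eq_sub_of_hasDerivAt (fun u hu => ?_) ?_
    · refine hF u ?_
      rw [uIcc_of_le hr.2] at hu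
      exact ⟨hr.1.le.trans hu.1, hu.2⟩
    · refine (hF'.mono ?_).intervalIntegrable
      rw [uIcc_of_le hr.2]
      exact Icc_subset_Icc hr.1.le le_rfl
  rw [hL, hR] at hswap
  have hsub : (∫ r, (F b - F r) * D r ∂μ)
      = F b * (∫ r, D r ∂μ) - ∫ r, F r * D r ∂μ := by
    have : (fun r => (F b - F r) * D r) = fun r => F b * D r - F r * D r := by
      ext r; ring
    rw [this, integral_sub (hμint2.const_mul (F b)) hFDm, MeasureTheory.integral_const_mul]
  -- now convert interval integrals
  have hG : ContinuousOn (fun u => ∫ r in a..u, D r) (Icc a b) := by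
    have := continuousOn_primitive_interval' hD (a := a) (by rw [hicc]; exact left_mem_Icc.2 hab)
    rwa [hicc] at this
  have hF'G : IntervalIntegrable (fun u => F' u * (∫ r in a..u, D r)) volume a b := by
    apply ContinuousOn.intervalIntegrable
    rw [hicc]
    exact hF'.mul hG
  rw [intervalIntegral.integral_add hF'G hFD]
  have e1 : (∫ u in a..b, F' u * (∫ r in a..u, D r)) = ∫ u, F' u * (∫ r in a..u, D r) ∂μ :=
    intervalIntegral.integral_of_le hab
  have e2 : (∫ u in a..b, F u * D u) = ∫ u, F u * D u ∂μ :=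
    intervalIntegral.integral_of_le hab
  have e3 : (∫ r in a..b, D r) = ∫ r, D r ∂μ :=
    intervalIntegral.integral_of_le hab
  rw [e1, e2, e3, hswap, hsub]
  ring

private lemma wronskian_mono (A A' B B' G D : ℝ → ℝ) (a b : ℝ) (hab : a ≤ b)
    (hA : ∀ u ∈ Set.Icc a b, HasDerivAt A (A' u) u)
    (hA' : ContinuousOn A' (Set.Icc a b))
    (hB : ∀ u ∈ Set.Icc a b, HasDerivAt B (B' u) u)
    (hB' : ContinuousOn B' (Set.Icc a b))
    (hD : IntervalIntegrable D volume a b)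
    (hrep : ∀ u ∈ Set.Icc a b, G u = G a + ∫ r in a..u, D r)
    (hae : ∀ᵐ u ∂(volume : Measure ℝ), u ∈ Set.Icc a b →
      A' u * G u + A u * D u - B' u ≤ 0) :
    A b * G b - B b ≤ A a * G a - B a := by
  have hicc : uIcc a b = Icc a b := uIcc_of_le hab
  have hAc : ContinuousOn A (Icc a b) := fun u hu => (hA u hu).continuousAt.continuousWithinAt
  have hGc : ContinuousOn G (Icc a b) := by
    have hprim : ContinuousOn (fun u => G a + ∫ r in a..u, D r) (Icc a b) := by
      apply ContinuousOn.add continuousOn_const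
      have := continuousOn_primitive_interval' hD (a := a) (by rw [hicc]; exact left_mem_Icc.2 hab)
      rwa [hicc] at this
    exact ContinuousOn.congr hprim hrep
  have hiA'G : IntervalIntegrable (fun u => A' u * G u) volume a b := by
    apply ContinuousOn.intervalIntegrable; rw [hicc]; exact hA'.mul hGc
  have hiAD : IntervalIntegrable (fun u => A u * D u) volume a b := by
    have := hD.continuousOn_mul (g := A) (by rwa [hicc])
    exact this
  have hiB' : IntervalIntegrable B' volume a b := by
    apply ContinuousOn.intervalIntegrable; rwa [hicc]
  -- key identity for A * G
  have keyA : A b * G b - A a * G a = ∫ u in a..b, (A' u * G u + A u * D u) := by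
    have hparts := my_parts A A' D a b hab hA hA' hD
    have hftcA : (∫ u in a..b, A' u) = A b - A a :=
      integral_eq_sub_of_hasDerivAt (fun u hu => hA u (hicc ▸ hu))
        (by apply ContinuousOn.intervalIntegrable; rwa [hicc])
    have hi1 : IntervalIntegrable (fun u => G a * A' u) volume a b := by
      have := hiB' -- dummy
      exact (ContinuousOn.intervalIntegrable (by rw [hicc]; exact continuousOn_const.mul hA'))
    have hi2 : IntervalIntegrable (fun u => A' u * (∫ r in a..u, D r) + A u * D u) volume a b := by
      apply IntervalIntegrable.add ?_ hiAD
      apply ContinuousOn.intervalIntegrable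
      rw [hicc]
      apply hA'.mul
      have := continuousOn_primitive_interval' hD (a := a) (by rw [hicc]; exact left_mem_Icc.2 hab)
      rwa [hicc] at this
    have hcongr : (∫ u in a..b, (G a * A' u + (A' u * (∫ r in a..u, D r) + A u * D u)))
        = ∫ u in a..b, (A' u * G u + A u * D u) := by
      apply intervalIntegral.integral_congr
      intro u hu
      rw [hicc] at hu
      show G a * A' u + ((A' u * ∫ r in a..u, D r) + A u * D u) = A' u * G u + A u * D u
      rw [hrep u hu]; ring
    calc A b * G b - A a * G a
        = G a * (A b - A a) + A b * (∫ r in a..b, D r) := by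
          rw [hrep b ⟨hab, le_rfl⟩]; ring
      _ = G a * (∫ u in a..b, A' u)
            + ∫ u in a..b, (A' u * (∫ r in a..u, D r) + A u * D u) := by rw [hftcA, hparts]
      _ = (∫ u in a..b, G a * A' u)
            + ∫ u in a..b, (A' u * (∫ r in a..u, D r) + A u * D u) := by
          rw [intervalIntegral.integral_const_mul]
      _ = ∫ u in a..b, (G a * A' u + (A' u * (∫ r in a..u, D r) + A u * D u)) := by
          rw [intervalIntegral.integral_add hi1 hi2]
      _ = _ := hcongr
  have keyB : B b - B a = ∫ u in a..b, B' u :=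
    (integral_eq_sub_of_hasDerivAt (fun u hu => hB u (hicc ▸ hu)) hiB').symm
  have hsplit : (∫ u in a..b, (A' u * G u + A u * D u - B' u))
      = (∫ u in a..b, (A' u * G u + A u * D u)) - ∫ u in a..b, B' u :=
    intervalIntegral.integral_sub (hiA'G.add hiAD) hiB'
  have hnonpos : (∫ u in a..b, (A' u * G u + A u * D u - B' u)) ≤ 0 := by
    have h0 : 0 ≤ ∫ u in a..b, -(A' u * G u + A u * D u - B' u) := by
      apply intervalIntegral.integral_nonneg_of_ae_restrict hab
      rw [Filter.EventuallyLE, ae_restrict_iff' measurableSet_Icc]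
      filter_upwards [hae] with u hu hmem
      have := hu hmem
      simp only [Pi.zero_apply]
      linarith
    rw [intervalIntegral.integral_neg] at h0
    linarith
  rw [hsplit] at hnonpos
  linarith [keyA, keyB, hnonpos]

private lemma wronskian_step (h h1 h2 : ℝ → ℝ) (α lam : ℝ)
    (c c' : ℝ → ℝ)
    (hc : ∀ u, HasDerivAt c (c' u) u)
    (hc' : ∀ u, HasDerivAt c' (-(lam * c u)) u)
    (a b : ℝ) (hab : a ≤ b)
    (hh : ∀ u ∈ Set.Icc a b, 0 < h u)
    (hhd : ∀ u ∈ Set.Icc a b, HasDerivAt h (h1 u) u)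
    (hh1c : ContinuousOn h1 (Set.Icc a b))
    (hh2i : IntervalIntegrable h2 volume a b)
    (hrep : ∀ u ∈ Set.Icc a b, h1 u = h1 a + ∫ r in a..u, h2 r)
    (hae : ∀ᵐ u ∂(volume : Measure ℝ), u ∈ Set.Icc a b →
      α * (α - 1) * h u ^ (α - 2) * h1 u ^ 2 + α * h u ^ (α - 1) * h2 u
        + lam * h u ^ α ≤ 0)
    (hcpos : ∀ u ∈ Set.Icc a b, 0 ≤ c u) :
    α * h b ^ (α - 1) * h1 b * c b - h b ^ α * c' b
      ≤ α * h a ^ (α - 1) * h1 a * c a - h a ^ α * c' a := by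
  have hhc : ContinuousOn h (Icc a b) := fun u hu => (hhd u hu).continuousAt.continuousWithinAt
  have hne : ∀ u ∈ Icc a b, h u ≠ 0 := fun u hu => ne_of_gt (hh u hu)
  have hcc : ContinuousOn c (Icc a b) := fun u _ => (hc u).continuousAt.continuousWithinAt
  have hc'c : ContinuousOn c' (Icc a b) := fun u _ => (hc' u).continuousAt.continuousWithinAt
  have hp1c : ContinuousOn (fun u => h u ^ (α - 1)) (Icc a b) :=
    hhc.rpow_const (fun u hu => Or.inl (hne u hu))
  have hp2c : ContinuousOn (fun u => h u ^ (α - 2)) (Icc a b) :=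
    hhc.rpow_const (fun u hu => Or.inl (hne u hu))
  have hpαc : ContinuousOn (fun u => h u ^ α) (Icc a b) :=
    hhc.rpow_const (fun u hu => Or.inl (hne u hu))
  set A : ℝ → ℝ := fun u => α * (h u ^ (α - 1) * c u) with hA_def
  set A' : ℝ → ℝ := fun u =>
    α * (h1 u * (α - 1) * h u ^ (α - 2) * c u + h u ^ (α - 1) * c' u) with hA'_def
  set B : ℝ → ℝ := fun u => h u ^ α * c' u with hB_def
  set B' : ℝ → ℝ := fun u =>
    h1 u * α * h u ^ (α - 1) * c' u + h u ^ α * -(lam * c u) with hB'_def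
  have hA : ∀ u ∈ Icc a b, HasDerivAt A (A' u) u := by
    intro u hu
    have hpow : HasDerivAt (fun x => h x ^ (α - 1)) (h1 u * (α - 1) * h u ^ (α - 1 - 1)) u :=
      (hhd u hu).rpow_const (Or.inl (hne u hu))
    have hd := ((hpow.mul (hc u)).const_mul α)
    rw [show α - 1 - 1 = α - 2 by ring] at hd
    exact hd
  have hA' : ContinuousOn A' (Icc a b) := by
    apply continuousOn_const.mul
    exact ((((hh1c.mul continuousOn_const).mul hp2c).mul hcc).add (hp1c.mul hc'c))
  have hB : ∀ u ∈ Icc a b, HasDerivAt B (B' u) u := by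
    intro u hu
    exact ((hhd u hu).rpow_const (Or.inl (hne u hu))).mul (hc' u)
  have hB' : ContinuousOn B' (Icc a b) := by
    apply ContinuousOn.add
    · exact (((hh1c.mul continuousOn_const).mul hp1c).mul hc'c)
    · exact hpαc.mul ((continuousOn_const.mul hcc).neg)
  have hae2 : ∀ᵐ u ∂(volume : Measure ℝ), u ∈ Icc a b →
      A' u * h1 u + A u * h2 u - B' u ≤ 0 := by
    filter_upwards [hae] with u hu hmem
    have h0 := hu hmem
    have hc0 := hcpos u hmem
    have heq : A' u * h1 u + A u * h2 u - B' u
        = (α * (α - 1) * h u ^ (α - 2) * h1 u ^ 2 + α * h u ^ (α - 1) * h2 u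
            + lam * h u ^ α) * c u := by
      simp only [hA_def, hA'_def, hB'_def]; ring
    rw [heq]
    exact mul_nonpos_of_nonpos_of_nonneg h0 hc0
  have H := wronskian_mono A A' B B' h1 h2 a b hab hA hA' hB hB' hh2i hrep hae2
  calc α * h b ^ (α - 1) * h1 b * c b - h b ^ α * c' b
      = A b * h1 b - B b := by simp only [hA_def, hB_def]; ring
    _ ≤ A a * h1 a - B a := H
    _ = _ := by simp only [hA_def, hB_def]; ring

private lemma sin_hasDeriv (ν : ℝ) (hν : ν ≠ 0) (r : ℝ) :
    HasDerivAt (fun r => Real.sin (r * ν) / ν) (Real.cos (r * ν)) r := by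
  have H := ((Real.hasDerivAt_sin (r * ν)).comp r ((hasDerivAt_id r).mul_const ν)).div_const ν
  simp only [Function.comp_def, id] at H
  refine H.congr_deriv ?_
  field_simp

private lemma cos_hasDeriv (ν lam : ℝ) (hν : ν ≠ 0) (h2 : ν ^ 2 = lam) (r : ℝ) :
    HasDerivAt (fun r => Real.cos (r * ν)) (-(lam * (Real.sin (r * ν) / ν))) r := by
  have H := (Real.hasDerivAt_cos (r * ν)).comp r ((hasDerivAt_id r).mul_const ν)
  simp only [Function.comp_def, id] at H
  refine H.congr_deriv ?_
  field_simp
  linear_combination -Real.sin (r * ν) * h2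

private lemma sinh_hasDeriv (ν : ℝ) (hν : ν ≠ 0) (r : ℝ) :
    HasDerivAt (fun r => Real.sinh (r * ν) / ν) (Real.cosh (r * ν)) r := by
  have H := ((Real.hasDerivAt_sinh (r * ν)).comp r ((hasDerivAt_id r).mul_const ν)).div_const ν
  simp only [Function.comp_def, id] at H
  refine H.congr_deriv ?_
  field_simp

private lemma cosh_hasDeriv (ν lam : ℝ) (hν : ν ≠ 0) (h2 : ν ^ 2 = -lam) (r : ℝ) :
    HasDerivAt (fun r => Real.cosh (r * ν)) (-(lam * (Real.sinh (r * ν) / ν))) r := by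
  have H := (Real.hasDerivAt_cosh (r * ν)).comp r ((hasDerivAt_id r).mul_const ν)
  simp only [Function.comp_def, id] at H
  refine H.congr_deriv ?_
  field_simp
  linear_combination Real.sinh (r * ν) * h2

private lemma key_ineq (h h1 h2 : ℝ → ℝ) (α lam : ℝ) (S C : ℝ → ℝ)
    (hS : ∀ r, HasDerivAt S (C r) r)
    (hC : ∀ r, HasDerivAt C (-(lam * S r)) r)
    (hS0 : S 0 = 0) (hC0 : C 0 = 1)
    (hadd : ∀ p q, S (p + q) = S p * C q + C p * S q)
    (a b : ℝ) (hab : a ≤ b)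
    (hSnn : ∀ r ∈ Set.Icc (0:ℝ) (b - a), 0 ≤ S r)
    (hh : ∀ u ∈ Set.Icc a b, 0 < h u)
    (hhd : ∀ u ∈ Set.Icc a b, HasDerivAt h (h1 u) u)
    (hh1c : ContinuousOn h1 (Set.Icc a b))
    (hh2i : IntervalIntegrable h2 volume a b)
    (hrep : ∀ u ∈ Set.Icc a b, ∀ v ∈ Set.Icc a b, h1 v = h1 u + ∫ r in u..v, h2 r)
    (hae : ∀ᵐ u ∂(volume : Measure ℝ), u ∈ Set.Icc a b →
      α * (α - 1) * h u ^ (α - 2) * h1 u ^ 2 + α * h u ^ (α - 1) * h2 u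
        + lam * h u ^ α ≤ 0)
    (t : ℝ) (ht : t ∈ Set.Icc (0:ℝ) 1) :
    S (t * (b - a)) * h b ^ α + S ((1 - t) * (b - a)) * h a ^ α
      ≤ h (a + t * (b - a)) ^ α * S (b - a) := by
  obtain ⟨ht0, ht1⟩ := ht
  set θ := b - a with hθ
  have hθ0 : 0 ≤ θ := by simp [hθ]; linarith
  set m := a + t * θ with hm
  have ham : a ≤ m := by simp [hm]; positivity
  have hmb : m ≤ b := by simp [hm, hθ]; nlinarith
  have hsub1 : Set.Icc a m ⊆ Set.Icc a b := Set.Icc_subset_Icc le_rfl hmb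
  have hsub2 : Set.Icc m b ⊆ Set.Icc a b := Set.Icc_subset_Icc ham le_rfl
  -- first Wronskian: c u = S (u - a) on [a, m]
  have hc1 : ∀ u : ℝ, HasDerivAt (fun u => S (u - a)) (C (u - a)) u := by
    intro u
    have := (hS (u - a)).comp u ((hasDerivAt_id u).sub_const a)
    simpa [Function.comp_def] using this
  have hc1' : ∀ u : ℝ, HasDerivAt (fun u => C (u - a)) (-(lam * S (u - a))) u := by
    intro u
    have := (hC (u - a)).comp u ((hasDerivAt_id u).sub_const a)
    simpa [Function.comp_def] using this
  have W1 := wronskian_step h h1 h2 α lam (fun u => S (u - a)) (fun u => C (u - a))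
    hc1 hc1' a m ham (fun u hu => hh u (hsub1 hu)) (fun u hu => hhd u (hsub1 hu))
    (hh1c.mono hsub1)
    (hh2i.mono_set (by rw [uIcc_of_le ham, uIcc_of_le hab]; exact hsub1))
    (fun u hu => hrep a (Set.left_mem_Icc.2 hab) u (hsub1 hu))
    (by filter_upwards [hae] with u hu hmem; exact hu (hsub1 hmem))
    (fun u hu => hSnn (u - a) ⟨by linarith [hu.1], by
      have := hu.2; simp only [hθ]; linarith [hmb, hu.2]⟩)
  -- second Wronskian: c u = S (b - u) on [m, b]
  have hinner : ∀ u : ℝ, HasDerivAt (fun u : ℝ => b - u) (-1) u := by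
    intro u
    simpa using (hasDerivAt_id u).const_sub b
  have hc2 : ∀ u : ℝ, HasDerivAt (fun u => S (b - u)) (-C (b - u)) u := by
    intro u
    have := (hS (b - u)).comp u (hinner u)
    simpa [Function.comp_def] using this
  have hc2' : ∀ u : ℝ, HasDerivAt (fun u => -C (b - u)) (-(lam * S (b - u))) u := by
    intro u
    have := ((hC (b - u)).comp u (hinner u)).neg
    have h2' : HasDerivAt (fun x => -(C ∘ fun u => b - u) x) (-(-(lam * S (b - u)) * -1)) u := this
    simp only [Function.comp] at h2'
    convert h2' using 1
    ring
  have W2 := wronskian_step h h1 h2 α lam (fun u => S (b - u)) (fun u => -C (b - u))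
    hc2 hc2' m b hmb (fun u hu => hh u (hsub2 hu)) (fun u hu => hhd u (hsub2 hu))
    (hh1c.mono hsub2)
    (hh2i.mono_set (by rw [uIcc_of_le hmb, uIcc_of_le hab]; exact hsub2))
    (fun u hu => hrep m (hsub2 (Set.left_mem_Icc.2 hmb)) u (hsub2 hu))
    (by filter_upwards [hae] with u hu hmem; exact hu (hsub2 hmem))
    (fun u hu => hSnn (b - u) ⟨by linarith [hu.2], by simp only [hθ]; linarith [hu.1, ham]⟩)
  have e1 : m - a = t * θ := by simp [hm]
  have e2 : b - m = (1 - t) * θ := by simp only [hm, hθ]; ring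
  beta_reduce at W1 W2
  rw [e1, sub_self, hS0, hC0] at W1
  rw [e2, sub_self, hS0, hC0] at W2
  have hst : 0 ≤ S (t * θ) := hSnn _ ⟨by positivity, by nlinarith⟩
  have hs1t : 0 ≤ S ((1 - t) * θ) := hSnn _ ⟨by nlinarith, by nlinarith⟩
  have hSθ : S θ = S (t * θ) * C ((1 - t) * θ) + C (t * θ) * S ((1 - t) * θ) := by
    have := hadd (t * θ) ((1 - t) * θ)
    rw [show t * θ + (1 - t) * θ = θ by ring] at this
    exact this
  rw [hSθ]
  nlinarith [mul_le_mul_of_nonneg_right W1 hs1t, mul_le_mul_of_nonneg_right W2 hst]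


/-- Differential criterion for `CD(K,N)` densities: if `h` is positive and differentiable
on an open interval `I`, its derivative is locally absolutely continuous on `I` (encoded
via the fundamental theorem of calculus with density `deriv (deriv h)`), and
`(log h)''(x) + ((log h)'(x))²/(N-1) ≤ -K` for a.e. `x ∈ I`, then (i) if `K > 0` the
length of `I` is at most `π·√((N-1)/K)` and (ii) `h` is a `CD(K,N)` density on `I`. -/
theorem statement16 (K N : ℝ) (hN : 1 < N) (I : Set ℝ)
    (hIopen : IsOpen I) (hIconv : Convex ℝ I) (h : ℝ → ℝ)
    (hpos : ∀ x ∈ I, 0 < h x) (hdiff : ∀ x ∈ I, DifferentiableAt ℝ h x)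
    (hAC : ∀ x ∈ I, ∀ y ∈ I,
      IntervalIntegrable (deriv (deriv h)) MeasureTheory.volume x y ∧
      deriv h y = deriv h x + ∫ u in x..y, deriv (deriv h) u)
    (hineq : ∀ᵐ x ∂((MeasureTheory.volume : MeasureTheory.Measure ℝ).restrict I),
      deriv (deriv h) x / h x - (deriv h x / h x) ^ 2
          + (deriv h x / h x) ^ 2 / (N - 1) ≤ -K) :
    (0 < K → ∀ x ∈ I, ∀ y ∈ I, |x - y| ≤ Real.pi * Real.sqrt ((N - 1) / K)) ∧
      IsCDDensity K N h I := by
  have hN1 : (0:ℝ) < N - 1 := by linarith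
  set α : ℝ := 1 / (N - 1) with hα_def
  have hα : 0 < α := by positivity
  set lam : ℝ := K / (N - 1) with hlam_def
  have hlamKα : lam = K * α := by rw [hlam_def, hα_def]; ring
  set h1 : ℝ → ℝ := deriv h with h1_def
  set h2 : ℝ → ℝ := deriv (deriv h) with h2_def
  have hhd : ∀ u ∈ I, HasDerivAt h (h1 u) u := fun u hu => (hdiff u hu).hasDerivAt
  have hseg : ∀ a ∈ I, ∀ b ∈ I, a ≤ b → Set.Icc a b ⊆ I := fun a ha b hb _ =>
    hIconv.ordConnected.out ha hb
  have hh1c : ∀ a ∈ I, ∀ b ∈ I, a ≤ b → ContinuousOn h1 (Set.Icc a b) := by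
    intro a ha b hb hab
    have hsub := hseg a ha b hb hab
    have hprim : ContinuousOn (fun y => h1 a + ∫ u in a..y, h2 u) (Set.Icc a b) := by
      apply continuousOn_const.add
      have := continuousOn_primitive_interval' (hAC a ha b hb).1
        (a := a) (by rw [uIcc_of_le hab]; exact Set.left_mem_Icc.2 hab)
      rwa [uIcc_of_le hab] at this
    exact hprim.congr (fun y hy => (hAC a ha y (hsub hy)).2)
  -- the pointwise a.e. differential inequality for the power function
  have haeI : ∀ᵐ u ∂(volume : Measure ℝ), u ∈ I →
      α * (α - 1) * h u ^ (α - 2) * h1 u ^ 2 + α * h u ^ (α - 1) * h2 u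
        + lam * h u ^ α ≤ 0 := by
    rw [ae_restrict_iff' hIopen.measurableSet] at hineq
    filter_upwards [hineq] with u hu hmem
    have hp := hpos u hmem
    have hne : h u ≠ 0 := ne_of_gt hp
    have hK := hu hmem
    have e1 : h u ^ (α - 1) = h u ^ α / h u := by
      rw [Real.rpow_sub hp, Real.rpow_one]
    have e2 : h u ^ (α - 2) = h u ^ α / h u ^ 2 := by
      rw [Real.rpow_sub hp, show (2:ℝ) = ((2:ℕ):ℝ) by norm_num, Real.rpow_natCast]
    have hpowpos : 0 < h u ^ α := Real.rpow_pos_of_pos hp α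
    have key : α * (α - 1) * h u ^ (α - 2) * h1 u ^ 2 + α * h u ^ (α - 1) * h2 u
        + lam * h u ^ α
        = (α * h u ^ α) *
          ((h2 u / h u - (h1 u / h u) ^ 2 + (h1 u / h u) ^ 2 / (N - 1)) + K) := by
      rw [e1, e2, hlam_def, hα_def]
      field_simp
      ring
    rw [key]
    have hbr : (h2 u / h u - (h1 u / h u) ^ 2 + (h1 u / h u) ^ 2 / (N - 1)) + K ≤ 0 := by
      linarith
    exact mul_nonpos_of_nonneg_of_nonpos (by positivity) hbr
  -- instantiated key inequality on segments of I
  have mainI : ∀ (S C : ℝ → ℝ), (∀ r, HasDerivAt S (C r) r) →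
      (∀ r, HasDerivAt C (-(lam * S r)) r) → S 0 = 0 → C 0 = 1 →
      (∀ p q, S (p + q) = S p * C q + C p * S q) →
      ∀ a, a ∈ I → ∀ b, b ∈ I → a ≤ b → (∀ r ∈ Set.Icc (0:ℝ) (b - a), 0 ≤ S r) →
      ∀ s, s ∈ Set.Icc (0:ℝ) 1 →
      S (s * (b - a)) * h b ^ α + S ((1 - s) * (b - a)) * h a ^ α
        ≤ h (a + s * (b - a)) ^ α * S (b - a) := by
    intro S C hS hC hS0 hC0 hadd a ha b hb hab hSnn s hs
    have hsub := hseg a ha b hb hab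
    exact key_ineq h h1 h2 α lam S C hS hC hS0 hC0 hadd a b hab hSnn
      (fun u hu => hpos u (hsub hu)) (fun u hu => hhd u (hsub hu))
      (hh1c a ha b hb hab) (hAC a ha b hb).1
      (fun u hu v hv => (hAC u (hsub hu) v (hsub hv)).2)
      (by filter_upwards [haeI] with u hu hmem; exact hu (hsub hmem)) s hs
  -- length bound
  have claim : 0 < K → ∀ a ∈ I, ∀ b ∈ I, a ≤ b → b - a ≤ Real.pi / Real.sqrt lam := by
    intro hK a ha b hb hab
    have hlampos : 0 < lam := by rw [hlam_def]; positivity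
    have hν : 0 < Real.sqrt lam := Real.sqrt_pos.2 hlampos
    have hν2 : Real.sqrt lam ^ 2 = lam := Real.sq_sqrt hlampos.le
    set ν := Real.sqrt lam with hν_def
    by_contra hcon
    push_neg at hcon
    set z := a + Real.pi / ν with hz_def
    have hπν : 0 < Real.pi / ν := div_pos Real.pi_pos hν
    have haz : a ≤ z := by rw [hz_def]; linarith
    have hzb : z ≤ b := by rw [hz_def]; linarith
    have hzI : z ∈ I := hseg a ha b hb hab ⟨haz, hzb⟩
    have hsub := hseg a ha z hzI haz
    have hc : ∀ u : ℝ, HasDerivAt (fun u => Real.sin ((u - a) * ν) / ν)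
        (Real.cos ((u - a) * ν)) u := by
      intro u
      have := (sin_hasDeriv ν hν.ne' (u - a)).comp u ((hasDerivAt_id u).sub_const a)
      simpa [Function.comp_def] using this
    have hc' : ∀ u : ℝ, HasDerivAt (fun u => Real.cos ((u - a) * ν))
        (-(lam * (Real.sin ((u - a) * ν) / ν))) u := by
      intro u
      have := (cos_hasDeriv ν lam hν.ne' hν2 (u - a)).comp u ((hasDerivAt_id u).sub_const a)
      simpa [Function.comp_def] using this
    have W := wronskian_step h h1 h2 α lam _ _ hc hc' a z haz
      (fun u hu => hpos u (hsub hu)) (fun u hu => hhd u (hsub hu))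
      (hh1c a ha z hzI haz) (hAC a ha z hzI).1
      (fun u hu => (hAC a ha u (hsub hu)).2)
      (by filter_upwards [haeI] with u hu hmem; exact hu (hsub hmem))
      (fun u hu => by
        apply div_nonneg _ hν.le
        apply Real.sin_nonneg_of_nonneg_of_le_pi (mul_nonneg (by linarith [hu.1]) hν.le)
        have h3 : u - a ≤ Real.pi / ν := by
          have := hu.2; rw [hz_def] at this; linarith
        calc (u - a) * ν ≤ (Real.pi / ν) * ν := mul_le_mul_of_nonneg_right h3 hν.le
          _ = Real.pi := by field_simp)
    beta_reduce at W
    have ez : (z - a) * ν = Real.pi := by rw [hz_def]; field_simp; ring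
    have ea : (a - a) * ν = 0 := by ring
    rw [ez, ea] at W
    simp only [Real.sin_pi, Real.cos_pi, Real.sin_zero, Real.cos_zero, zero_div,
      mul_zero, mul_one, mul_neg_one, zero_sub, sub_zero] at W
    have p1 := Real.rpow_pos_of_pos (hpos z hzI) α
    have p2 := Real.rpow_pos_of_pos (hpos a ha) α
    linarith
  have hMnonneg : 0 < K → 0 < Real.pi / Real.sqrt lam := fun hK =>
    div_pos Real.pi_pos (Real.sqrt_pos.2 (by rw [hlam_def]; positivity))
  -- part (i)
  have parti : 0 < K → ∀ x ∈ I, ∀ y ∈ I, |x - y| ≤ Real.pi * Real.sqrt ((N - 1) / K) := by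
    intro hK x hx y hy
    have hsqrt : Real.pi * Real.sqrt ((N - 1) / K) = Real.pi / Real.sqrt lam := by
      rw [show (N - 1) / K = ((K / (N - 1)))⁻¹ from (inv_div K (N - 1)).symm,
        Real.sqrt_inv, hlam_def, div_eq_mul_inv]
      ring
    rw [hsqrt, abs_sub_le_iff]
    constructor
    · rcases le_total x y with hxy | hxy
      · linarith [hMnonneg hK]
      · linarith [claim hK y hy x hx hxy]
    · rcases le_total x y with hxy | hxy
      · linarith [claim hK x hx y hy hxy]
      · linarith [hMnonneg hK]
  -- strict bound
  have strict : 0 < K → ∀ a ∈ I, ∀ b ∈ I, a < b → (b - a) * Real.sqrt lam < Real.pi := by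
    intro hK a ha b hb hab
    have hν : 0 < Real.sqrt lam := Real.sqrt_pos.2 (by rw [hlam_def]; positivity)
    obtain ⟨ε, hε, hball⟩ := Metric.isOpen_iff.mp hIopen b hb
    have hb' : b + ε / 2 ∈ I := by
      apply hball
      show dist (b + ε / 2) b < ε
      rw [Real.dist_eq, show b + ε / 2 - b = ε / 2 by ring, abs_of_pos (by linarith)]
      linarith
    have h1' := claim hK a ha (b + ε / 2) hb' (by linarith)
    have hlt : b - a < Real.pi / Real.sqrt lam := by linarith
    exact (lt_div_iff₀ hν).mp hlt
  refine ⟨parti, fun x hx => (hpos x hx).le, ?_⟩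
  intro x₀ hx₀ x₁ hx₁ t ht
  simp only [← hα_def]
  by_cases hθz : |x₁ - x₀| = 0
  · rw [hθz]
    have hxe : x₁ = x₀ := by
      have := abs_eq_zero.mp hθz; linarith [sub_eq_zero.mp this]
    rw [hxe, show t * x₀ + (1 - t) * x₀ = x₀ by ring]
    have gnn : (0:ℝ) ≤ h x₀ ^ α := (Real.rpow_pos_of_pos (hpos x₀ hx₀) α).le
    simp only [sigmaCoeff, if_pos rfl, if_true]
    rw [← ENNReal.ofReal_mul ht.1, ← ENNReal.ofReal_mul (by linarith [ht.2] : (0:ℝ) ≤ 1 - t),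
      ← ENNReal.ofReal_add (mul_nonneg ht.1 gnn) (mul_nonneg (by linarith [ht.2]) gnn)]
    exact ENNReal.ofReal_le_ofReal (le_of_eq (by ring))
  · set θ := |x₁ - x₀| with hθdef
    have hθpos : 0 < θ := lt_of_le_of_ne (abs_nonneg _) (Ne.symm hθz)
    have hsub_ne : x₁ - x₀ ≠ 0 := fun hh0 => hθz (by rw [hθdef, hh0, abs_zero])
    have gnn1 : (0:ℝ) ≤ h x₁ ^ α := (Real.rpow_pos_of_pos (hpos x₁ hx₁) α).le
    have gnn0 : (0:ℝ) ≤ h x₀ ^ α := (Real.rpow_pos_of_pos (hpos x₀ hx₀) α).le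
    have hreal : ∀ (S C : ℝ → ℝ), (∀ r, HasDerivAt S (C r) r) →
        (∀ r, HasDerivAt C (-(lam * S r)) r) → S 0 = 0 → C 0 = 1 →
        (∀ p q, S (p + q) = S p * C q + C p * S q) →
        (∀ r ∈ Set.Icc (0:ℝ) θ, 0 ≤ S r) →
        S (t * θ) * h x₁ ^ α + S ((1 - t) * θ) * h x₀ ^ α
          ≤ h (t * x₁ + (1 - t) * x₀) ^ α * S θ := by
      intro S C hS hC hS0 hC0 hadd hSnn
      rcases lt_or_gt_of_ne hsub_ne with hlt | hgt
      · have hθeq : θ = x₀ - x₁ := by rw [hθdef, abs_of_neg hlt, neg_sub]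
        have H := mainI S C hS hC hS0 hC0 hadd x₁ hx₁ x₀ hx₀ (by linarith)
          (by rw [← hθeq]; exact hSnn) (1 - t) ⟨by linarith [ht.2], by linarith [ht.1]⟩
        rw [show (1 - (1 - t)) = t by ring,
          show x₁ + (1 - t) * (x₀ - x₁) = t * x₁ + (1 - t) * x₀ by ring] at H
        rw [hθeq]
        linarith
      · have hθeq : θ = x₁ - x₀ := by rw [hθdef, abs_of_pos hgt]
        have H := mainI S C hS hC hS0 hC0 hadd x₀ hx₀ x₁ hx₁ (by linarith) 
          (by rw [← hθeq]; exact hSnn) t ht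
        rw [show x₀ + t * (x₁ - x₀) = t * x₁ + (1 - t) * x₀ by ring] at H
        rw [hθeq]
        linarith
    rcases lt_trichotomy K 0 with hKneg | hK0 | hKpos
    · -- K < 0 : hyperbolic case
      have hμ : 0 < Real.sqrt (-K / (N - 1)) := Real.sqrt_pos.2 (div_pos (by linarith) hN1)
      set μ := Real.sqrt (-K / (N - 1)) with hμ_def
      have hμ2 : μ ^ 2 = -lam := by
        rw [hμ_def, hlam_def, ← neg_div]
        exact Real.sq_sqrt (div_pos (by linarith) hN1).le
      have HR := hreal (fun r => Real.sinh (r * μ) / μ) (fun r => Real.cosh (r * μ))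
        (fun r => sinh_hasDeriv μ hμ.ne' r) (fun r => cosh_hasDeriv μ lam hμ.ne' hμ2 r)
        (by simp) (by simp)
        (fun p q => by beta_reduce; rw [add_mul, Real.sinh_add]; ring)
        (fun r hr => div_nonneg (Real.sinh_nonneg_iff.2 (mul_nonneg hr.1 hμ.le)) hμ.le)
      have hsθ : 0 < Real.sinh (θ * μ) := Real.sinh_pos_iff.2 (mul_pos hθpos hμ)
      have hs1 : 0 ≤ Real.sinh (t * (θ * μ)) :=
        Real.sinh_nonneg_iff.2 (mul_nonneg ht.1 (mul_pos hθpos hμ).le)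
      have hs2 : 0 ≤ Real.sinh ((1 - t) * (θ * μ)) :=
        Real.sinh_nonneg_iff.2 (mul_nonneg (by linarith [ht.2]) (mul_pos hθpos hμ).le)
      simp only [sigmaCoeff, if_neg hθz, if_neg (not_lt.2 hKneg.le), if_neg hKneg.ne,
        ← hμ_def]
      rw [div_mul_eq_mul_div, div_mul_eq_mul_div, ← add_div,
        show h (t * x₁ + (1 - t) * x₀) ^ α * (Real.sinh (θ * μ) / μ)
          = h (t * x₁ + (1 - t) * x₀) ^ α * Real.sinh (θ * μ) / μ by ring] at HR
      have HR2 := (div_le_div_iff_of_pos_right hμ).mp HR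
      rw [← ENNReal.ofReal_mul (div_nonneg hs1 hsθ.le),
        ← ENNReal.ofReal_mul (div_nonneg hs2 hsθ.le),
        ← ENNReal.ofReal_add (mul_nonneg (div_nonneg hs1 hsθ.le) gnn1)
          (mul_nonneg (div_nonneg hs2 hsθ.le) gnn0)]
      apply ENNReal.ofReal_le_ofReal
      rw [div_mul_eq_mul_div, div_mul_eq_mul_div, ← add_div, div_le_iff₀ hsθ]
      rw [show t * (θ * μ) = t * θ * μ by ring,
        show (1 - t) * (θ * μ) = (1 - t) * θ * μ by ring]
      exact HR2
    · -- K = 0 : linear case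
      have hlam0 : lam = 0 := by rw [hlam_def, hK0, zero_div]
      have HR := hreal (fun r => r) (fun _ => 1) (fun r => hasDerivAt_id r)
        (fun r => by simpa [hlam0] using hasDerivAt_const r (1:ℝ)) rfl rfl
        (fun p q => by ring) (fun r hr => hr.1)
      rw [hK0]
      simp only [sigmaCoeff, if_neg hθz, if_neg (lt_irrefl (0:ℝ)), if_pos rfl, if_true]
      have hrl : t * h x₁ ^ α + (1 - t) * h x₀ ^ α ≤ h (t * x₁ + (1 - t) * x₀) ^ α := by
        have hmul : θ * (t * h x₁ ^ α + (1 - t) * h x₀ ^ α)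
            ≤ θ * (h (t * x₁ + (1 - t) * x₀) ^ α) := by nlinarith [HR]
        exact le_of_mul_le_mul_left hmul hθpos
      rw [← ENNReal.ofReal_mul ht.1, ← ENNReal.ofReal_mul (by linarith [ht.2] : (0:ℝ) ≤ 1 - t),
        ← ENNReal.ofReal_add (mul_nonneg ht.1 gnn1) (mul_nonneg (by linarith [ht.2]) gnn0)]
      exact ENNReal.ofReal_le_ofReal hrl
    · -- K > 0 : trigonometric case
      have hν : 0 < Real.sqrt (K / (N - 1)) := Real.sqrt_pos.2 (by positivity)
      set ν := Real.sqrt (K / (N - 1)) with hν_def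
      have hν2 : ν ^ 2 = lam := by
        rw [hν_def, hlam_def]
        exact Real.sq_sqrt (by positivity)
      have hsl : Real.sqrt lam = ν := by rw [hν_def, hlam_def]
      have hθν : θ * ν < Real.pi := by
        rcases lt_or_gt_of_ne hsub_ne with hlt | hgt
        · have H := strict hKpos x₁ hx₁ x₀ hx₀ (by linarith)
          rw [hθdef, abs_of_neg hlt, neg_sub]
          exact H
        · have H := strict hKpos x₀ hx₀ x₁ hx₁ (by linarith)
          rw [hθdef, abs_of_pos hgt]
          exact H
      have hθν0 : (0:ℝ) ≤ θ * ν := (mul_pos hθpos hν).le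
      have HR := hreal (fun r => Real.sin (r * ν) / ν) (fun r => Real.cos (r * ν))
        (fun r => sin_hasDeriv ν hν.ne' r) (fun r => cos_hasDeriv ν lam hν.ne' hν2 r)
        (by simp) (by simp)
        (fun p q => by beta_reduce; rw [add_mul, Real.sin_add]; ring)
        (fun r hr => by
          apply div_nonneg _ hν.le
          apply Real.sin_nonneg_of_nonneg_of_le_pi (mul_nonneg hr.1 hν.le)
          calc r * ν ≤ θ * ν := mul_le_mul_of_nonneg_right hr.2 hν.le
            _ ≤ Real.pi := hθν.le)
      have hsθ : 0 < Real.sin (θ * ν) := Real.sin_pos_of_pos_of_lt_pi (mul_pos hθpos hν) hθν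
      have hs1 : 0 ≤ Real.sin (t * (θ * ν)) := by
        apply Real.sin_nonneg_of_nonneg_of_le_pi (mul_nonneg ht.1 hθν0)
        calc t * (θ * ν) ≤ 1 * (θ * ν) := mul_le_mul_of_nonneg_right ht.2 hθν0
          _ = θ * ν := one_mul _
          _ ≤ Real.pi := hθν.le
      have hs2 : 0 ≤ Real.sin ((1 - t) * (θ * ν)) := by
        apply Real.sin_nonneg_of_nonneg_of_le_pi (mul_nonneg (by linarith [ht.2]) hθν0)
        calc (1 - t) * (θ * ν) ≤ 1 * (θ * ν) :=
              mul_le_mul_of_nonneg_right (by linarith [ht.1]) hθν0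
          _ = θ * ν := one_mul _
          _ ≤ Real.pi := hθν.le
      simp only [sigmaCoeff, if_neg hθz, if_pos hKpos, ← hν_def, hθν, if_true]
      rw [div_mul_eq_mul_div, div_mul_eq_mul_div, ← add_div,
        show h (t * x₁ + (1 - t) * x₀) ^ α * (Real.sin (θ * ν) / ν)
          = h (t * x₁ + (1 - t) * x₀) ^ α * Real.sin (θ * ν) / ν by ring] at HR
      have HR2 := (div_le_div_iff_of_pos_right hν).mp HR
      rw [← ENNReal.ofReal_mul (div_nonneg hs1 hsθ.le),
        ← ENNReal.ofReal_mul (div_nonneg hs2 hsθ.le),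
        ← ENNReal.ofReal_add (mul_nonneg (div_nonneg hs1 hsθ.le) gnn1)
          (mul_nonneg (div_nonneg hs2 hsθ.le) gnn0)]
      apply ENNReal.ofReal_le_ofReal
      rw [div_mul_eq_mul_div, div_mul_eq_mul_div, ← add_div, div_le_iff₀ hsθ]
      rw [show t * (θ * ν) = t * θ * ν by ring,
        show (1 - t) * (θ * ν) = (1 - t) * θ * ν by ring]
      exact HR2
end

section
/- Let K ∈ ℝ, N ∈ (1,∞), and let h be a CD(K,N) density on a finite interval (a,b), not identically zero (hence strictly positive on (a,b)). Then at any point x ∈ (a,b) at which h is differentiable: −(N−1)·ct_{K/(N−1)}(b−x) ≤ (log h)′(x) ≤ (N−1)·ct_{K/(N−1)}(x−a). In particular, log h is locally Lipschitz on (a,b) with bounds depending continuously only on x, a, b, K, N. -/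
/-- The coefficient `ct_κ(θ)`: `√κ·cot(θ√κ)` for `κ > 0`, `1/θ` for `κ = 0`, and
`√(-κ)·coth(θ√(-κ))` for `κ < 0`. -/
noncomputable def ctCoeff (κ θ : ℝ) : ℝ :=
  if 0 < κ then Real.sqrt κ * (Real.cos (θ * Real.sqrt κ) / Real.sin (θ * Real.sqrt κ))
  else if κ = 0 then 1 / θ
  else Real.sqrt (-κ) * (Real.cosh (θ * Real.sqrt (-κ)) / Real.sinh (θ * Real.sqrt (-κ)))

open Real Set Filter Topology

lemma aux_slope {f ψ : ℝ → ℝ} {x θ d e : ℝ} (hθ : 0 < θ)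
    (hf : HasDerivAt f d x) (hψ : HasDerivAt ψ e 0) (h0 : ψ 0 = f x)
    (hle : ∀ s ∈ Set.Ioo (0:ℝ) θ, ψ s ≤ f (x + s)) : e ≤ d := by
  have hinner : HasDerivAt (fun s : ℝ => x + s) 1 0 := by
    simpa using (hasDerivAt_id (0:ℝ)).const_add x
  have hfx : HasDerivAt f d (x + 0) := by simpa using hf
  have hF : HasDerivAt (fun s => f (x + s) - ψ s) (d - e) 0 := by
    have := (hfx.comp 0 hinner).sub hψ
    exact this.congr_deriv (by ring)
  have hslope := hasDerivAt_iff_tendsto_slope.mp hF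
  have hmono : 𝓝[>] (0:ℝ) ≤ 𝓝[≠] (0:ℝ) :=
    nhdsWithin_mono 0 (fun y hy => ne_of_gt hy)
  have h1 : (0:ℝ) ≤ d - e := by
    refine ge_of_tendsto (hslope.mono_left hmono) ?_
    filter_upwards [Ioo_mem_nhdsGT_of_mem (show (0:ℝ) ∈ Ico 0 θ from ⟨le_refl _, hθ⟩)]
      with s hs
    have h2 : ψ s ≤ f (x + s) := hle s hs
    rw [slope_def_field]
    show 0 ≤ (f (x + s) - ψ s - (f (x + 0) - ψ 0)) / (s - 0)
    have h3 : (0:ℝ) < s := hs.1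
    apply div_nonneg _ (by linarith)
    rw [add_zero, h0]
    linarith
  linarith

lemma aux_sigma_ne_zero {K Np t θ : ℝ} (hNp : 0 < Np) (ht : 0 < t) (ht1 : t ≤ 1)
    (hθ : 0 < θ) : sigmaCoeff K Np t θ ≠ 0 := by
  rw [sigmaCoeff, if_neg hθ.ne']
  by_cases hK : 0 < K
  · rw [if_pos hK]
    by_cases hπ : θ * Real.sqrt (K / Np) < Real.pi
    · rw [if_pos hπ]
      have hc : 0 < Real.sqrt (K / Np) := Real.sqrt_pos.mpr (div_pos hK hNp)
      have hθc : 0 < θ * Real.sqrt (K / Np) := mul_pos hθ hc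
      have h1 : 0 < Real.sin (t * (θ * Real.sqrt (K / Np))) :=
        Real.sin_pos_of_pos_of_lt_pi (mul_pos ht hθc)
          (lt_of_le_of_lt (by nlinarith) hπ)
      have h2 : 0 < Real.sin (θ * Real.sqrt (K / Np)) :=
        Real.sin_pos_of_pos_of_lt_pi hθc hπ
      simp [ENNReal.ofReal_eq_zero, not_le, div_pos h1 h2]
    · simp [if_neg hπ]
  · rw [if_neg hK]
    by_cases hK0 : K = 0
    · simp [hK0, ENNReal.ofReal_eq_zero, not_le, ht]
    · rw [if_neg hK0]
      have hKneg : -K > 0 := by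
        rcases lt_trichotomy K 0 with h|h|h
        · linarith
        · exact absurd h hK0
        · exact absurd h hK
      have hc : 0 < Real.sqrt (-K / Np) := Real.sqrt_pos.mpr (div_pos hKneg hNp)
      have h1 : 0 < Real.sinh (t * (θ * Real.sqrt (-K / Np))) :=
        Real.sinh_pos_iff.mpr (by positivity)
      have h2 : 0 < Real.sinh (θ * Real.sqrt (-K / Np)) :=
        Real.sinh_pos_iff.mpr (by positivity)
      simp [ENNReal.ofReal_eq_zero, not_le, div_pos h1 h2]

lemma aux_pi {K N a b : ℝ} {h : ℝ → ℝ} (hN : 1 < N) (hK : 0 < K)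
    (hCD : IsCDDensity K N h (Set.Ioo a b)) {x x₁ : ℝ} (hx : x ∈ Set.Ioo a b)
    (hx1 : x₁ ∈ Set.Ioo a b) (hpos : 0 < h x) (hne : x₁ ≠ x) :
    |x₁ - x| * Real.sqrt (K / (N - 1)) < Real.pi := by
  by_contra hge
  have hθ : (0:ℝ) < |x₁ - x| := abs_pos.mpr (sub_ne_zero.mpr hne)
  have happ := hCD.2 x hx x₁ hx1 0 ⟨le_refl _, zero_le_one⟩
  rw [show (0:ℝ) * x₁ + (1 - 0) * x = x by ring] at happ
  have hσ : sigmaCoeff K (N - 1) (1 - 0) |x₁ - x| = ⊤ := by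
    rw [sigmaCoeff, if_neg hθ.ne', if_pos hK, if_neg hge]
  rw [hσ] at happ
  have hGne : ENNReal.ofReal (h x ^ (1 / (N - 1))) ≠ 0 :=
    (ENNReal.ofReal_pos.mpr (Real.rpow_pos_of_pos hpos _)).ne'
  rw [ENNReal.top_mul hGne] at happ
  simp only [add_top, top_le_iff] at happ
  exact ENNReal.ofReal_ne_top happ

lemma aux_pos {K N a b : ℝ} {h : ℝ → ℝ} (hN : 1 < N)
    (hCD : IsCDDensity K N h (Set.Ioo a b)) (hne : ∃ x ∈ Set.Ioo a b, h x ≠ 0) :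
    ∀ y ∈ Set.Ioo a b, 0 < h y := by
  obtain ⟨z, hz, hzne⟩ := hne
  have hz0 : 0 < h z := lt_of_le_of_ne (hCD.1 z hz) (Ne.symm hzne)
  intro y hy
  rcases eq_or_ne y z with rfl | hyz
  · exact hz0
  -- choose w beyond y, on the far side from z
  obtain ⟨w, hwI, ht0, ht1, hwz⟩ :
      ∃ w ∈ Set.Ioo a b, 0 < (y - z) / (w - z) ∧ (y - z) / (w - z) < 1 ∧ w ≠ z := by
    rcases lt_or_gt_of_ne hyz with hlt | hgt
    · refine ⟨(a + y) / 2, ⟨by linarith [hy.1], by linarith [hy.1, hy.2, hz.2]⟩, ?_, ?_, ?_⟩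
      · rw [show (y - z) / ((a + y) / 2 - z) = (z - y) / (z - (a + y) / 2) by
          rw [← neg_div_neg_eq]; ring_nf]
        exact div_pos (by linarith) (by linarith [hy.1])
      · rw [show (y - z) / ((a + y) / 2 - z) = (z - y) / (z - (a + y) / 2) by
          rw [← neg_div_neg_eq]; ring_nf]
        rw [div_lt_one (by linarith [hy.1])]
        linarith [hy.1]
      · intro hc; rw [← hc] at hlt; linarith [hy.1]
    · refine ⟨(y + b) / 2, ⟨by linarith [hy.2, hz.1], by linarith [hy.2]⟩, ?_, ?_, ?_⟩
      · exact div_pos (by linarith) (by linarith [hy.2])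
      · rw [div_lt_one (by linarith [hy.2])]
        linarith [hy.2]
      · intro hc; rw [← hc] at hgt; linarith [hy.2]
  set t := (y - z) / (w - z) with htdef
  have hwzne : w - z ≠ 0 := sub_ne_zero.mpr hwz
  have hpt : t * w + (1 - t) * z = y := by
    rw [htdef]
    field_simp
    ring
  have happ := hCD.2 z hz w hwI t ⟨ht0.le, ht1.le⟩
  rw [hpt] at happ
  have h2 : sigmaCoeff K (N - 1) (1 - t) |w - z| * ENNReal.ofReal (h z ^ (1 / (N - 1)))
      ≤ ENNReal.ofReal (h y ^ (1 / (N - 1))) := le_trans le_add_self happ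
  have hσne : sigmaCoeff K (N - 1) (1 - t) |w - z| ≠ 0 :=
    aux_sigma_ne_zero (by linarith) (by linarith) (by linarith) (abs_pos.mpr hwzne)
  have hGne : ENNReal.ofReal (h z ^ (1 / (N - 1))) ≠ 0 :=
    (ENNReal.ofReal_pos.mpr (Real.rpow_pos_of_pos hz0 _)).ne'
  have hne0 : ENNReal.ofReal (h y ^ (1 / (N - 1))) ≠ 0 := by
    intro hc
    rw [hc, le_zero_iff] at h2
    exact (mul_ne_zero hσne hGne) h2
  have hyp : 0 < h y ^ (1 / (N - 1)) :=
    lt_of_not_ge fun hc => hne0 (ENNReal.ofReal_eq_zero.mpr hc)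
  by_contra hc
  push_neg at hc
  have : h y = 0 := le_antisymm hc (hCD.1 y hy)
  rw [this, Real.zero_rpow (one_div_ne_zero (by linarith : N - (1:ℝ) ≠ 0))] at hyp
  exact lt_irrefl _ hyp

lemma aux_reflect {K N a b : ℝ} {h : ℝ → ℝ} (hCD : IsCDDensity K N h (Set.Ioo a b)) :
    IsCDDensity K N (fun y => h (a + b - y)) (Set.Ioo a b) := by
  constructor
  · intro y hy
    exact hCD.1 _ ⟨by linarith [hy.2], by linarith [hy.1]⟩
  · intro x₀ h₀ x₁ h₁ t ht
    have m₀ : a + b - x₀ ∈ Set.Ioo a b := ⟨by linarith [h₀.2], by linarith [h₀.1]⟩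
    have m₁ : a + b - x₁ ∈ Set.Ioo a b := ⟨by linarith [h₁.2], by linarith [h₁.1]⟩
    have happ := hCD.2 (a + b - x₀) m₀ (a + b - x₁) m₁ t ht
    rw [show a + b - x₁ - (a + b - x₀) = -(x₁ - x₀) by ring, abs_neg,
      show t * (a + b - x₁) + (1 - t) * (a + b - x₀) = a + b - (t * x₁ + (1 - t) * x₀) by ring]
      at happ
    simpa using happ

lemma aux_lower {K N a b : ℝ} (hN : 1 < N) {h : ℝ → ℝ}
    (hCD : IsCDDensity K N h (Set.Ioo a b)) {x : ℝ} (hx : x ∈ Set.Ioo a b)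
    (hpos : 0 < h x) {d : ℝ} (hd : HasDerivAt h d x) :
    -(N - 1) * ctCoeff (K / (N - 1)) (b - x) ≤ d / h x := by
  obtain ⟨hax, hxb⟩ := hx
  have hNp : (0:ℝ) < N - 1 := by linarith
  have hg : HasDerivAt (fun y => h y ^ (1/(N-1))) (d * (1/(N-1)) * h x ^ (1/(N-1) - 1)) x :=
    hd.rpow_const (Or.inl hpos.ne')
  have hG : 0 < h x ^ (1/(N-1)) := Real.rpow_pos_of_pos hpos _
  have finish_alg : ∀ C : ℝ, -C * h x ^ (1/(N-1)) ≤ d * (1/(N-1)) * h x ^ (1/(N-1) - 1) →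
      -(N - 1) * C ≤ d / h x := by
    intro C hC
    rw [Real.rpow_sub_one hpos.ne'] at hC
    have e1 : d * (1/(N-1)) * (h x ^ (1/(N-1)) / h x)
        = (d * (1/(N-1)) / h x) * h x ^ (1/(N-1)) := by ring
    rw [e1] at hC
    have h2 : -C ≤ d * (1/(N-1)) / h x := le_of_mul_le_mul_right hC hG
    have h3 := mul_le_mul_of_nonneg_right h2 hNp.le
    have e2 : d * (1/(N-1)) / h x * (N - 1) = d / h x := by
      field_simp
    rw [e2] at h3
    linarith
  have base : ∀ θ ∈ Set.Ioo (0:ℝ) (b - x), ∀ s ∈ Set.Ioo (0:ℝ) θ,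
      sigmaCoeff K (N-1) (1 - s/θ) θ * ENNReal.ofReal (h x ^ (1/(N-1)))
        ≤ ENNReal.ofReal (h (x + s) ^ (1/(N-1))) := by
    intro θ hθI s hsI
    have hθ : 0 < θ := hθI.1
    have hx1I : x + θ ∈ Set.Ioo a b := ⟨by linarith, by linarith [hθI.2]⟩
    have happ := hCD.2 x ⟨hax, hxb⟩ (x + θ) hx1I (s/θ)
      ⟨div_nonneg hsI.1.le hθ.le, by rw [div_le_one hθ]; exact hsI.2.le⟩
    rw [show x + θ - x = θ by ring, abs_of_pos hθ,
      show s/θ * (x + θ) + (1 - s/θ) * x = x + s by field_simp; ring] at happ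
    exact le_trans le_add_self happ
  have key : ∀ θ ∈ Set.Ioo (0:ℝ) (b - x), -(N-1) * ctCoeff (K/(N-1)) θ ≤ d / h x := by
    intro θ hθI
    have hθ : 0 < θ := hθI.1
    have hmemxs : ∀ s ∈ Set.Ioo (0:ℝ) θ, x + s ∈ Set.Ioo a b := fun s hs =>
      ⟨by linarith [hs.1], by linarith [hs.2, hθI.2]⟩
    have hfrac : ∀ s ∈ Set.Ioo (0:ℝ) θ, 0 ≤ 1 - s/θ := by
      intro s hs
      rw [sub_nonneg, div_le_one hθ]
      exact hs.2.le
    rcases lt_trichotomy K 0 with hK | hK | hK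
    · -- K < 0
      have hKd : K / (N-1) < 0 := div_neg_of_neg_of_pos hK hNp
      set c := Real.sqrt (-K / (N-1)) with hcdef
      have hc : 0 < c := Real.sqrt_pos.mpr (div_pos (by linarith) hNp)
      have hsinh : 0 < Real.sinh (θ * c) := Real.sinh_pos_iff.mpr (mul_pos hθ hc)
      have hle : ∀ s ∈ Set.Ioo (0:ℝ) θ,
          Real.sinh ((1 - s/θ) * (θ * c)) / Real.sinh (θ * c) * h x ^ (1/(N-1))
            ≤ (fun y => h y ^ (1/(N-1))) (x + s) := by
        intro s hs
        have hb := base θ hθI s hs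
        rw [sigmaCoeff, if_neg hθ.ne', if_neg (not_lt.mpr hK.le), if_neg hK.ne] at hb
        have hnum : 0 ≤ Real.sinh ((1 - s/θ) * (θ * c)) :=
          Real.sinh_nonneg_iff.mpr (mul_nonneg (hfrac s hs) (mul_pos hθ hc).le)
        rw [← ENNReal.ofReal_mul (div_nonneg hnum hsinh.le)] at hb
        exact (ENNReal.ofReal_le_ofReal_iff
          (Real.rpow_nonneg (hCD.1 _ (hmemxs s hs)) _)).mp hb
      have d1 : HasDerivAt (fun s : ℝ => (1 - s/θ) * (θ * c)) (-(1/θ) * (θ * c)) 0 :=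
        (((hasDerivAt_id (0:ℝ)).div_const θ).const_sub 1).mul_const _
      have d2 := (Real.hasDerivAt_sinh ((1 - 0/θ) * (θ * c))).comp 0 d1
      have d3 := (d2.div_const (Real.sinh (θ * c))).mul_const (h x ^ (1/(N-1)))
      have d4 : HasDerivAt
          (fun s : ℝ => Real.sinh ((1 - s/θ) * (θ * c)) / Real.sinh (θ * c) * h x ^ (1/(N-1)))
          (-(c * (Real.cosh (θ * c) / Real.sinh (θ * c))) * h x ^ (1/(N-1))) 0 := by
        refine d3.congr_deriv ?_
        rw [zero_div, sub_zero, one_mul]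
        field_simp
      have h0 : Real.sinh ((1 - 0/θ) * (θ * c)) / Real.sinh (θ * c) * h x ^ (1/(N-1))
          = (fun y => h y ^ (1/(N-1))) x := by
        rw [zero_div, sub_zero, one_mul, div_self hsinh.ne', one_mul]
      have hslope := aux_slope hθ hg d4 h0 hle
      have hct : ctCoeff (K/(N-1)) θ = c * (Real.cosh (θ * c) / Real.sinh (θ * c)) := by
        rw [ctCoeff, if_neg (not_lt.mpr hKd.le), if_neg hKd.ne,
          show -(K/(N-1)) = -K/(N-1) from (neg_div _ _).symm]
      rw [hct]
      exact finish_alg _ hslope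
    · -- K = 0
      have hle : ∀ s ∈ Set.Ioo (0:ℝ) θ,
          (1 - s/θ) * h x ^ (1/(N-1)) ≤ (fun y => h y ^ (1/(N-1))) (x + s) := by
        intro s hs
        have hb := base θ hθI s hs
        rw [sigmaCoeff, if_neg hθ.ne', if_neg (by rw [hK]; exact lt_irrefl 0), if_pos hK] at hb
        rw [← ENNReal.ofReal_mul (hfrac s hs)] at hb
        exact (ENNReal.ofReal_le_ofReal_iff
          (Real.rpow_nonneg (hCD.1 _ (hmemxs s hs)) _)).mp hb
      have d1 : HasDerivAt (fun s : ℝ => (1 - s/θ) * h x ^ (1/(N-1)))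
          (-(1/θ) * h x ^ (1/(N-1))) 0 :=
        (((hasDerivAt_id (0:ℝ)).div_const θ).const_sub 1).mul_const _
      have h0 : (1 - 0/θ) * h x ^ (1/(N-1)) = (fun y => h y ^ (1/(N-1))) x := by
        rw [zero_div, sub_zero, one_mul]
      have hslope := aux_slope hθ hg d1 h0 hle
      have hct : ctCoeff (K/(N-1)) θ = 1/θ := by
        rw [ctCoeff, if_neg (by rw [hK]; simp), if_pos (by rw [hK]; simp)]
      rw [hct]
      exact finish_alg _ hslope
    · -- K > 0
      have hKd : 0 < K / (N-1) := div_pos hK hNp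
      set c := Real.sqrt (K / (N-1)) with hcdef
      have hc : 0 < c := Real.sqrt_pos.mpr hKd
      have hx1I : x + θ ∈ Set.Ioo a b := ⟨by linarith, by linarith [hθI.2]⟩
      have hπ : θ * c < Real.pi := by
        have := aux_pi hN hK hCD ⟨hax, hxb⟩ hx1I hpos (by intro hc'; linarith)
        rwa [show x + θ - x = θ by ring, abs_of_pos hθ] at this
      have hsin : 0 < Real.sin (θ * c) := Real.sin_pos_of_pos_of_lt_pi (mul_pos hθ hc) hπ
      have hle : ∀ s ∈ Set.Ioo (0:ℝ) θ,
          Real.sin ((1 - s/θ) * (θ * c)) / Real.sin (θ * c) * h x ^ (1/(N-1))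
            ≤ (fun y => h y ^ (1/(N-1))) (x + s) := by
        intro s hs
        have hb := base θ hθI s hs
        rw [sigmaCoeff, if_neg hθ.ne', if_pos hK, if_pos hπ] at hb
        have harg : (1 - s/θ) * (θ * c) ≤ θ * c := by
          nlinarith [mul_pos hθ hc, hs.1, (div_pos hs.1 hθ)]
        have hnum : 0 ≤ Real.sin ((1 - s/θ) * (θ * c)) :=
          Real.sin_nonneg_of_nonneg_of_le_pi
            (mul_nonneg (hfrac s hs) (mul_pos hθ hc).le) (by linarith)
        rw [← ENNReal.ofReal_mul (div_nonneg hnum hsin.le)] at hb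
        exact (ENNReal.ofReal_le_ofReal_iff
          (Real.rpow_nonneg (hCD.1 _ (hmemxs s hs)) _)).mp hb
      have d1 : HasDerivAt (fun s : ℝ => (1 - s/θ) * (θ * c)) (-(1/θ) * (θ * c)) 0 :=
        (((hasDerivAt_id (0:ℝ)).div_const θ).const_sub 1).mul_const _
      have d2 := (Real.hasDerivAt_sin ((1 - 0/θ) * (θ * c))).comp 0 d1
      have d3 := (d2.div_const (Real.sin (θ * c))).mul_const (h x ^ (1/(N-1)))
      have d4 : HasDerivAt
          (fun s : ℝ => Real.sin ((1 - s/θ) * (θ * c)) / Real.sin (θ * c) * h x ^ (1/(N-1)))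
          (-(c * (Real.cos (θ * c) / Real.sin (θ * c))) * h x ^ (1/(N-1))) 0 := by
        refine d3.congr_deriv ?_
        rw [zero_div, sub_zero, one_mul]
        field_simp
      have h0 : Real.sin ((1 - 0/θ) * (θ * c)) / Real.sin (θ * c) * h x ^ (1/(N-1))
          = (fun y => h y ^ (1/(N-1))) x := by
        rw [zero_div, sub_zero, one_mul, div_self hsin.ne', one_mul]
      have hslope := aux_slope hθ hg d4 h0 hle
      have hct : ctCoeff (K/(N-1)) θ = c * (Real.cos (θ * c) / Real.sin (θ * c)) := by
        rw [ctCoeff, if_pos hKd]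
      rw [hct]
      exact finish_alg _ hslope
  -- limiting step
  have hL : 0 < b - x := by linarith
  have cont_case : ContinuousAt (fun θ => ctCoeff (K/(N-1)) θ) (b - x) →
      -(N - 1) * ctCoeff (K/(N-1)) (b - x) ≤ d / h x := by
    intro hcont
    have t1 : Tendsto (fun θ => -(N-1) * ctCoeff (K/(N-1)) θ) (𝓝[<] (b-x))
        (𝓝 (-(N-1) * ctCoeff (K/(N-1)) (b-x))) :=
      (continuousAt_const.mul hcont).tendsto.mono_left nhdsWithin_le_nhds
    refine le_of_tendsto t1 ?_
    filter_upwards [Ioo_mem_nhdsLT_of_mem (show b - x ∈ Ioc (0:ℝ) (b-x) from ⟨hL, le_refl _⟩)]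
      with θ hθ using key θ hθ
  rcases lt_trichotomy K 0 with hK | hK | hK
  · -- K < 0
    have hKd : K / (N-1) < 0 := div_neg_of_neg_of_pos hK hNp
    have hc : 0 < Real.sqrt (-(K/(N-1))) := Real.sqrt_pos.mpr (by linarith)
    apply cont_case
    have heq : (fun θ => ctCoeff (K/(N-1)) θ) = fun θ =>
        Real.sqrt (-(K/(N-1))) * (Real.cosh (θ * Real.sqrt (-(K/(N-1)))) /
          Real.sinh (θ * Real.sqrt (-(K/(N-1))))) := by
      funext θ
      rw [ctCoeff, if_neg (not_lt.mpr hKd.le), if_neg hKd.ne]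
    rw [heq]
    have hsinh : Real.sinh ((b-x) * Real.sqrt (-(K/(N-1)))) ≠ 0 :=
      (Real.sinh_pos_iff.mpr (mul_pos hL hc)).ne'
    exact continuousAt_const.mul ((((Real.continuous_cosh.comp
      (continuous_id.mul continuous_const)).continuousAt)).div
      (((Real.continuous_sinh.comp (continuous_id.mul continuous_const)).continuousAt)) hsinh)
  · -- K = 0
    have hKd : K / (N-1) = 0 := by rw [hK]; simp
    apply cont_case
    have heq : (fun θ => ctCoeff (K/(N-1)) θ) = fun θ => 1/θ := by
      funext θ
      rw [ctCoeff, if_neg (by rw [hKd]; simp), if_pos hKd]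
    rw [heq]
    exact continuousAt_const.div continuousAt_id hL.ne'
  · -- K > 0
    have hKd : 0 < K / (N-1) := div_pos hK hNp
    set c := Real.sqrt (K / (N-1)) with hcdef
    have hc : 0 < c := Real.sqrt_pos.mpr hKd
    have hLc : (b - x) * c ≤ Real.pi := by
      by_contra hgt
      push_neg at hgt
      have hθ0 : Real.pi / c < b - x := by
        rw [div_lt_iff₀ hc]
        linarith
      have hπc : (0:ℝ) < Real.pi / c := div_pos Real.pi_pos hc
      have hx1I : x + Real.pi / c ∈ Set.Ioo a b := ⟨by linarith, by linarith⟩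
      have := aux_pi hN hK hCD ⟨hax, hxb⟩ hx1I hpos (by intro hc'; linarith)
      rw [show x + Real.pi / c - x = Real.pi / c by ring,
        abs_of_pos hπc, div_mul_cancel₀ _ hc.ne'] at this
      exact lt_irrefl _ this
    rcases lt_or_eq_of_le hLc with hlt | heqπ
    · -- (b-x)c < π
      have hsin : 0 < Real.sin ((b-x) * c) := Real.sin_pos_of_pos_of_lt_pi (mul_pos hL hc) hlt
      apply cont_case
      have heq : (fun θ => ctCoeff (K/(N-1)) θ) = fun θ =>
          c * (Real.cos (θ * c) / Real.sin (θ * c)) := by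
        funext θ
        rw [ctCoeff, if_pos hKd]
      rw [heq]
      exact continuousAt_const.mul (((Real.continuous_cos.comp
        (continuous_id.mul continuous_const)).continuousAt).div
        ((Real.continuous_sin.comp (continuous_id.mul continuous_const)).continuousAt) hsin.ne')
    · -- (b-x)c = π : contradiction via blow-up
      exfalso
      have hIooMem : Ioo (0:ℝ) (b-x) ∈ 𝓝[<] (b-x) :=
        Ioo_mem_nhdsLT_of_mem ⟨hL, le_refl _⟩
      have hcos : Tendsto (fun θ => (N-1) * c * -Real.cos (θ * c)) (𝓝[<] (b-x))
          (𝓝 ((N-1) * c)) := by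
        have hcont : ContinuousAt (fun θ => (N-1) * c * -Real.cos (θ * c)) (b-x) := by
          fun_prop
        have := hcont.tendsto.mono_left (nhdsWithin_le_nhds : 𝓝[<] (b-x) ≤ 𝓝 (b-x))
        rwa [show (N-1) * c * -Real.cos ((b-x) * c) = (N-1) * c by
          rw [heqπ, Real.cos_pi]; ring] at this
      have hsin0 : Tendsto (fun θ => Real.sin (θ * c)) (𝓝[<] (b-x)) (𝓝[>] 0) := by
        rw [tendsto_nhdsWithin_iff]
        constructor
        · have hcont : ContinuousAt (fun θ => Real.sin (θ * c)) (b-x) := by fun_prop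
          have := hcont.tendsto.mono_left (nhdsWithin_le_nhds : 𝓝[<] (b-x) ≤ 𝓝 (b-x))
          rwa [show Real.sin ((b-x) * c) = 0 by rw [heqπ, Real.sin_pi]] at this
        · filter_upwards [hIooMem] with θ hθ
          exact Real.sin_pos_of_pos_of_lt_pi (mul_pos hθ.1 hc)
            (by rw [← heqπ]; exact mul_lt_mul_of_pos_right hθ.2 hc)
      have hmul := Filter.Tendsto.pos_mul_atTop (by positivity : (0:ℝ) < (N-1) * c) hcos
        hsin0.inv_tendsto_nhdsGT_zero
      have hev := hmul.eventually_gt_atTop (d / h x)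
      have hev2 : ∀ᶠ θ in 𝓝[<] (b-x),
          (N-1) * c * -Real.cos (θ * c) * (fun θ => Real.sin (θ * c))⁻¹ θ ≤ d / h x := by
        filter_upwards [hIooMem] with θ hθ
        have hkey := key θ hθ
        have : -(N-1) * ctCoeff (K/(N-1)) θ
            = (N-1) * c * -Real.cos (θ * c) * (Real.sin (θ * c))⁻¹ := by
          rw [ctCoeff, if_pos hKd, ← hcdef, div_eq_mul_inv]
          ring
        rw [this] at hkey
        exact hkey
      obtain ⟨θ, h1, h2⟩ := (hev.and hev2).exists
      exact absurd h1 (not_lt.mpr h2)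


/-- A-priori estimates on the logarithmic derivative of a `CD(K,N)` density `h` on a
finite interval `(a,b)`: at any differentiability point `x ∈ (a,b)`,
`-(N-1)·ct_{K/(N-1)}(b-x) ≤ (log h)'(x) ≤ (N-1)·ct_{K/(N-1)}(x-a)`. -/
theorem statement17 (K N a b : ℝ) (hN : 1 < N) (hab : a < b)
    (h : ℝ → ℝ) (hCD : IsCDDensity K N h (Set.Ioo a b))
    (hne : ∃ x ∈ Set.Ioo a b, h x ≠ 0) :
    ∀ x ∈ Set.Ioo a b, ∀ d : ℝ, HasDerivAt h d x →
      -(N - 1) * ctCoeff (K / (N - 1)) (b - x) ≤ d / h x ∧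
      d / h x ≤ (N - 1) * ctCoeff (K / (N - 1)) (x - a) := by
  intro x hx d hd
  have hpos := aux_pos hN hCD hne
  have hx0 : 0 < h x := hpos x hx
  constructor
  · exact aux_lower hN hCD hx hx0 hd
  · have hCD' := aux_reflect hCD
    have hx' : a + b - x ∈ Set.Ioo a b := ⟨by linarith [hx.2], by linarith [hx.1]⟩
    have hd' : HasDerivAt (fun y => h (a + b - y)) (-d) (a + b - x) := by
      have hinner : HasDerivAt (fun y : ℝ => a + b - y) (-1) (a + b - x) :=
        (hasDerivAt_id _).const_sub (a + b)
      have hdx : HasDerivAt h d (a + b - (a + b - x)) := by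
        rw [show a + b - (a + b - x) = x by ring]; exact hd
      have := hdx.comp (a + b - x) hinner
      exact this.congr_deriv (by ring)
    have hpos' : 0 < (fun y => h (a + b - y)) (a + b - x) := by
      simpa [show a + b - (a + b - x) = x by ring] using hx0
    have hlow := aux_lower hN hCD' hx' hpos' hd'
    rw [show b - (a + b - x) = x - a by ring] at hlow
    rw [show a + b - (a + b - x) = x by ring] at hlow
    have hneg : -d / h x = -(d / h x) := by ring
    rw [hneg] at hlow
    linarith
end

section
/- Let K ∈ ℝ, N ∈ (1,∞), and let h be a CD(K,N) density on an interval (a,b), not identically zero (hence strictly positive on (a,b)). Let 0 < ε < (b−a)/2 and let ψ_ε be a nonnegative C²-smooth function on ℝ supported in [−ε,ε] with ∫ψ_ε = 1. Define h^ε on (a+ε, b−ε) by log h^ε(x) := ∫ log h(y)·ψ_ε(x−y) dy. Then h^ε is C²-smooth and is a CD(K,N) density on (a+ε, b−ε). -/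
/-- Real-valued version of the distortion coefficient. -/
noncomputable def sR (K Np t θ : ℝ) : ℝ :=
  if θ = 0 then t
  else if 0 < K then
    Real.sin (t * (θ * Real.sqrt (K / Np))) / Real.sin (θ * Real.sqrt (K / Np))
  else if K = 0 then t
  else Real.sinh (t * (θ * Real.sqrt (-K / Np))) / Real.sinh (θ * Real.sqrt (-K / Np))

lemma sigmaCoeff_eq (K Np t θ : ℝ) (hgood : 0 < K → θ * Real.sqrt (K / Np) < Real.pi) :
    sigmaCoeff K Np t θ = ENNReal.ofReal (sR K Np t θ) := by
  unfold sigmaCoeff sR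
  split_ifs with h1 h2 h3 <;> first | rfl | exact absurd (hgood h2) h3

lemma sR_theta_zero (K Np t : ℝ) : sR K Np t 0 = t := if_pos rfl

lemma sR_zero (K Np θ : ℝ) : sR K Np 0 θ = 0 := by
  unfold sR; split_ifs <;> simp

lemma sR_nonneg {K Np t θ : ℝ} (hNp : 0 < Np) (ht0 : 0 ≤ t) (ht1 : t ≤ 1) (hθ : 0 ≤ θ)
    (hgood : 0 < K → θ * Real.sqrt (K / Np) < Real.pi) : 0 ≤ sR K Np t θ := by
  unfold sR
  split_ifs with h1 h2 h3
  · exact ht0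
  · have hθ' : 0 < θ := hθ.lt_of_ne (Ne.symm h1)
    have hs : 0 < Real.sqrt (K / Np) := Real.sqrt_pos.2 (div_pos h2 hNp)
    have hφ : 0 < θ * Real.sqrt (K / Np) := mul_pos hθ' hs
    have hπ := hgood h2
    refine div_nonneg (Real.sin_nonneg_of_nonneg_of_le_pi (by positivity) (by nlinarith))
      (Real.sin_pos_of_pos_of_lt_pi hφ hπ).le
  · exact ht0
  · have hθ' : 0 < θ := hθ.lt_of_ne (Ne.symm h1)
    have hK : 0 < -K := by
      rcases lt_trichotomy K 0 with h | h | h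
      · linarith
      · exact absurd h h3
      · exact absurd h h2
    have hs : 0 < Real.sqrt (-K / Np) := Real.sqrt_pos.2 (div_pos hK hNp)
    exact div_nonneg (Real.sinh_nonneg_iff.2 (by positivity))
      (Real.sinh_pos_iff.2 (mul_pos hθ' hs)).le

lemma sR_pos {K Np t θ : ℝ} (hNp : 0 < Np) (ht0 : 0 < t) (ht1 : t ≤ 1) (hθ : 0 ≤ θ)
    (hgood : 0 < K → θ * Real.sqrt (K / Np) < Real.pi) : 0 < sR K Np t θ := by
  unfold sR
  split_ifs with h1 h2 h3
  · exact ht0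
  · have hθ' : 0 < θ := hθ.lt_of_ne (Ne.symm h1)
    have hs : 0 < Real.sqrt (K / Np) := Real.sqrt_pos.2 (div_pos h2 hNp)
    have hφ : 0 < θ * Real.sqrt (K / Np) := mul_pos hθ' hs
    have hπ := hgood h2
    exact div_pos (Real.sin_pos_of_pos_of_lt_pi (by positivity) (by nlinarith))
      (Real.sin_pos_of_pos_of_lt_pi hφ hπ)
  · exact ht0
  · have hθ' : 0 < θ := hθ.lt_of_ne (Ne.symm h1)
    have hK : 0 < -K := by
      rcases lt_trichotomy K 0 with h | h | h
      · linarith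
      · exact absurd h h3
      · exact absurd h h2
    have hs : 0 < Real.sqrt (-K / Np) := Real.sqrt_pos.2 (div_pos hK hNp)
    exact div_pos (Real.sinh_pos_iff.2 (by positivity))
      (Real.sinh_pos_iff.2 (mul_pos hθ' hs))

lemma sR_one {K Np θ : ℝ} (hNp : 0 < Np) (hθ : 0 ≤ θ)
    (hgood : 0 < K → θ * Real.sqrt (K / Np) < Real.pi) : sR K Np 1 θ = 1 := by
  unfold sR
  split_ifs with h1 h2 h3
  · rfl
  · have hθ' : 0 < θ := hθ.lt_of_ne (Ne.symm h1)
    have hs : 0 < Real.sqrt (K / Np) := Real.sqrt_pos.2 (div_pos h2 hNp)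
    have hφ : 0 < θ * Real.sqrt (K / Np) := mul_pos hθ' hs
    rw [one_mul]
    exact div_self (Real.sin_pos_of_pos_of_lt_pi hφ (hgood h2)).ne'
  · rfl
  · have hθ' : 0 < θ := hθ.lt_of_ne (Ne.symm h1)
    have hK : 0 < -K := by
      rcases lt_trichotomy K 0 with h | h | h
      · linarith
      · exact absurd h h3
      · exact absurd h h2
    have hs : 0 < Real.sqrt (-K / Np) := Real.sqrt_pos.2 (div_pos hK hNp)
    rw [one_mul]
    exact div_self (Real.sinh_pos_iff.2 (mul_pos hθ' hs)).ne'

lemma sinh_le_aux {u v : ℝ} (h0 : 0 ≤ u) (huv : u ≤ v) :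
    Real.sinh v - Real.sinh u ≤ Real.cosh v * (v - u) := by
  have H := norm_image_sub_le_of_norm_deriv_le_segment'
    (f := Real.sinh) (f' := Real.cosh) (a := u) (b := v) (C := Real.cosh v)
    (fun x _ => (Real.hasDerivAt_sinh x).hasDerivWithinAt)
    (fun x hx => by
      rw [Real.norm_eq_abs, abs_of_pos (Real.cosh_pos x)]
      exact Real.cosh_le_cosh.2 (by
        rw [abs_of_nonneg (le_trans h0 hx.1), abs_of_nonneg (le_trans h0 (le_trans hx.1 hx.2.le))]
        exact hx.2.le))
    v ⟨huv, le_refl v⟩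
  rw [Real.norm_eq_abs] at H
  calc Real.sinh v - Real.sinh u ≤ |Real.sinh v - Real.sinh u| := le_abs_self _
    _ ≤ Real.cosh v * (v - u) := H

lemma sR_ge {K Np t θ Θ : ℝ} (hNp : 0 < Np) (ht0 : 0 ≤ t) (ht1 : t ≤ 1)
    (hθ0 : 0 ≤ θ) (hθΘ : θ ≤ Θ)
    (hgood : 0 < K → θ * Real.sqrt (K / Np) < Real.pi) :
    1 - (1 - t) * Real.cosh (Θ * Real.sqrt (|K| / Np)) ≤ sR K Np t θ := by
  have hC1 : 1 ≤ Real.cosh (Θ * Real.sqrt (|K| / Np)) := Real.one_le_cosh _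
  unfold sR
  split_ifs with h1 h2 h3
  · nlinarith
  · -- sin case : sin (t φ) / sin φ ≥ t
    have hθ' : 0 < θ := hθ0.lt_of_ne (Ne.symm h1)
    have hs : 0 < Real.sqrt (K / Np) := Real.sqrt_pos.2 (div_pos h2 hNp)
    set φ := θ * Real.sqrt (K / Np) with hφdef
    have hφ : 0 < φ := mul_pos hθ' hs
    have hπ := hgood h2
    have hsinφ : 0 < Real.sin φ := Real.sin_pos_of_pos_of_lt_pi hφ hπ
    have conc := strictConcaveOn_sin_Icc.concaveOn.2
      (Set.mem_Icc.2 ⟨hφ.le, hπ.le⟩) (Set.mem_Icc.2 ⟨le_refl (0:ℝ), Real.pi_pos.le⟩)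
      ht0 (show (0:ℝ) ≤ 1 - t by linarith) (show t + (1 - t) = 1 by ring)
    simp only [smul_eq_mul, mul_zero, add_zero, Real.sin_zero] at conc
    rw [le_div_iff₀ hsinφ]
    nlinarith [mul_nonneg (mul_nonneg (sub_nonneg.2 ht1) (sub_nonneg.2 hC1)) hsinφ.le]
  · nlinarith
  · have hθ' : 0 < θ := hθ0.lt_of_ne (Ne.symm h1)
    have hK : 0 < -K := by
      rcases lt_trichotomy K 0 with h | h | h
      · linarith
      · exact absurd h h3
      · exact absurd h h2
    have habs : |K| = -K := abs_of_neg (by linarith)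
    have hs : 0 < Real.sqrt (-K / Np) := Real.sqrt_pos.2 (div_pos hK hNp)
    set L := Real.sqrt (-K / Np) with hLdef
    set φ := θ * L with hφdef
    have hφ : 0 < φ := mul_pos hθ' hs
    have hφΦ : φ ≤ Θ * L := mul_le_mul_of_nonneg_right hθΘ hs.le
    have hsinhφ : 0 < Real.sinh φ := Real.sinh_pos_iff.2 hφ
    have hkey : Real.sinh φ - Real.sinh (t * φ) ≤ Real.cosh φ * (φ - t * φ) :=
      sinh_le_aux (by positivity) (by nlinarith)
    have hφle : φ ≤ Real.sinh φ := Real.self_le_sinh_iff.2 hφ.le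
    have hcosh : Real.cosh φ ≤ Real.cosh (Θ * Real.sqrt (|K| / Np)) := by
      rw [habs]
      exact Real.cosh_le_cosh.2 (by
        rw [abs_of_nonneg hφ.le, abs_of_nonneg (le_trans hφ.le hφΦ)]
        exact hφΦ)
    have hmul : φ * Real.cosh φ ≤ Real.sinh φ * Real.cosh (Θ * Real.sqrt (|K| / Np)) :=
      mul_le_mul hφle hcosh (Real.cosh_pos φ).le (by linarith)
    rw [le_div_iff₀ hsinhφ]
    nlinarith [mul_le_mul_of_nonneg_left hmul (by linarith : (0:ℝ) ≤ 1 - t)]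

lemma cd_real {K N : ℝ} (hN : 1 < N) {I : Set ℝ} {h : ℝ → ℝ} (hCD : IsCDDensity K N h I)
    {x₀ x₁ t : ℝ} (hx₀ : x₀ ∈ I) (hx₁ : x₁ ∈ I) (ht : t ∈ Set.Icc (0:ℝ) 1)
    (hm : t * x₁ + (1 - t) * x₀ ∈ I)
    (hgood : 0 < K → |x₁ - x₀| * Real.sqrt (K / (N - 1)) < Real.pi) :
    sR K (N - 1) t |x₁ - x₀| * h x₁ ^ (1 / (N - 1))
        + sR K (N - 1) (1 - t) |x₁ - x₀| * h x₀ ^ (1 / (N - 1))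
      ≤ h (t * x₁ + (1 - t) * x₀) ^ (1 / (N - 1)) := by
  have hNp : 0 < N - 1 := by linarith
  have h2 := hCD.2 x₀ hx₀ x₁ hx₁ t ht
  rw [sigmaCoeff_eq _ _ _ _ hgood, sigmaCoeff_eq _ _ _ _ hgood] at h2
  have hs1 := sR_nonneg hNp ht.1 ht.2 (abs_nonneg _) hgood
  have hs2 := sR_nonneg hNp (by linarith [ht.2] : (0:ℝ) ≤ 1 - t)
    (by linarith [ht.1] : 1 - t ≤ 1) (abs_nonneg _) hgood
  have hb1 : 0 ≤ h x₁ ^ (1 / (N - 1)) := Real.rpow_nonneg (hCD.1 x₁ hx₁) _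
  have hb0 : 0 ≤ h x₀ ^ (1 / (N - 1)) := Real.rpow_nonneg (hCD.1 x₀ hx₀) _
  rw [← ENNReal.ofReal_mul hs1, ← ENNReal.ofReal_mul hs2,
    ← ENNReal.ofReal_add (by positivity) (by positivity),
    ENNReal.ofReal_le_ofReal_iff (Real.rpow_nonneg (hCD.1 _ hm) _)] at h2
  exact h2

lemma cd_pos_aux {K N a b : ℝ} (hN : 1 < N) {h : ℝ → ℝ}
    (hCD : IsCDDensity K N h (Set.Ioo a b)) {c x₁ x t : ℝ}
    (hc : c ∈ Set.Ioo a b) (hx₁ : x₁ ∈ Set.Ioo a b) (hcpos : 0 < h c)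
    (ht : t ∈ Set.Icc (0:ℝ) 1) (ht1 : t < 1)
    (hx : x = t * x₁ + (1 - t) * c) (hI : x ∈ Set.Ioo a b) (hnec : x₁ ≠ c) :
    0 < h x := by
  have hNp : 0 < N - 1 := by linarith
  have hθ : |x₁ - c| ≠ 0 := by simpa [sub_eq_zero] using hnec
  by_cases hgood : 0 < K → |x₁ - c| * Real.sqrt (K / (N - 1)) < Real.pi
  · have hm : t * x₁ + (1 - t) * c ∈ Set.Ioo a b := hx ▸ hI
    have hkey := cd_real hN hCD hc hx₁ ht hm hgood
    have hpos2 : 0 < sR K (N - 1) (1 - t) |x₁ - c| * h c ^ (1 / (N - 1)) :=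
      mul_pos (sR_pos hNp (by linarith) (by linarith [ht.1]) (abs_nonneg _) hgood)
        (Real.rpow_pos_of_pos hcpos _)
    have hpos1 : 0 ≤ sR K (N - 1) t |x₁ - c| * h x₁ ^ (1 / (N - 1)) :=
      mul_nonneg (sR_nonneg hNp ht.1 ht.2 (abs_nonneg _) hgood)
        (Real.rpow_nonneg (hCD.1 x₁ hx₁) _)
    have hgt : 0 < h x ^ (1 / (N - 1)) := by rw [hx]; linarith
    by_contra hle
    push_neg at hle
    have h0 : h x = 0 := le_antisymm hle (hCD.1 x hI)
    rw [h0, Real.zero_rpow (by positivity : (1:ℝ) / (N - 1) ≠ 0)] at hgt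
    exact lt_irrefl 0 hgt
  · push_neg at hgood
    obtain ⟨hK, hπ⟩ := hgood
    have h2 := hCD.2 c hc x₁ hx₁ t ht
    have htop : sigmaCoeff K (N - 1) (1 - t) |x₁ - c| = ⊤ := by
      unfold sigmaCoeff
      rw [if_neg hθ, if_pos hK, if_neg (not_lt.2 hπ)]
    rw [htop, ENNReal.top_mul (by
      simp only [ne_eq, ENNReal.ofReal_eq_zero, not_le]
      exact Real.rpow_pos_of_pos hcpos _)] at h2
    rw [add_top] at h2
    exact absurd (top_le_iff.1 h2) ENNReal.ofReal_ne_top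

lemma cd_pos {K N a b : ℝ} (hN : 1 < N) {h : ℝ → ℝ}
    (hCD : IsCDDensity K N h (Set.Ioo a b))
    (hne : ∃ x ∈ Set.Ioo a b, h x ≠ 0) : ∀ x ∈ Set.Ioo a b, 0 < h x := by
  obtain ⟨c, hc, hc0⟩ := hne
  have hcpos : 0 < h c := (hCD.1 c hc).lt_of_ne (Ne.symm hc0)
  intro x hx
  rcases lt_trichotomy x c with hlt | heq | hgt
  · have hd : 0 < c - (a + x) / 2 := by nlinarith [hx.1]
    refine cd_pos_aux hN hCD hc (x₁ := (a + x) / 2)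
      ⟨by nlinarith [hx.1], by nlinarith [hx.2, hc.2]⟩ hcpos
      (t := (c - x) / (c - (a + x) / 2))
      ⟨div_nonneg (by linarith) hd.le, by rw [div_le_one hd]; nlinarith [hx.1]⟩
      (by rw [div_lt_one hd]; nlinarith [hx.1])
      (by
        rw [show (c - x) / (c - (a + x) / 2) * ((a + x) / 2)
              + (1 - (c - x) / (c - (a + x) / 2)) * c
            = c - (c - x) / (c - (a + x) / 2) * (c - (a + x) / 2) from by ring,
          div_mul_cancel₀ _ hd.ne']
        ring) hx
      (by nlinarith [hx.1])
  · exact heq ▸ hcpos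
  · have hd : 0 < (x + b) / 2 - c := by nlinarith [hx.2]
    refine cd_pos_aux hN hCD hc (x₁ := (x + b) / 2)
      ⟨by nlinarith [hx.1, hc.1], by nlinarith [hx.2]⟩ hcpos
      (t := (x - c) / ((x + b) / 2 - c))
      ⟨div_nonneg (by linarith) hd.le, by rw [div_le_one hd]; nlinarith [hx.2]⟩
      (by rw [div_lt_one hd]; nlinarith [hx.2])
      (by
        rw [show (x - c) / ((x + b) / 2 - c) * ((x + b) / 2)
              + (1 - (x - c) / ((x + b) / 2 - c)) * c
            = c + (x - c) / ((x + b) / 2 - c) * ((x + b) / 2 - c) from by ring,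
          div_mul_cancel₀ _ hd.ne']
        ring) hx
      (by nlinarith [hx.2])

lemma cd_good {K N a b : ℝ} (hN : 1 < N) {h : ℝ → ℝ}
    (hCD : IsCDDensity K N h (Set.Ioo a b)) (hpos : ∀ x ∈ Set.Ioo a b, 0 < h x) :
    ∀ x₀ ∈ Set.Ioo a b, ∀ x₁ ∈ Set.Ioo a b,
      0 < K → |x₁ - x₀| * Real.sqrt (K / (N - 1)) < Real.pi := by
  intro x₀ hx₀ x₁ hx₁ hK
  by_contra hπ
  push_neg at hπ
  have hθ : |x₁ - x₀| ≠ 0 := by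
    intro h0
    rw [h0, zero_mul] at hπ
    exact absurd (lt_of_lt_of_le Real.pi_pos hπ) (lt_irrefl 0)
  have h2 := hCD.2 x₀ hx₀ x₁ hx₁ 1 ⟨zero_le_one, le_refl 1⟩
  have htop : sigmaCoeff K (N - 1) 1 |x₁ - x₀| = ⊤ := by
    unfold sigmaCoeff
    rw [if_neg hθ, if_pos hK, if_neg (not_lt.2 hπ)]
  rw [htop, ENNReal.top_mul (by
    simp only [ne_eq, ENNReal.ofReal_eq_zero, not_le]
    exact Real.rpow_pos_of_pos (hpos x₁ hx₁) _)] at h2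
  rw [top_add] at h2
  exact absurd (top_le_iff.1 h2) ENNReal.ofReal_ne_top

set_option maxHeartbeats 1000000 in
lemma cd_contOn_log {K N a b : ℝ} (hN : 1 < N) {h : ℝ → ℝ}
    (hCD : IsCDDensity K N h (Set.Ioo a b)) (hpos : ∀ x ∈ Set.Ioo a b, 0 < h x)
    (hgood : ∀ x₀ ∈ Set.Ioo a b, ∀ x₁ ∈ Set.Ioo a b,
      0 < K → |x₁ - x₀| * Real.sqrt (K / (N - 1)) < Real.pi) :
    ContinuousOn (fun x => Real.log (h x)) (Set.Ioo a b) := by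
  have hNp : 0 < N - 1 := by linarith
  set g : ℝ → ℝ := fun x => h x ^ (1 / (N - 1)) with hgdef
  have hg0 : ∀ x ∈ Set.Ioo a b, 0 < g x := fun x hx => Real.rpow_pos_of_pos (hpos x hx) _
  have wedge : ∀ Θ u v w : ℝ, u ∈ Set.Ioo a b → w ∈ Set.Ioo a b → u < v → v < w →
      w - u ≤ Θ →
      (1 - Real.cosh (Θ * Real.sqrt (|K| / (N - 1))) * ((w - v) / (w - u))) * g w ≤ g v ∧
      (1 - Real.cosh (Θ * Real.sqrt (|K| / (N - 1))) * ((v - u) / (w - u))) * g u ≤ g v := by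
    intro Θ u v w hu hw huv hvw hΘ
    set C := Real.cosh (Θ * Real.sqrt (|K| / (N - 1))) with hCdef
    have hwu : 0 < w - u := by linarith
    set t : ℝ := (v - u) / (w - u) with htdef
    have ht0 : 0 < t := div_pos (by linarith) hwu
    have ht1 : t < 1 := by rw [htdef, div_lt_one hwu]; linarith
    have hmem : t * w + (1 - t) * u = v := by
      rw [show t * w + (1 - t) * u = u + t * (w - u) from by ring, htdef,
        div_mul_cancel₀ _ hwu.ne']
      ring
    have habs : |w - u| = w - u := abs_of_pos hwu
    have hgd : 0 < K → |w - u| * Real.sqrt (K / (N - 1)) < Real.pi := hgood u hu w hw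
    have hvI : v ∈ Set.Ioo a b := ⟨lt_trans hu.1 huv, lt_trans hvw hw.2⟩
    have hkey := cd_real hN hCD hu hw ⟨ht0.le, ht1.le⟩ (hmem ▸ hvI) hgd
    rw [hmem] at hkey
    have hθΘ : |w - u| ≤ Θ := by rw [habs]; exact hΘ
    have hge1 : 1 - (1 - t) * C ≤ sR K (N - 1) t |w - u| :=
      sR_ge hNp ht0.le ht1.le (abs_nonneg _) hθΘ hgd
    have hge2 : 1 - t * C ≤ sR K (N - 1) (1 - t) |w - u| := by
      have h' := sR_ge hNp (by linarith : (0:ℝ) ≤ 1 - t) (by linarith : 1 - t ≤ 1)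
        (abs_nonneg _) hθΘ hgd
      rw [show 1 - (1 - (1 - t)) * C = 1 - t * C from by ring] at h'
      exact h'
    have hgw : 0 ≤ g w := (hg0 w hw).le
    have hgu : 0 ≤ g u := (hg0 u hu).le
    have hnn1 : 0 ≤ sR K (N - 1) t |w - u| * g w :=
      mul_nonneg (sR_nonneg hNp ht0.le ht1.le (abs_nonneg _) hgd) hgw
    have hnn2 : 0 ≤ sR K (N - 1) (1 - t) |w - u| * g u :=
      mul_nonneg (sR_nonneg hNp (by linarith) (by linarith) (abs_nonneg _) hgd) hgu
    constructor
    · have h1 : (1 - (1 - t) * C) * g w ≤ sR K (N - 1) t |w - u| * g w :=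
        mul_le_mul_of_nonneg_right hge1 hgw
      have h2 : (1 : ℝ) - t = (w - v) / (w - u) := by
        rw [htdef, eq_div_iff hwu.ne', sub_mul, one_mul, div_mul_cancel₀ _ hwu.ne']
        ring
      rw [← h2]
      linarith
    · have h1 : (1 - t * C) * g u ≤ sR K (N - 1) (1 - t) |w - u| * g u :=
        mul_le_mul_of_nonneg_right hge2 hgu
      rw [mul_comm C t]
      linarith
  have hgc : ∀ x ∈ Set.Ioo a b, ContinuousAt g x := by
    intro x hx
    set r : ℝ := min (x - a) (b - x) / 2 with hrdef
    have hr0 : 0 < r := by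
      rw [hrdef]
      have := lt_min (show (0:ℝ) < x - a by linarith [hx.1])
        (show (0:ℝ) < b - x by linarith [hx.2])
      linarith
    have hra : r ≤ (x - a) / 2 := by
      rw [hrdef]; have := min_le_left (x - a) (b - x); linarith
    have hrb : r ≤ (b - x) / 2 := by
      rw [hrdef]; have := min_le_right (x - a) (b - x); linarith
    have hxma : x - r ∈ Set.Ioo a b := ⟨by linarith [hx.1], by linarith [hx.2]⟩
    have hxpa : x + r ∈ Set.Ioo a b := ⟨by linarith [hx.1], by linarith [hx.2]⟩
    set C := Real.cosh ((2 * r) * Real.sqrt (|K| / (N - 1))) with hCdef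
    have hC1 : 1 ≤ C := Real.one_le_cosh _
    have hC0 : 0 < C := lt_of_lt_of_le zero_lt_one hC1
    have hδ0 : 0 < min r (r / (2 * C)) := lt_min hr0 (by positivity)
    apply continuousAt_of_locally_lipschitz hδ0 (2 * C * g x / r)
    intro y hy
    rw [Real.dist_eq] at hy
    rw [Real.dist_eq, Real.dist_eq]
    have hyr : |y - x| < r := lt_of_lt_of_le hy (min_le_left _ _)
    have hbnd := abs_lt.1 hyr
    have hyI : y ∈ Set.Ioo a b := ⟨by linarith [hxma.1, hbnd.1], by linarith [hxpa.2, hbnd.2]⟩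
    have hgy0 : 0 ≤ g y := (hg0 y hyI).le
    have hgx0 : 0 ≤ g x := (hg0 x hx).le
    have hyc : C * |y - x| ≤ r / 2 := by
      have h2 := lt_of_lt_of_le hy (min_le_right _ _)
      rw [lt_div_iff₀ (by positivity : (0:ℝ) < 2 * C)] at h2
      nlinarith [abs_nonneg (y - x)]
    set β := C * |y - x| / r with hβdef
    have hβ0 : 0 ≤ β := by positivity
    have hβhalf : β ≤ 1 / 2 := by
      rw [hβdef, div_le_iff₀ hr0]; nlinarith
    have key : (1 - β) * g x ≤ g y ∧ (1 - β) * g y ≤ g x := by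
      rcases lt_trichotomy y x with hlt | heq | hgt
      · have habs : |y - x| = x - y := by
          rw [abs_sub_comm]; exact abs_of_pos (by linarith)
        have hyx : x - y < r := by rw [← habs]; exact hyr
        constructor
        · have W := (wedge (2 * r) (x - r) y x hxma hx (by linarith) hlt (by linarith)).1
          rw [show x - (x - r) = r from by ring] at W
          have he : 1 - C * ((x - y) / r) = 1 - β := by rw [hβdef, habs]; ring
          rw [he] at W
          exact W
        · have W := (wedge (2 * r) y x (x + r) hyI hxpa hlt (by linarith) (by linarith)).2
          have hfrac : (x - y) / (x + r - y) ≤ (x - y) / r := by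
            rw [div_le_div_iff₀ (by linarith) hr0]; nlinarith
          have hco : 1 - β ≤ 1 - C * ((x - y) / (x + r - y)) := by
            have hm := mul_le_mul_of_nonneg_left hfrac hC0.le
            have he : C * ((x - y) / r) = β := by rw [hβdef, habs]; ring
            linarith
          have := mul_le_mul_of_nonneg_right hco hgy0
          linarith
      · subst heq
        constructor <;> nlinarith
      · have habs : |y - x| = y - x := abs_of_pos (by linarith)
        have hyx : y - x < r := by rw [← habs]; exact hyr
        constructor
        · have W := (wedge (2 * r) x y (x + r) hx hxpa hgt (by linarith) (by linarith)).2
          rw [show x + r - x = r from by ring] at W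
          have he : 1 - C * ((y - x) / r) = 1 - β := by rw [hβdef, habs]; ring
          rw [he] at W
          exact W
        · have W := (wedge (2 * r) (x - r) x y hxma hyI (by linarith) hgt (by linarith)).1
          have hfrac : (y - x) / (y - (x - r)) ≤ (y - x) / r := by
            rw [div_le_div_iff₀ (by linarith) hr0]; nlinarith
          have hco : 1 - β ≤ 1 - C * ((y - x) / (y - (x - r))) := by
            have hm := mul_le_mul_of_nonneg_left hfrac hC0.le
            have he : C * ((y - x) / r) = β := by rw [hβdef, habs]; ring
            linarith
          have := mul_le_mul_of_nonneg_right hco hgy0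
          linarith
    obtain ⟨k1, k2⟩ := key
    have e3 : g y ≤ 2 * g x := by nlinarith
    have eM : 2 * C * g x / r * |y - x| = 2 * β * g x := by rw [hβdef]; ring
    rw [eM, abs_sub_le_iff]
    constructor
    · nlinarith
    · nlinarith
  intro x hx
  have hgx := hg0 x hx
  have hl : ContinuousAt (fun y => (N - 1) * Real.log (g y)) x :=
    continuousAt_const.mul ((Real.continuousAt_log hgx.ne').comp (hgc x hx))
  have ev : (fun y => (N - 1) * Real.log (g y)) =ᶠ[nhds x] fun y => Real.log (h y) := by
    filter_upwards [isOpen_Ioo.mem_nhds hx] with y hy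
    rw [hgdef]
    simp only
    rw [Real.log_rpow (hpos y hy), ← mul_assoc, mul_one_div,
      div_self (show N - 1 ≠ 0 by linarith), one_mul]
  exact (hl.congr ev).continuousWithinAt

set_option maxHeartbeats 2000000 in
/-- Logarithmic mollification of a `CD(K,N)` density: if `h` is a `CD(K,N)` density on
`(a,b)` (not identically zero), `0 < ε < (b-a)/2`, and `ψ` is a nonnegative `C²` mollifier
supported in `[-ε,ε]` with `∫ψ = 1`, then `h^ε` defined by
`log h^ε(x) = ∫ log h(y)·ψ(x-y) dy` is a `C²`-smooth `CD(K,N)` density on `(a+ε,b-ε)`. -/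
theorem statement18 (K N a b ε : ℝ) (hN : 1 < N)
    (hε : 0 < ε) (hε2 : ε < (b - a) / 2)
    (h : ℝ → ℝ) (hCD : IsCDDensity K N h (Set.Ioo a b))
    (hne : ∃ x ∈ Set.Ioo a b, h x ≠ 0)
    (ψ : ℝ → ℝ) (hψ : ContDiff ℝ 2 ψ) (hψpos : ∀ x, 0 ≤ ψ x)
    (hψsupp : Function.support ψ ⊆ Set.Icc (-ε) ε)
    (hψint : ∫ x, ψ x = 1) :
    ContDiffOn ℝ 2 (fun x => Real.exp (∫ y, Real.log (h y) * ψ (x - y)))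
        (Set.Ioo (a + ε) (b - ε)) ∧
      IsCDDensity K N (fun x => Real.exp (∫ y, Real.log (h y) * ψ (x - y)))
        (Set.Ioo (a + ε) (b - ε)) := by
  have hNp : 0 < N - 1 := by linarith
  have hsub : Set.Ioo (a + ε) (b - ε) ⊆ Set.Ioo a b := fun x hx =>
    ⟨by linarith [hx.1], by linarith [hx.2]⟩
  have hpos := cd_pos hN hCD hne
  have hgood := cd_good hN hCD hpos
  have hlog := cd_contOn_log hN hCD hpos hgood
  have hψ0 : ∀ z, z ∉ Set.Icc (-ε) ε → ψ z = 0 := by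
    intro z hz
    by_contra hzz
    exact hz (hψsupp (Function.mem_support.2 hzz))
  have hψcs : HasCompactSupport ψ := HasCompactSupport.intro isCompact_Icc hψ0
  have hψcont : Continuous ψ := hψ.continuous
  have hψI : MeasureTheory.Integrable ψ := hψcont.integrable_of_hasCompactSupport hψcs
  have hmem : ∀ x ∈ Set.Ioo (a + ε) (b - ε), ∀ z ∈ Set.Icc (-ε) ε,
      x - z ∈ Set.Ioo a b := by
    intro x hx z hz
    exact ⟨by linarith [hx.1, hz.2], by linarith [hx.2, hz.1]⟩
  have hint : ∀ x ∈ Set.Ioo (a + ε) (b - ε),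
      MeasureTheory.Integrable (fun z => Real.log (h (x - z)) * ψ z) := by
    intro x hx
    have hco : ContinuousOn (fun z => Real.log (h (x - z)) * ψ z) (Set.Icc (-ε) ε) := by
      refine ContinuousOn.mul ?_ hψcont.continuousOn
      exact hlog.comp ((continuous_const.sub continuous_id).continuousOn)
        (fun z hz => hmem x hx z hz)
    exact (hco.integrableOn_compact isCompact_Icc).integrable_of_forall_notMem_eq_zero
      (fun z hz => by rw [hψ0 z hz, mul_zero])
  have hF : ∀ x : ℝ, (∫ y, Real.log (h y) * ψ (x - y)) = ∫ z, Real.log (h (x - z)) * ψ z := by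
    intro x
    rw [← MeasureTheory.integral_sub_left_eq_self
      (fun y => Real.log (h y) * ψ (x - y)) MeasureTheory.volume x]
    simp only [sub_sub_cancel]
  -- Smoothness
  have hsm : ContDiffOn ℝ 2 (fun x => Real.exp (∫ y, Real.log (h y) * ψ (x - y)))
      (Set.Ioo (a + ε) (b - ε)) := by
    intro x₀ hx₀
    have hδ0 : 0 < min (x₀ - (a + ε)) ((b - ε) - x₀) / 2 := by
      have := lt_min (show (0:ℝ) < x₀ - (a + ε) by linarith [hx₀.1])
        (show (0:ℝ) < (b - ε) - x₀ by linarith [hx₀.2])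
      linarith
    set δ := min (x₀ - (a + ε)) ((b - ε) - x₀) / 2 with hδdef
    have hδ1 : δ ≤ (x₀ - (a + ε)) / 2 := by
      rw [hδdef]; have := min_le_left (x₀ - (a + ε)) ((b - ε) - x₀); linarith
    have hδ2 : δ ≤ ((b - ε) - x₀) / 2 := by
      rw [hδdef]; have := min_le_right (x₀ - (a + ε)) ((b - ε) - x₀); linarith
    set k := Set.Icc (x₀ - δ - ε) (x₀ + δ + ε) with hkdef
    have hkI : k ⊆ Set.Ioo a b := by
      intro y hy
      obtain ⟨hy1, hy2⟩ := hy
      exact ⟨by linarith [hx₀.1], by linarith [hx₀.2]⟩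
    set f := k.indicator (fun y => Real.log (h y)) with hfdef
    have hfi : MeasureTheory.Integrable f := by
      rw [hfdef, MeasureTheory.integrable_indicator_iff measurableSet_Icc]
      exact (hlog.mono hkI).integrableOn_compact isCompact_Icc
    have hconv : ContDiff ℝ 2
        (MeasureTheory.convolution f ψ (ContinuousLinearMap.mul ℝ ℝ) MeasureTheory.volume) :=
      hψcs.contDiff_convolution_right (ContinuousLinearMap.mul ℝ ℝ) hfi.locallyIntegrable hψ
    have hev : (fun x => Real.exp (∫ y, Real.log (h y) * ψ (x - y)))
        =ᶠ[nhds x₀] (fun x => Real.exp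
          ((MeasureTheory.convolution f ψ (ContinuousLinearMap.mul ℝ ℝ) MeasureTheory.volume) x)) := by
      filter_upwards [Metric.ball_mem_nhds x₀ hδ0] with x hxball
      rw [Metric.mem_ball, Real.dist_eq] at hxball
      have hb := abs_lt.1 hxball
      congr 1
      rw [MeasureTheory.convolution_def]
      refine MeasureTheory.integral_congr_ae (Filter.Eventually.of_forall fun y => ?_)
      simp only [ContinuousLinearMap.mul_apply']
      by_cases hzy : ψ (x - y) = 0
      · rw [hzy, mul_zero, mul_zero]
      · have hxy : x - y ∈ Set.Icc (-ε) ε := hψsupp (Function.mem_support.2 hzy)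
        have hyk : y ∈ k := ⟨by linarith [hxy.2, hb.1], by linarith [hxy.1, hb.2]⟩
        rw [hfdef, Set.indicator_of_mem hyk]
    have hcd : ContDiffAt ℝ 2 (fun x => Real.exp (∫ y, Real.log (h y) * ψ (x - y))) x₀ :=
      ((Real.contDiff_exp.comp hconv).contDiffAt).congr_of_eventuallyEq hev
    exact hcd.contDiffWithinAt
  set p : ℝ := 1 / (N - 1) with hpdef
  have hp : 0 < p := by rw [hpdef]; positivity
  -- the main real inequality
  have main : ∀ x₀ ∈ Set.Ioo (a + ε) (b - ε), ∀ x₁ ∈ Set.Ioo (a + ε) (b - ε),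
      ∀ t ∈ Set.Icc (0:ℝ) 1,
      sR K (N - 1) t |x₁ - x₀| * Real.exp (p * ∫ z, Real.log (h (x₁ - z)) * ψ z)
        + sR K (N - 1) (1 - t) |x₁ - x₀| * Real.exp (p * ∫ z, Real.log (h (x₀ - z)) * ψ z)
      ≤ Real.exp (p * ∫ z, Real.log (h (t * x₁ + (1 - t) * x₀ - z)) * ψ z) := by
    intro x₀ hx₀ x₁ hx₁ t ht
    have hgood' : 0 < K → |x₁ - x₀| * Real.sqrt (K / (N - 1)) < Real.pi :=
      hgood x₀ (hsub hx₀) x₁ (hsub hx₁)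
    have hm : t * x₁ + (1 - t) * x₀ ∈ Set.Ioo (a + ε) (b - ε) := by
      have hmin : min x₀ x₁ ≤ t * x₁ + (1 - t) * x₀ := by
        nlinarith [mul_nonneg ht.1 (sub_nonneg.2 (min_le_right x₀ x₁)),
          mul_nonneg (show (0:ℝ) ≤ 1 - t by linarith [ht.2])
            (sub_nonneg.2 (min_le_left x₀ x₁))]
      have hmax : t * x₁ + (1 - t) * x₀ ≤ max x₀ x₁ := by
        nlinarith [mul_nonneg ht.1 (sub_nonneg.2 (le_max_right x₀ x₁)),
          mul_nonneg (show (0:ℝ) ≤ 1 - t by linarith [ht.2])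
            (sub_nonneg.2 (le_max_left x₀ x₁))]
      exact ⟨lt_of_lt_of_le (lt_min hx₀.1 hx₁.1) hmin,
        lt_of_le_of_lt hmax (max_lt hx₀.2 hx₁.2)⟩
    rcases eq_or_ne x₁ x₀ with h01 | h01
    · rw [h01, sub_self, abs_zero, sR_theta_zero, sR_theta_zero,
        show t * x₀ + (1 - t) * x₀ = x₀ from by ring]
      have he : t * Real.exp (p * ∫ z, Real.log (h (x₀ - z)) * ψ z)
          + (1 - t) * Real.exp (p * ∫ z, Real.log (h (x₀ - z)) * ψ z)
          = Real.exp (p * ∫ z, Real.log (h (x₀ - z)) * ψ z) := by ring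
      rw [he]
    rcases eq_or_ne t 0 with ht0 | ht0
    · subst ht0
      rw [sR_zero, show (1:ℝ) - 0 = 1 from by ring, sR_one hNp (abs_nonneg _) hgood',
        show (0:ℝ) * x₁ + 1 * x₀ = x₀ from by ring, zero_mul, one_mul, zero_add]
    rcases eq_or_ne t 1 with ht1 | ht1
    · subst ht1
      rw [show (1:ℝ) - 1 = 0 from by ring, sR_zero, sR_one hNp (abs_nonneg _) hgood',
        show (1:ℝ) * x₁ + 0 * x₀ = x₁ from by ring, zero_mul, one_mul, add_zero]
    have htpos : 0 < t := ht.1.lt_of_ne (Ne.symm ht0)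
    have ht1' : t < 1 := ht.2.lt_of_ne ht1
    set θ := |x₁ - x₀| with hθdef
    set σ := sR K (N - 1) t θ with hσdef
    set τ := sR K (N - 1) (1 - t) θ with hτdef
    set I1 := ∫ z, Real.log (h (x₁ - z)) * ψ z with hI1def
    set I0 := ∫ z, Real.log (h (x₀ - z)) * ψ z with hI0def
    set m := t * x₁ + (1 - t) * x₀ with hmdef
    set Im := ∫ z, Real.log (h (m - z)) * ψ z with hImdef
    set A := Real.exp (p * I1) with hAdef
    set B := Real.exp (p * I0) with hBdef
    have hσp : 0 < σ := sR_pos hNp htpos ht.2 (abs_nonneg _) hgood'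
    have hτp : 0 < τ := sR_pos hNp (by linarith) (by linarith) (abs_nonneg _) hgood'
    have hA0 : 0 < A := Real.exp_pos _
    have hB0 : 0 < B := Real.exp_pos _
    set S := σ * A + τ * B with hSdef
    have hS0 : 0 < S := by positivity
    set lam := σ * A / S with hlamdef
    set mu := τ * B / S with hmudef
    have hlam0 : 0 < lam := by positivity
    have hmu0 : 0 < mu := by positivity
    have hsum : lam + mu = 1 := by
      rw [hlamdef, hmudef, ← add_div, hSdef, div_self hS0.ne']
    set c0 := lam * Real.log σ + mu * Real.log τ - lam * Real.log lam - mu * Real.log mu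
      with hc0def
    have hptw : ∀ z : ℝ,
        c0 * ψ z + (lam * p) * (Real.log (h (x₁ - z)) * ψ z)
          + (mu * p) * (Real.log (h (x₀ - z)) * ψ z)
        ≤ p * (Real.log (h (m - z)) * ψ z) := by
      intro z
      by_cases hz : ψ z = 0
      · simp [hz]
      · have hzI : z ∈ Set.Icc (-ε) ε := hψsupp (Function.mem_support.2 hz)
        have h1I : x₁ - z ∈ Set.Ioo a b := hmem x₁ hx₁ z hzI
        have h0I : x₀ - z ∈ Set.Ioo a b := hmem x₀ hx₀ z hzI
        have hmI : m - z ∈ Set.Ioo a b := hmem m hm z hzI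
        have h1p : 0 < h (x₁ - z) := hpos _ h1I
        have h0p : 0 < h (x₀ - z) := hpos _ h0I
        have hmp : 0 < h (m - z) := hpos _ hmI
        have hgd2 : 0 < K → |(x₁ - z) - (x₀ - z)| * Real.sqrt (K / (N - 1)) < Real.pi := by
          rw [show (x₁ - z) - (x₀ - z) = x₁ - x₀ from by ring, ← hθdef]
          exact hgood'
        have hmm : t * (x₁ - z) + (1 - t) * (x₀ - z) = m - z := by rw [hmdef]; ring
        have hcd2 := cd_real hN hCD h0I h1I ht (by rw [hmm]; exact hmI) hgd2
        rw [hmm, show (x₁ - z) - (x₀ - z) = x₁ - x₀ from by ring, ← hθdef,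
          ← hpdef, ← hσdef, ← hτdef] at hcd2
        set a1 := h (x₁ - z) ^ p with ha1def
        set b1 := h (x₀ - z) ^ p with hb1def
        have ha1 : 0 < a1 := Real.rpow_pos_of_pos h1p _
        have hb1 : 0 < b1 := Real.rpow_pos_of_pos h0p _
        have hX : (0:ℝ) < σ * a1 / lam := by positivity
        have hY : (0:ℝ) < τ * b1 / mu := by positivity
        have conc := strictConcaveOn_log_Ioi.concaveOn.2 (Set.mem_Ioi.2 hX) (Set.mem_Ioi.2 hY)
          hlam0.le hmu0.le hsum
        simp only [smul_eq_mul] at conc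
        have hXY : lam * (σ * a1 / lam) + mu * (τ * b1 / mu) = σ * a1 + τ * b1 := by
          field_simp
        rw [hXY] at conc
        have hlog1 : Real.log (σ * a1 / lam)
            = Real.log σ + p * Real.log (h (x₁ - z)) - Real.log lam := by
          rw [Real.log_div (by positivity) hlam0.ne', Real.log_mul hσp.ne' ha1.ne',
            ha1def, Real.log_rpow h1p]
        have hlog0 : Real.log (τ * b1 / mu)
            = Real.log τ + p * Real.log (h (x₀ - z)) - Real.log mu := by
          rw [Real.log_div (by positivity) hmu0.ne', Real.log_mul hτp.ne' hb1.ne',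
            hb1def, Real.log_rpow h0p]
        have hmono : Real.log (σ * a1 + τ * b1) ≤ p * Real.log (h (m - z)) := by
          rw [← Real.log_rpow hmp]
          exact (Real.log_le_log_iff (by positivity) (by positivity)).2 hcd2
        rw [hlog1, hlog0] at conc
        have e : c0 + lam * p * Real.log (h (x₁ - z)) + mu * p * Real.log (h (x₀ - z))
            = lam * (Real.log σ + p * Real.log (h (x₁ - z)) - Real.log lam)
              + mu * (Real.log τ + p * Real.log (h (x₀ - z)) - Real.log mu) := by
          rw [hc0def]; ring
        have hfinal : c0 + lam * p * Real.log (h (x₁ - z)) + mu * p * Real.log (h (x₀ - z))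
            ≤ p * Real.log (h (m - z)) := by
          rw [e]; exact conc.trans hmono
        have hfin2 := mul_le_mul_of_nonneg_right hfinal (hψpos z)
        have e2 : (c0 + lam * p * Real.log (h (x₁ - z)) + mu * p * Real.log (h (x₀ - z))) * ψ z
            = c0 * ψ z + (lam * p) * (Real.log (h (x₁ - z)) * ψ z)
              + (mu * p) * (Real.log (h (x₀ - z)) * ψ z) := by ring
        have e3 : p * Real.log (h (m - z)) * ψ z = p * (Real.log (h (m - z)) * ψ z) := by ring
        linarith only [hfin2, e2, e3]
    have hIL : MeasureTheory.Integrable (fun z => c0 * ψ z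
        + (lam * p) * (Real.log (h (x₁ - z)) * ψ z)
        + (mu * p) * (Real.log (h (x₀ - z)) * ψ z)) :=
      (((hψI.const_mul c0)).add ((hint x₁ hx₁).const_mul (lam * p))).add
        ((hint x₀ hx₀).const_mul (mu * p))
    have hIR : MeasureTheory.Integrable (fun z => p * (Real.log (h (m - z)) * ψ z)) :=
      (hint m hm).const_mul p
    have hIL1 : MeasureTheory.Integrable (fun z => c0 * ψ z
        + (lam * p) * (Real.log (h (x₁ - z)) * ψ z)) :=
      (hψI.const_mul c0).add ((hint x₁ hx₁).const_mul (lam * p))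
    have hcalc := MeasureTheory.integral_mono hIL hIR hptw
    rw [MeasureTheory.integral_add hIL1 ((hint x₀ hx₀).const_mul (mu * p)),
      MeasureTheory.integral_add (hψI.const_mul c0) ((hint x₁ hx₁).const_mul (lam * p)),
      MeasureTheory.integral_const_mul, MeasureTheory.integral_const_mul,
      MeasureTheory.integral_const_mul, MeasureTheory.integral_const_mul,
      hψint, mul_one, ← hI1def, ← hI0def, ← hImdef] at hcalc
    have hA1 : p * I1 = Real.log A := by rw [hAdef, Real.log_exp]
    have hB1 : p * I0 = Real.log B := by rw [hBdef, Real.log_exp]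
    have hlam : Real.log lam = Real.log σ + Real.log A - Real.log S := by
      rw [hlamdef, Real.log_div (by positivity) hS0.ne', Real.log_mul hσp.ne' hA0.ne']
    have hmu' : Real.log mu = Real.log τ + Real.log B - Real.log S := by
      rw [hmudef, Real.log_div (by positivity) hS0.ne', Real.log_mul hτp.ne' hB0.ne']
    have hlogS : c0 + lam * p * I1 + mu * p * I0 = Real.log S := by
      rw [hc0def, hlam, hmu']
      linear_combination lam * hA1 + mu * hB1 + Real.log S * hsum
    have hfin : Real.log S ≤ p * Im := by
      rw [← hlogS]; linarith [hcalc]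
    calc S = Real.exp (Real.log S) := (Real.exp_log hS0).symm
      _ ≤ Real.exp (p * Im) := Real.exp_le_exp.2 hfin
  -- conclude
  refine ⟨hsm, ⟨fun x _ => (Real.exp_pos _).le, ?_⟩⟩
  intro x₀ hx₀ x₁ hx₁ t ht
  have hgood' : 0 < K → |x₁ - x₀| * Real.sqrt (K / (N - 1)) < Real.pi :=
    hgood x₀ (hsub hx₀) x₁ (hsub hx₁)
  rw [sigmaCoeff_eq _ _ _ _ hgood', sigmaCoeff_eq _ _ _ _ hgood']
  have hpow : ∀ x : ℝ, Real.exp (∫ y, Real.log (h y) * ψ (x - y)) ^ p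
      = Real.exp (p * ∫ z, Real.log (h (x - z)) * ψ z) := by
    intro x
    rw [← Real.exp_mul, hF x, mul_comm]
  simp only [← hpdef, hpow]
  have hkey := main x₀ hx₀ x₁ hx₁ t ht
  have hσ0 : 0 ≤ sR K (N - 1) t |x₁ - x₀| :=
    sR_nonneg hNp ht.1 ht.2 (abs_nonneg _) hgood'
  have hτ0 : 0 ≤ sR K (N - 1) (1 - t) |x₁ - x₀| :=
    sR_nonneg hNp (by linarith [ht.2]) (by linarith [ht.1]) (abs_nonneg _) hgood'
  rw [← ENNReal.ofReal_mul hσ0, ← ENNReal.ofReal_mul hτ0,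
    ← ENNReal.ofReal_add (mul_nonneg hσ0 (Real.exp_pos _).le)
      (mul_nonneg hτ0 (Real.exp_pos _).le)]
  exact ENNReal.ofReal_le_ofReal hkey
end

section
/- Let K ∈ ℝ, N ∈ (1,∞), and let h be a CD(K,N) density on a finite interval (a,b) with ∫_a^b h(x) dx = 1. Then: if K ≥ 0, sup_{x ∈ (a,b)} h(x) ≤ N/(b−a); and if K < 0, sup_{x ∈ (a,b)} h(x) ≤ (b−a)^{−1}·(∫_0^1 (σ^{(t)}_{K,N−1}(b−a))^{N−1} dt)^{−1}. -/
lemma aux_key (s : ℝ) (hs0 : 0 ≤ s) (hs1 : s ≤ 1) (θ : ℝ) (hθ : 0 ≤ θ) :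
    s * Real.cosh (s * θ) * Real.sinh θ ≤ Real.sinh (s * θ) * Real.cosh θ := by
  set F : ℝ → ℝ := fun u => Real.sinh (s * u) * Real.cosh u - s * Real.cosh (s * u) * Real.sinh u
    with hF
  have hder : ∀ u : ℝ, HasDerivAt F ((1 - s ^ 2) * (Real.sinh (s * u) * Real.sinh u)) u := by
    intro u
    have h1 : HasDerivAt (fun u : ℝ => Real.sinh (s * u)) (Real.cosh (s * u) * s) u :=
      by simpa using ((hasDerivAt_id u).const_mul s).sinh
    have h2 : HasDerivAt (fun u : ℝ => Real.cosh (s * u)) (Real.sinh (s * u) * s) u :=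
      by simpa using ((hasDerivAt_id u).const_mul s).cosh
    have h3 := (h1.mul (Real.hasDerivAt_cosh u)).sub
      (((h2.const_mul s).mul (Real.hasDerivAt_sinh u)))
    exact h3.congr_deriv (by ring)
  have hmono : MonotoneOn F (Set.Ici 0) := by
    apply monotoneOn_of_deriv_nonneg (convex_Ici 0)
    · exact fun u _ => ((hder u).continuousAt).continuousWithinAt
    · exact fun u _ => ((hder u).differentiableAt).differentiableWithinAt
    · intro u hu
      rw [(hder u).deriv]
      have hu' : 0 < u := by simpa using hu
      have h4 : 0 ≤ Real.sinh (s * u) := Real.sinh_nonneg_iff.2 (by positivity)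
      have h5 : 0 ≤ Real.sinh u := Real.sinh_nonneg_iff.2 hu'.le
      have h6 : 0 ≤ 1 - s ^ 2 := by nlinarith
      exact mul_nonneg h6 (mul_nonneg h4 h5)
  have h0 : F 0 ≤ F θ := hmono (by simp) (by simpa using hθ) hθ
  simp only [hF, mul_zero, Real.sinh_zero, Real.cosh_zero, zero_mul, mul_one, sub_zero,
    zero_sub, mul_zero, sub_zero] at h0
  linarith [h0]

lemma aux_antitone (s : ℝ) (hs0 : 0 ≤ s) (hs1 : s ≤ 1) {c c' : ℝ} (hc : 0 < c) (hcc : c ≤ c') :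
    Real.sinh (s * c') / Real.sinh c' ≤ Real.sinh (s * c) / Real.sinh c := by
  have hsinh_pos : ∀ u : ℝ, 0 < u → 0 < Real.sinh u := fun u hu => Real.sinh_pos_iff.2 hu
  set f : ℝ → ℝ := fun u => Real.sinh (s * u) / Real.sinh u with hf
  have hder : ∀ u : ℝ, 0 < u → HasDerivAt f
      ((Real.cosh (s * u) * s * Real.sinh u - Real.sinh (s * u) * Real.cosh u) /
        Real.sinh u ^ 2) u := by
    intro u hu
    have := (((hasDerivAt_id u).const_mul s).sinh).div (Real.hasDerivAt_sinh u)
      (hsinh_pos u hu).ne'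
    simp at this
    exact this
  have hanti : AntitoneOn f (Set.Icc c c') := by
    apply antitoneOn_of_deriv_nonpos (convex_Icc c c')
    · apply ContinuousOn.div
      · exact (Real.continuous_sinh.comp (continuous_const.mul continuous_id)).continuousOn
      · exact Real.continuous_sinh.continuousOn
      · intro u hu; exact (hsinh_pos u (hc.trans_le hu.1)).ne'
    · intro u hu
      rw [interior_Icc] at hu
      exact ((hder u (hc.trans hu.1)).differentiableAt).differentiableWithinAt
    · intro u hu
      rw [interior_Icc] at hu
      have hu' : 0 < u := hc.trans hu.1
      rw [(hder u hu').deriv]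
      apply div_nonpos_of_nonpos_of_nonneg _ (sq_nonneg _)
      have := aux_key s hs0 hs1 u hu'.le
      nlinarith
  exact hanti (Set.left_mem_Icc.2 hcc) ⟨hcc, le_rfl⟩ hcc


lemma aux_sin_lb {s φ : ℝ} (hs0 : 0 ≤ s) (hs1 : s ≤ 1) (hφ0 : 0 < φ) (hφπ : φ < Real.pi) :
    s * Real.sin φ ≤ Real.sin (s * φ) := by
  have hco := strictConcaveOn_sin_Icc.concaveOn
  have := hco.2 (Set.mem_Icc.2 ⟨le_rfl, Real.pi_pos.le⟩)
    (Set.mem_Icc.2 ⟨hφ0.le, hφπ.le⟩) (by linarith : (0:ℝ) ≤ 1 - s) hs0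
    (by ring : (1 - s) + s = 1)
  simpa using this

/-- For `K ≥ 0` the distortion coefficient is at least the linear one. -/
lemma sigma_lb_nonneg {K Np : ℝ} (hK : 0 ≤ K) (hNp : 0 < Np) {s : ℝ} (hs0 : 0 ≤ s) (hs1 : s ≤ 1)
    {θ : ℝ} (hθ : 0 ≤ θ) : ENNReal.ofReal s ≤ sigmaCoeff K Np s θ := by
  unfold sigmaCoeff
  rcases eq_or_ne θ 0 with rfl | hθ0
  · simp
  · have hθpos : 0 < θ := hθ.lt_of_ne' hθ0
    rw [if_neg hθ0]
    rcases eq_or_lt_of_le hK with rfl | hKpos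
    · simp
    · rw [if_pos hKpos]
      set φ := θ * Real.sqrt (K / Np) with hφ
      have hφpos : 0 < φ := mul_pos hθpos (Real.sqrt_pos.2 (div_pos hKpos hNp))
      by_cases hφπ : φ < Real.pi
      · rw [if_pos hφπ]
        apply ENNReal.ofReal_le_ofReal
        rw [le_div_iff₀ (Real.sin_pos_of_pos_of_lt_pi hφpos hφπ)]
        exact aux_sin_lb hs0 hs1 hφpos hφπ
      · rw [if_neg hφπ]; exact le_top

/-- For `K < 0` the distortion coefficient at width `θ ≤ θ'` dominates the one at `θ'`. -/
lemma sigma_lb_neg {K Np : ℝ} (hK : K < 0) (hNp : 0 < Np) {s : ℝ} (hs0 : 0 ≤ s) (hs1 : s ≤ 1)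
    {θ θ' : ℝ} (hθ : 0 < θ) (hθθ' : θ ≤ θ') :
    ENNReal.ofReal (Real.sinh (s * (θ' * Real.sqrt (-K / Np))) /
      Real.sinh (θ' * Real.sqrt (-K / Np))) ≤ sigmaCoeff K Np s θ := by
  unfold sigmaCoeff
  rw [if_neg hθ.ne', if_neg (by linarith : ¬ 0 < K), if_neg hK.ne]
  apply ENNReal.ofReal_le_ofReal
  have hlam : 0 < Real.sqrt (-K / Np) := Real.sqrt_pos.2 (div_pos (neg_pos.2 hK) hNp)
  exact aux_antitone s hs0 hs1 (mul_pos hθ hlam) (mul_le_mul_of_nonneg_right hθθ' hlam.le)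

/-- For `K < 0` and `θ ≠ 0`, `σ^{(s)}(θ)` as a real number. -/
lemma sigma_toReal_neg {K Np : ℝ} (hK : K < 0) (hNp : 0 < Np) {s : ℝ} (hs0 : 0 ≤ s)
    {θ : ℝ} (hθ : 0 < θ) :
    (sigmaCoeff K Np s θ).toReal =
      Real.sinh (s * (θ * Real.sqrt (-K / Np))) / Real.sinh (θ * Real.sqrt (-K / Np)) := by
  unfold sigmaCoeff
  rw [if_neg hθ.ne', if_neg (by linarith : ¬ 0 < K), if_neg hK.ne]
  have hlam : 0 < Real.sqrt (-K / Np) := Real.sqrt_pos.2 (div_pos (neg_pos.2 hK) hNp)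
  have hc : 0 < θ * Real.sqrt (-K / Np) := mul_pos hθ hlam
  exact ENNReal.toReal_ofReal (div_nonneg (Real.sinh_nonneg_iff.2 (by positivity))
    (Real.sinh_nonneg_iff.2 hc.le))


lemma aux_fromCD {K N : ℝ} (hN : 1 < N) {h : ℝ → ℝ} {I : Set ℝ} (hCD : IsCDDensity K N h I)
    {x₀ x₁ : ℝ} (hx₀ : x₀ ∈ I) (hx₁ : x₁ ∈ I) {t : ℝ} (ht : t ∈ Set.Icc (0:ℝ) 1)
    (hy : t * x₁ + (1 - t) * x₀ ∈ I) {r : ℝ} (hr : 0 ≤ r)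
    (hσ : ENNReal.ofReal r ≤ sigmaCoeff K (N - 1) (1 - t) |x₁ - x₀|) :
    r ^ (N - 1) * h x₀ ≤ h (t * x₁ + (1 - t) * x₀) := by
  set y := t * x₁ + (1 - t) * x₀ with hydef
  set e := 1 / (N - 1) with he
  have hN1 : (0:ℝ) < N - 1 := by linarith
  have hx₀nn : 0 ≤ h x₀ := hCD.1 x₀ hx₀
  have hynn : 0 ≤ h y := hCD.1 y hy
  have hmain := hCD.2 x₀ hx₀ x₁ hx₁ t ht
  have chain : ENNReal.ofReal (r * h x₀ ^ e) ≤ ENNReal.ofReal (h y ^ e) := by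
    rw [ENNReal.ofReal_mul hr]
    calc ENNReal.ofReal r * ENNReal.ofReal (h x₀ ^ e)
        ≤ sigmaCoeff K (N - 1) (1 - t) |x₁ - x₀| * ENNReal.ofReal (h x₀ ^ e) :=
          mul_le_mul_left hσ _
      _ ≤ sigmaCoeff K (N - 1) t |x₁ - x₀| * ENNReal.ofReal (h x₁ ^ e)
            + sigmaCoeff K (N - 1) (1 - t) |x₁ - x₀| * ENNReal.ofReal (h x₀ ^ e) := le_add_self
      _ ≤ ENNReal.ofReal (h y ^ e) := hmain
  have real : r * h x₀ ^ e ≤ h y ^ e :=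
    (ENNReal.ofReal_le_ofReal_iff (Real.rpow_nonneg hynn e)).1 chain
  have hpow : (r * h x₀ ^ e) ^ (N - 1) ≤ (h y ^ e) ^ (N - 1) :=
    Real.rpow_le_rpow (mul_nonneg hr (Real.rpow_nonneg hx₀nn e)) real hN1.le
  have heN : e * (N - 1) = 1 := by rw [he, one_div, inv_mul_cancel₀ hN1.ne']
  have h1 : (h y ^ e) ^ (N - 1) = h y := by
    rw [← Real.rpow_mul hynn, heN, Real.rpow_one]
  have h2 : (r * h x₀ ^ e) ^ (N - 1) = r ^ (N - 1) * h x₀ := by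
    rw [Real.mul_rpow hr (Real.rpow_nonneg hx₀nn e), ← Real.rpow_mul hx₀nn, heN, Real.rpow_one]
  rw [h1, h2] at hpow
  exact hpow

lemma aux_lb_nonneg {K N : ℝ} (hK : 0 ≤ K) (hN : 1 < N) {h : ℝ → ℝ} {I : Set ℝ}
    (hCD : IsCDDensity K N h I) {x₀ x₁ : ℝ} (hx₀ : x₀ ∈ I) (hx₁ : x₁ ∈ I)
    {t : ℝ} (ht : t ∈ Set.Icc (0:ℝ) 1) (hy : t * x₁ + (1 - t) * x₀ ∈ I) :
    (1 - t) ^ (N - 1) * h x₀ ≤ h (t * x₁ + (1 - t) * x₀) :=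
  aux_fromCD hN hCD hx₀ hx₁ ht hy (by linarith [ht.2])
    (sigma_lb_nonneg hK (by linarith) (by linarith [ht.2]) (by linarith [ht.1]) (abs_nonneg _))

lemma aux_lb_neg {K N : ℝ} (hK : K < 0) (hN : 1 < N) {h : ℝ → ℝ} {I : Set ℝ}
    (hCD : IsCDDensity K N h I) {x₀ x₁ : ℝ} (hx₀ : x₀ ∈ I) (hx₁ : x₁ ∈ I)
    {t : ℝ} (ht : t ∈ Set.Icc (0:ℝ) 1) (hy : t * x₁ + (1 - t) * x₀ ∈ I)
    {θ' : ℝ} (hθ : 0 < |x₁ - x₀|) (hθθ' : |x₁ - x₀| ≤ θ') :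
    (Real.sinh ((1 - t) * (θ' * Real.sqrt (-K / (N - 1)))) /
        Real.sinh (θ' * Real.sqrt (-K / (N - 1)))) ^ (N - 1) * h x₀ ≤
      h (t * x₁ + (1 - t) * x₀) := by
  have hN1 : (0:ℝ) < N - 1 := by linarith
  have hlam : 0 < Real.sqrt (-K / (N - 1)) := Real.sqrt_pos.2 (div_pos (neg_pos.2 hK) hN1)
  have hc' : 0 < θ' * Real.sqrt (-K / (N - 1)) := mul_pos (hθ.trans_le hθθ') hlam
  exact aux_fromCD hN hCD hx₀ hx₁ ht hy
    (div_nonneg (Real.sinh_nonneg_iff.2 (mul_nonneg (by linarith [ht.2]) hc'.le)) (Real.sinh_nonneg_iff.2 hc'.le))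
    (sigma_lb_neg hK hN1 (by linarith [ht.2]) (by linarith [ht.1]) hθ hθθ')

open MeasureTheory intervalIntegral in
lemma aux_int {a b : ℝ} (hab : a < b) {h : ℝ → ℝ} (hnn : ∀ x ∈ Set.Ioo a b, 0 ≤ h x)
    (hInt : IntegrableOn h (Set.Ioo a b)) (hint : ∫ x in Set.Ioo a b, h x = 1)
    {g : ℝ → ℝ} (hg : Continuous g)
    (hlow : ∀ x₀ ∈ Set.Ioo a b, ∀ x₁ ∈ Set.Ioo a b, x₀ ≠ x₁ → ∀ t ∈ Set.Icc (0:ℝ) 1,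
      h x₀ * g (1 - t) ≤ h (t * x₁ + (1 - t) * x₀))
    {x : ℝ} (hx : x ∈ Set.Ioo a b) :
    h x * ((b - a) * ∫ u in (0:ℝ)..1, g u) ≤ 1 := by
  set J := ∫ u in (0:ℝ)..1, g u with hJ
  obtain ⟨hax, hxb⟩ := hx
  -- the main estimate for interior subintervals
  have step : ∀ a' x₁ : ℝ, a < a' → a' < x → x < x₁ → x₁ < b →
      h x * ((x₁ - a') * J) ≤ 1 := by
    intro a' x₁ ha' ha'x hxx₁ hx₁b
    have hx₁mem : x₁ ∈ Set.Ioo a b := ⟨lt_trans (lt_trans ha' ha'x) hxx₁, hx₁b⟩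
    have ha'mem : a' ∈ Set.Ioo a b := ⟨ha', lt_trans (lt_trans ha'x hxx₁) hx₁b⟩
    have hxmem : x ∈ Set.Ioo a b := ⟨hax, hxb⟩
    have hsub : Set.Icc a' x₁ ⊆ Set.Ioo a b := Set.Icc_subset_Ioo ha' hx₁b
    have hIIL : IntervalIntegrable h volume a' x := by
      rw [intervalIntegrable_iff_integrableOn_Ioc_of_le ha'x.le]
      exact hInt.mono_set (fun y hy => ⟨lt_trans ha' hy.1, lt_of_le_of_lt hy.2
        (lt_trans hxx₁ hx₁b)⟩)
    have hIIR : IntervalIntegrable h volume x x₁ := by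
      rw [intervalIntegrable_iff_integrableOn_Ioc_of_le hxx₁.le]
      exact hInt.mono_set (fun y hy => ⟨lt_trans hax hy.1, lt_of_le_of_lt hy.2 hx₁b⟩)
    -- right piece
    have hcR : (x₁ - x) ≠ 0 := sub_ne_zero.2 hxx₁.ne'
    have hRlow : ∀ y ∈ Set.Icc x x₁, h x * g ((x₁ - y) * (x₁ - x)⁻¹) ≤ h y := by
      intro y hy
      have htmem : (y - x) / (x₁ - x) ∈ Set.Icc (0:ℝ) 1 := by
        constructor
        · exact div_nonneg (by linarith [hy.1]) (by linarith)
        · rw [div_le_one (by linarith : (0:ℝ) < x₁ - x)]; linarith [hy.2]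
      have := hlow x hxmem x₁ hx₁mem hxx₁.ne ((y - x) / (x₁ - x)) htmem
      have he1 : (1:ℝ) - (y - x) / (x₁ - x) = (x₁ - y) * (x₁ - x)⁻¹ := by
        field_simp
        ring
      have he2 : (y - x) / (x₁ - x) * x₁ + (x₁ - y) * (x₁ - x)⁻¹ * x = y := by
        field_simp; ring
      rw [he1, he2] at this
      exact this
    have hRcont : Continuous fun y => h x * g ((x₁ - y) * (x₁ - x)⁻¹) := by fun_prop
    have hRmono : (∫ y in x..x₁, h x * g ((x₁ - y) * (x₁ - x)⁻¹)) ≤ ∫ y in x..x₁, h y :=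
      integral_mono_on hxx₁.le (hRcont.intervalIntegrable _ _) hIIR hRlow
    have hRval : (∫ y in x..x₁, h x * g ((x₁ - y) * (x₁ - x)⁻¹)) = h x * ((x₁ - x) * J) := by
      rw [intervalIntegral.integral_const_mul]
      congr 1
      have h1 : (∫ y in x..x₁, g ((x₁ - y) * (x₁ - x)⁻¹))
          = ∫ u in (0:ℝ)..(x₁ - x), g (u * (x₁ - x)⁻¹) := by
        have := integral_comp_sub_left (a := x) (b := x₁) (fun u => g (u * (x₁ - x)⁻¹)) x₁
        simpa using this
      rw [h1, integral_comp_mul_right g (inv_ne_zero hcR)]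
      simp [mul_inv_cancel₀ hcR, smul_eq_mul, inv_inv, hJ]
    -- left piece
    have hcL : (x - a') ≠ 0 := sub_ne_zero.2 ha'x.ne'
    have hLlow : ∀ y ∈ Set.Icc a' x, h x * g ((y - a') * (x - a')⁻¹) ≤ h y := by
      intro y hy
      have htmem : (x - y) / (x - a') ∈ Set.Icc (0:ℝ) 1 := by
        constructor
        · exact div_nonneg (by linarith [hy.2]) (by linarith)
        · rw [div_le_one (by linarith : (0:ℝ) < x - a')]; linarith [hy.1]
      have := hlow x hxmem a' ha'mem (ne_of_gt ha'x) ((x - y) / (x - a')) htmem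
      have he1 : (1:ℝ) - (x - y) / (x - a') = (y - a') * (x - a')⁻¹ := by
        field_simp
        ring
      have he2 : (x - y) / (x - a') * a' + (y - a') * (x - a')⁻¹ * x = y := by
        field_simp; ring
      rw [he1, he2] at this
      exact this
    have hLcont : Continuous fun y => h x * g ((y - a') * (x - a')⁻¹) := by fun_prop
    have hLmono : (∫ y in a'..x, h x * g ((y - a') * (x - a')⁻¹)) ≤ ∫ y in a'..x, h y :=
      integral_mono_on ha'x.le (hLcont.intervalIntegrable _ _) hIIL hLlow
    have hLval : (∫ y in a'..x, h x * g ((y - a') * (x - a')⁻¹)) = h x * ((x - a') * J) := by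
      rw [intervalIntegral.integral_const_mul]
      congr 1
      have h1 : (∫ y in a'..x, g ((y - a') * (x - a')⁻¹))
          = ∫ u in (0:ℝ)..(x - a'), g (u * (x - a')⁻¹) := by
        have := integral_comp_sub_right (a := a') (b := x) (fun u => g (u * (x - a')⁻¹)) a'
        simpa using this
      rw [h1, integral_comp_mul_right g (inv_ne_zero hcL)]
      simp [mul_inv_cancel₀ hcL, smul_eq_mul, inv_inv, hJ]
    -- sum and compare with total integral
    have hsum : (∫ y in a'..x, h y) + ∫ y in x..x₁, h y = ∫ y in a'..x₁, h y :=
      integral_add_adjacent_intervals hIIL hIIR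
    have htot : (∫ y in a'..x₁, h y) ≤ 1 := by
      rw [integral_of_le (le_of_lt (lt_trans ha'x hxx₁)), ← hint]
      apply setIntegral_mono_set hInt
      · exact (ae_restrict_iff' measurableSet_Ioo).2 (Filter.Eventually.of_forall hnn)
      · exact Filter.Eventually.of_forall
          (fun y hy => hsub ⟨le_of_lt hy.1, hy.2⟩) |>.mono (fun y hy => hy) |>.mono
          (fun y hy => hy)
    calc h x * ((x₁ - a') * J) = h x * ((x - a') * J) + h x * ((x₁ - x) * J) := by ring
      _ ≤ (∫ y in a'..x, h y) + ∫ y in x..x₁, h y := by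
          rw [← hRval, ← hLval]; exact add_le_add hLmono hRmono
      _ = ∫ y in a'..x₁, h y := hsum
      _ ≤ 1 := htot
  -- pass to the limit a' → a, x₁ → b
  set m := min (x - a) (b - x) with hm
  have hmpos : 0 < m := lt_min (by linarith) (by linarith)
  have hev : ∀ᶠ δ in nhdsWithin (0:ℝ) (Set.Ioi 0),
      h x * ((b - δ - (a + δ)) * J) ≤ 1 := by
    filter_upwards [Ioo_mem_nhdsGT_of_mem (Set.mem_Ico.2 ⟨le_rfl, hmpos⟩)] with δ hδ
    have h1 : a < a + δ := by linarith [hδ.1]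
    have h2 : a + δ < x := by have := hδ.2; have := min_le_left (x - a) (b - x); linarith
    have h3 : x < b - δ := by have := hδ.2; have := min_le_right (x - a) (b - x); linarith
    have h4 : b - δ < b := by linarith [hδ.1]
    have := step (a + δ) (b - δ) h1 h2 h3 h4
    linarith [this]
  have htend : Filter.Tendsto (fun δ : ℝ => h x * ((b - δ - (a + δ)) * J))
      (nhdsWithin (0:ℝ) (Set.Ioi 0)) (nhds (h x * ((b - 0 - (a + 0)) * J))) := by
    apply Filter.Tendsto.mono_left _ nhdsWithin_le_nhds
    exact (Continuous.tendsto (by fun_prop) 0)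
  have := le_of_tendsto htend hev
  simpa using this

lemma aux_mem {a b x₀ x₁ t : ℝ} (hx₀ : x₀ ∈ Set.Ioo a b) (hx₁ : x₁ ∈ Set.Ioo a b)
    (ht : t ∈ Set.Icc (0:ℝ) 1) : t * x₁ + (1 - t) * x₀ ∈ Set.Ioo a b := by
  obtain ⟨h1, h2⟩ := hx₀
  obtain ⟨h3, h4⟩ := hx₁
  obtain ⟨h5, h6⟩ := ht
  rcases eq_or_lt_of_le h6 with rfl | h6'
  · constructor <;> simp <;> linarith
  · constructor
    · nlinarith [mul_nonneg h5 (sub_nonneg.2 h3.le)]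
    · nlinarith [mul_nonneg h5 (sub_nonneg.2 h4.le)]


/-- A-priori sup bound on a `CD(K,N)` probability density on a finite interval `(a,b)`:
if `K ≥ 0` then `h ≤ N/(b-a)` on `(a,b)`, and if `K < 0` then
`h ≤ (b-a)⁻¹·(∫₀¹ (σ^{(t)}_{K,N-1}(b-a))^{N-1} dt)⁻¹` on `(a,b)`. -/
theorem statement19 (K N a b : ℝ) (hN : 1 < N) (hab : a < b)
    (h : ℝ → ℝ) (hCD : IsCDDensity K N h (Set.Ioo a b))
    (hint : ∫ x in Set.Ioo a b, h x = 1) :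
    (0 ≤ K → ∀ x ∈ Set.Ioo a b, h x ≤ N / (b - a)) ∧
      (K < 0 → ∀ x ∈ Set.Ioo a b,
        h x ≤ (b - a)⁻¹ *
          (∫ t in (0:ℝ)..1, (sigmaCoeff K (N - 1) t (b - a)).toReal ^ (N - 1))⁻¹) := by
  have hN1 : (0:ℝ) < N - 1 := by linarith
  have hba : (0:ℝ) < b - a := by linarith
  have hInt : MeasureTheory.IntegrableOn h (Set.Ioo a b) := by
    by_contra hc
    rw [MeasureTheory.integral_undef hc] at hint
    norm_num at hint
  constructor
  · -- case K ≥ 0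
    intro hK x hx
    have hg : Continuous fun u : ℝ => u ^ (N - 1) := by
      rw [continuous_iff_continuousAt]
      intro u
      exact Real.continuousAt_rpow_const u (N - 1) (Or.inr hN1.le)
    have hlow : ∀ x₀ ∈ Set.Ioo a b, ∀ x₁ ∈ Set.Ioo a b, x₀ ≠ x₁ → ∀ t ∈ Set.Icc (0:ℝ) 1,
        h x₀ * (1 - t) ^ (N - 1) ≤ h (t * x₁ + (1 - t) * x₀) := by
      intro x₀ hx₀ x₁ hx₁ _ t ht
      rw [mul_comm]
      exact aux_lb_nonneg hK hN hCD hx₀ hx₁ ht (aux_mem hx₀ hx₁ ht)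
    have key := aux_int hab hCD.1 hInt hint hg hlow hx
    have hJval : (∫ u in (0:ℝ)..1, u ^ (N - 1)) = 1 / N := by
      rw [integral_rpow (Or.inl (by linarith))]
      have hNe : N - 1 + 1 = N := by ring
      rw [hNe, Real.one_rpow, Real.zero_rpow (by linarith : N ≠ 0)]
      ring
    rw [hJval] at key
    have hN0 : (0:ℝ) < N := by linarith
    have e : h x * ((b - a) * (1 / N)) = h x * (b - a) / N := by ring
    rw [e, div_le_one hN0] at key
    rw [le_div_iff₀ hba]
    exact key
  · -- case K < 0
    intro hK x hx
    set lam := Real.sqrt (-K / (N - 1)) with hlamdef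
    have hlam : 0 < lam := Real.sqrt_pos.2 (div_pos (neg_pos.2 hK) hN1)
    set c₀ := (b - a) * lam with hc₀def
    have hc₀ : 0 < c₀ := mul_pos hba hlam
    have hsinhc₀ : 0 < Real.sinh c₀ := by
      rw [← Real.sinh_zero]
      exact Real.sinh_lt_sinh.2 hc₀
    set g : ℝ → ℝ := fun u => (Real.sinh (u * c₀) / Real.sinh c₀) ^ (N - 1) with hgdef
    have hg : Continuous g := by
      apply Continuous.rpow_const
      · fun_prop
      · intro u; exact Or.inr hN1.le
    have hlow : ∀ x₀ ∈ Set.Ioo a b, ∀ x₁ ∈ Set.Ioo a b, x₀ ≠ x₁ → ∀ t ∈ Set.Icc (0:ℝ) 1,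
        h x₀ * g (1 - t) ≤ h (t * x₁ + (1 - t) * x₀) := by
      intro x₀ hx₀ x₁ hx₁ hne t ht
      have hθpos : 0 < |x₁ - x₀| := abs_pos.2 (sub_ne_zero.2 (Ne.symm hne))
      have hθle : |x₁ - x₀| ≤ b - a := by
        rw [abs_sub_le_iff]
        constructor <;> linarith [hx₀.1, hx₀.2, hx₁.1, hx₁.2]
      rw [mul_comm]
      exact aux_lb_neg hK hN hCD hx₀ hx₁ ht (aux_mem hx₀ hx₁ ht) hθpos hθle
    have key := aux_int hab hCD.1 hInt hint hg hlow hx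
    have hJeq : (∫ t in (0:ℝ)..1, (sigmaCoeff K (N - 1) t (b - a)).toReal ^ (N - 1))
        = ∫ u in (0:ℝ)..1, g u := by
      apply intervalIntegral.integral_congr
      intro u hu
      rw [Set.uIcc_of_le (zero_le_one)] at hu
      show (sigmaCoeff K (N - 1) u (b - a)).toReal ^ (N - 1) = g u
      rw [sigma_toReal_neg hK hN1 hu.1 hba]
    have hJpos : 0 < ∫ u in (0:ℝ)..1, g u := by
      apply intervalIntegral.intervalIntegral_pos_of_pos_on (hg.intervalIntegrable 0 1)
      · intro u hu
        apply Real.rpow_pos_of_pos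
        exact div_pos (Real.sinh_pos_iff.2 (mul_pos hu.1 hc₀)) hsinhc₀
      · exact zero_lt_one
    rw [hJeq]
    rw [← mul_inv]
    rw [← one_div, le_div_iff₀ (mul_pos hba hJpos)]
    calc h x * ((b - a) * ∫ u in (0:ℝ)..1, g u)
        = h x * ((b - a) * ∫ u in (0:ℝ)..1, g u) := rfl
      _ ≤ 1 := key
end
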